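/- arXiv:1602.01716 — 9 statements merged into one kernel-verified Lean document; each statement's English description precedes it below -/
import Mathlib

section
/- Let the DPC-G iterates be defined as follows: given y_0 ∈ E and a sequence of symmetric positive semidefinite linear maps H_k on E satisfying ‖id − (∇²_y F(t_k, y_k)) ∘ H_k‖ ≤ ε for all k (operator norm), set y_{k+1|k} := y_k − h · H_k (∂_t ∇_y F(t_k, y_k)) (prediction) and y_{k+1} := y_{k+1|k} − γ ∇_y F(t_{k+1}, y_{k+1|k}) (gradient correction). Define ρ := max(|1 − γm|, |1 − γL'|). If 0 < γ < 2/L' (so that ρ < 1), then for every k ≥ 0: ‖y_k − y*(t_k)‖ ≤ ρ^k ‖y_0 − y*(t_0)‖ + ρ · (2hC0/m + hC0ε/m + h²Δ) · (1 − ρ^k)/(1 − ρ). In particular limsup_{k→∞} ‖y_k − y*(t_k)‖ ≤ ρ/(1−ρ) · (2hC0/m + hC0ε/m + h²Δ). -/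
open scoped InnerProductSpace

local notation "E" n => EuclideanSpace ℝ (Fin n)

lemma symm_opNorm_le {En : Type*} [NormedAddCommGroup En] [InnerProductSpace ℝ En]
    {T : En →L[ℝ] En} (hsymm : ∀ x y, ⟪T x, y⟫_ℝ = ⟪T y, x⟫_ℝ)
    {C : ℝ} (hC : 0 ≤ C) (hb : ∀ v, |⟪T v, v⟫_ℝ| ≤ C * ‖v‖ ^ 2) : ‖T‖ ≤ C := by
  refine T.opNorm_le_bound hC (fun x => ?_)
  rcases eq_or_ne (T x) 0 with h0 | h0
  · simp [h0]; positivity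
  rcases eq_or_ne x 0 with hx0 | hx0
  · simp [hx0] at h0
  have hxpos : (0:ℝ) < ‖x‖ := norm_pos_iff.mpr hx0
  have hTpos : (0:ℝ) < ‖T x‖ := norm_pos_iff.mpr h0
  set y : En := (‖x‖ / ‖T x‖) • T x with hy
  have hyn : ‖y‖ = ‖x‖ := by
    rw [hy, norm_smul]
    rw [Real.norm_eq_abs, abs_of_nonneg (by positivity)]
    field_simp
  have hpolar : 4 * ⟪T x, y⟫_ℝ = ⟪T (x + y), x + y⟫_ℝ - ⟪T (x - y), x - y⟫_ℝ := by
    have h1 := hsymm x y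
    simp only [map_add, map_sub, inner_add_left, inner_add_right, inner_sub_left,
      inner_sub_right]
    linarith [real_inner_comm (T y) x]
  have hineq : 4 * ⟪T x, y⟫_ℝ ≤ C * ‖x + y‖ ^ 2 + C * ‖x - y‖ ^ 2 := by
    rw [hpolar]
    have h1 : ⟪T (x+y), x+y⟫_ℝ ≤ C * ‖x+y‖^2 := le_trans (le_abs_self _) (hb _)
    have h2 : -(C * ‖x-y‖^2) ≤ ⟪T (x-y), x-y⟫_ℝ := neg_le_of_abs_le (hb _)
    linarith
  have hpar : ‖x + y‖ ^ 2 + ‖x - y‖ ^ 2 = 2 * (‖x‖^2 + ‖y‖^2) := by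
    have := parallelogram_law_with_norm ℝ x y
    nlinarith [this]
  have hinner : ⟪T x, y⟫_ℝ = ‖x‖ / ‖T x‖ * ‖T x‖ ^ 2 := by
    rw [hy, real_inner_smul_right, real_inner_self_eq_norm_sq]
  have : 4 * (‖x‖ * ‖T x‖) ≤ 4 * (C * ‖x‖ ^ 2) := by
    have e : ‖x‖ / ‖T x‖ * ‖T x‖ ^ 2 = ‖x‖ * ‖T x‖ := by field_simp
    rw [e] at hinner
    calc 4 * (‖x‖ * ‖T x‖) = 4 * ⟪T x, y⟫_ℝ := by rw [hinner]
      _ ≤ C * ‖x + y‖ ^ 2 + C * ‖x - y‖ ^ 2 := hineq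
      _ = C * (‖x + y‖^2 + ‖x-y‖^2) := by ring
      _ = C * (2 * (‖x‖^2 + ‖y‖^2)) := by rw [hpar]
      _ = 4 * (C * ‖x‖^2) := by rw [hyn]; ring
  nlinarith

lemma hess_symm' {En : Type*} [NormedAddCommGroup En] [InnerProductSpace ℝ En] [CompleteSpace En]
    {f : En → ℝ} {g : En → En} {A : En → En →L[ℝ] En}
    (hg : ∀ y, HasGradientAt f (g y) y) (hA : ∀ y, HasFDerivAt g (A y) y)
    (y : En) (v w : En) : ⟪A y v, w⟫_ℝ = ⟪A y w, v⟫_ℝ := by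
  set D : En →L[ℝ] (StrongDual ℝ En) :=
    (InnerProductSpace.toDual ℝ En).toContinuousLinearEquiv.toContinuousLinearMap with hD
  have hf' : ∀ z, HasFDerivAt f (D (g z)) z := fun z => (hg z).hasFDerivAt
  have hf'' : HasFDerivAt (fun z => D (g z)) (D.comp (A y)) y := D.hasFDerivAt.comp y (hA y)
  have := second_derivative_symmetric hf' hf'' v w
  simpa [hD, InnerProductSpace.toDual_apply_apply] using this

lemma strong_mono' {En : Type*} [NormedAddCommGroup En] [InnerProductSpace ℝ En]
    {g : En → En} {A : En → En →L[ℝ] En} {m : ℝ}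
    (hA : ∀ y, HasFDerivAt g (A y) y)
    (hstrong : ∀ y (v : En), m * ‖v‖ ^ 2 ≤ ⟪A y v, v⟫_ℝ)
    (a b : En) : m * ‖a - b‖ ^ 2 ≤ ⟪g a - g b, a - b⟫_ℝ := by
  set c := a - b with hc
  set φ : ℝ → ℝ := fun s => ⟪c, g (b + s • c)⟫_ℝ - s * (m * ‖c‖ ^ 2) with hφ
  have hd : ∀ s : ℝ, HasDerivAt φ (⟪c, A (b + s • c) c⟫_ℝ - m * ‖c‖ ^ 2) s := by
    intro s
    have hp : HasDerivAt (fun s : ℝ => b + s • c) c s := by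
      simpa using ((hasDerivAt_id s).smul_const c).const_add b
    have h1 : HasDerivAt (fun s : ℝ => g (b + s • c)) (A (b + s • c) c) s :=
      (hA _).comp_hasDerivAt s hp
    have h2 : HasDerivAt (fun s : ℝ => ⟪c, g (b + s • c)⟫_ℝ)
        (⟪c, A (b + s • c) c⟫_ℝ) s := by
      exact ((innerSL ℝ c).hasFDerivAt.comp_hasDerivAt s h1)
    have h3 : HasDerivAt (fun s : ℝ => s * (m * ‖c‖ ^ 2)) (m * ‖c‖ ^ 2) s := by
      simpa using (hasDerivAt_id s).mul_const (m * ‖c‖ ^ 2)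
    exact h2.sub h3
  have hmono : Monotone φ := by
    apply monotone_of_deriv_nonneg
    · exact fun s => (hd s).differentiableAt
    · intro s
      rw [(hd s).deriv]
      have := hstrong (b + s • c) c
      have hcomm : ⟪c, A (b + s • c) c⟫_ℝ = ⟪A (b + s • c) c, c⟫_ℝ := real_inner_comm _ _
      linarith
  have h01 := hmono (by norm_num : (0:ℝ) ≤ 1)
  simp only [hφ, zero_smul, add_zero, one_smul, zero_mul, sub_zero, one_mul] at h01
  have hab : b + c = a := by rw [hc]; abel
  rw [hab] at h01
  have : ⟪g a - g b, c⟫_ℝ = ⟪c, g a⟫_ℝ - ⟪c, g b⟫_ℝ := by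
    rw [inner_sub_left, real_inner_comm c (g a), real_inner_comm c (g b)]
  linarith

lemma contract_step' {En : Type*} [NormedAddCommGroup En] [InnerProductSpace ℝ En]
    {g : En → En} {A : En → En →L[ℝ] En} {m L' γ ρ : ℝ}
    (hA : ∀ y, HasFDerivAt g (A y) y)
    (hsym : ∀ y v w, ⟪A y v, w⟫_ℝ = ⟪A y w, v⟫_ℝ)
    (hs : ∀ y (v : En), m * ‖v‖ ^ 2 ≤ ⟪A y v, v⟫_ℝ)
    (hL : ∀ y (v : En), ⟪A y v, v⟫_ℝ ≤ L' * ‖v‖ ^ 2)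
    (hγ : 0 ≤ γ) (hρ : ρ = max |1 - γ * m| |1 - γ * L'|)
    (x z : En) : ‖(x - γ • g x) - (z - γ • g z)‖ ≤ ρ * ‖x - z‖ := by
  have hρ0 : 0 ≤ ρ := hρ ▸ le_trans (abs_nonneg _) (le_max_left _ _)
  have key : ∀ y : En, ‖ContinuousLinearMap.id ℝ En - γ • A y‖ ≤ ρ := by
    intro y
    apply symm_opNorm_le _ hρ0
    · intro v
      have e : ⟪(ContinuousLinearMap.id ℝ En - γ • A y) v, v⟫_ℝ
          = ‖v‖ ^ 2 - γ * ⟪A y v, v⟫_ℝ := by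
        simp [ContinuousLinearMap.sub_apply, inner_sub_left, real_inner_smul_left,
          real_inner_self_eq_norm_sq]
      rw [e, abs_le]
      constructor
      · have h1 : (1 - γ * L') * ‖v‖ ^ 2 ≤ ‖v‖ ^ 2 - γ * ⟪A y v, v⟫_ℝ := by
          nlinarith [hL y v]
        have h2 : -(ρ * ‖v‖ ^ 2) ≤ (1 - γ * L') * ‖v‖ ^ 2 := by
          have : |1 - γ * L'| ≤ ρ := hρ ▸ le_max_right _ _
          nlinarith [neg_abs_le (1 - γ * L'), sq_nonneg ‖v‖]
        linarith
      · have h1 : ‖v‖ ^ 2 - γ * ⟪A y v, v⟫_ℝ ≤ (1 - γ * m) * ‖v‖ ^ 2 := by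
          nlinarith [hs y v]
        have h2 : (1 - γ * m) * ‖v‖ ^ 2 ≤ ρ * ‖v‖ ^ 2 := by
          have : |1 - γ * m| ≤ ρ := hρ ▸ le_max_left _ _
          nlinarith [le_abs_self (1 - γ * m), sq_nonneg ‖v‖]
        linarith
    · intro u w
      simp only [ContinuousLinearMap.sub_apply, ContinuousLinearMap.smul_apply,
        ContinuousLinearMap.id_apply, inner_sub_left, inner_smul_left]
      rw [hsym y u w, real_inner_comm u w]
  have hder : ∀ w : En, HasFDerivAt (fun y => y - γ • g y)
      (ContinuousLinearMap.id ℝ En - γ • A w) w := by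
    intro w
    exact (hasFDerivAt_id w).sub ((hA w).const_smul γ)
  have := Convex.norm_image_sub_le_of_norm_hasFDerivWithin_le
    (f := fun y => y - γ • g y) (s := Set.univ)
    (fun w _ => (hder w).hasFDerivWithinAt) (fun w _ => key w) convex_univ
    (Set.mem_univ z) (Set.mem_univ x)
  simpa using this

set_option maxHeartbeats 1000000 in
/-- Theorem 1, part i, decentralized form: DPC-G iterates
converge Q-linearly with rate ρ, for any sampling period h, up to an
asymptotic error O(h) + O(hε) + O(h²), where ε bounds the Hessian-inverse
approximation error of the prediction step. -/
theorem stmt_0 {n : ℕ} (hn : 1 ≤ n)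
    (F : ℝ → (E n) → ℝ)
    (Fgrad : ℝ → (E n) → (E n))
    (Hess : ℝ → (E n) → (E n) →L[ℝ] (E n))
    (Gt Gtt : ℝ → (E n) → (E n))
    (m L' C0 C1 C2 C3 : ℝ)
    (hm : 0 < m) (hmL : m ≤ L')
    (hC0 : 0 ≤ C0) (hC1 : 0 ≤ C1) (hC2 : 0 ≤ C2) (hC3 : 0 ≤ C3)
    (hF2 : ∀ t, ContDiff ℝ 2 (F t))
    (hG1 : ContDiff ℝ 1 (Function.uncurry Fgrad))
    (hgrad : ∀ t y, HasGradientAt (F t) (Fgrad t y) y)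
    (hhess : ∀ t y, HasFDerivAt (Fgrad t) (Hess t y) y)
    (ht : ∀ t y, HasDerivAt (fun s => Fgrad s y) (Gt t y) t)
    (htt : ∀ t y, HasDerivAt (fun s => Gt s y) (Gtt t y) t)
    (hstrong : ∀ t y (v : E n), m * ‖v‖ ^ 2 ≤ ⟪Hess t y v, v⟫_ℝ)
    (hsmooth : ∀ t y (v : E n), ⟪Hess t y v, v⟫_ℝ ≤ L' * ‖v‖ ^ 2)
    (hC0b : ∀ t y, ‖Gt t y‖ ≤ C0)
    (hC1b : ∀ t y y', ‖Hess t y - Hess t y'‖ ≤ C1 * ‖y - y'‖)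
    (hC2b : ∀ t y y', ‖Gt t y - Gt t y'‖ ≤ C2 * ‖y - y'‖)
    (hC3b : ∀ t y, ‖Gtt t y‖ ≤ C3)
    (ystar : ℝ → E n)
    (hmin : ∀ t, IsMinOn (F t) Set.univ (ystar t))
    (h γ ε Δ ρ : ℝ) (hh : 0 < h) (hε : 0 ≤ ε)
    (hγ : 0 < γ) (hγ2 : γ < 2 / L')
    (hΔ : Δ = C0 ^ 2 * C1 / (2 * m ^ 3) + C0 * C2 / m ^ 2 + C3 / (2 * m))
    (hρ : ρ = max |1 - γ * m| |1 - γ * L'|)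
    (tk : ℕ → ℝ) (htk : ∀ k : ℕ, tk k = k * h)
    (y ypred : ℕ → E n)
    (H : ℕ → (E n) →L[ℝ] (E n))
    (hHsa : ∀ k, IsSelfAdjoint (H k))
    (hHpsd : ∀ k (v : E n), 0 ≤ ⟪H k v, v⟫_ℝ)
    (hHerr : ∀ k, ‖ContinuousLinearMap.id ℝ (E n) - (Hess (tk k) (y k)).comp (H k)‖ ≤ ε)
    (hpred : ∀ k, ypred k = y k - h • H k (Gt (tk k) (y k)))
    (hcorr : ∀ k, y (k + 1) = ypred k - γ • Fgrad (tk (k + 1)) (ypred k)) :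
    (∀ k : ℕ, ‖y k - ystar (tk k)‖
        ≤ ρ ^ k * ‖y 0 - ystar (tk 0)‖
          + ρ * (2 * h * C0 / m + h * C0 * ε / m + h ^ 2 * Δ) * (1 - ρ ^ k) / (1 - ρ))
    ∧ Filter.limsup (fun k => ‖y k - ystar (tk k)‖) Filter.atTop
        ≤ ρ / (1 - ρ) * (2 * h * C0 / m + h * C0 * ε / m + h ^ 2 * Δ) := by
  have hL'0 : 0 < L' := lt_of_lt_of_le hm hmL
  have hγL : γ * L' < 2 := by
    have := (lt_div_iff₀ hL'0).mp hγ2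
    linarith
  have hρ0 : 0 ≤ ρ := hρ ▸ le_trans (abs_nonneg _) (le_max_left _ _)
  have hρ1 : ρ < 1 := by
    rw [hρ]
    apply max_lt <;> rw [abs_lt] <;> constructor <;> nlinarith
  have h1ρ : 0 < 1 - ρ := by linarith
  have hΔ0 : 0 ≤ Δ := by rw [hΔ]; positivity
  set B : ℝ := 2 * h * C0 / m + h * C0 * ε / m + h ^ 2 * Δ with hB
  have hB0 : 0 ≤ B := by rw [hB]; positivity
  clear_value B
  have hsym : ∀ t z v w, ⟪Hess t z v, w⟫_ℝ = ⟪Hess t z w, v⟫_ℝ :=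
    fun t z v w => hess_symm' (hgrad t) (hhess t) z v w
  have hgz : ∀ t, Fgrad t (ystar t) = 0 := by
    intro t
    have hloc : IsLocalMin (F t) (ystar t) :=
      Filter.Eventually.of_forall (fun x => (isMinOn_univ_iff.mp (hmin t)) x)
    have h0 : InnerProductSpace.toDual ℝ (E n) (Fgrad t (ystar t)) = 0 :=
      hloc.hasFDerivAt_eq_zero (hgrad t (ystar t)).hasFDerivAt
    simpa using (LinearIsometryEquiv.map_eq_zero_iff _).mp h0
  have hlip_t : ∀ (b : E n) (t t' : ℝ), ‖Fgrad t b - Fgrad t' b‖ ≤ C0 * |t - t'| := by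
    intro b t t'
    have := Convex.norm_image_sub_le_of_norm_hasDerivWithin_le
      (f := fun s => Fgrad s b) (f' := fun s => Gt s b) (s := Set.univ)
      (fun s _ => (ht s b).hasDerivWithinAt) (fun s _ => hC0b s b) convex_univ
      (Set.mem_univ t') (Set.mem_univ t)
    simpa [Real.norm_eq_abs] using this
  have hystar : ∀ t t' : ℝ, m * ‖ystar t - ystar t'‖ ≤ C0 * |t - t'| := by
    intro t t'
    have h1 : m * ‖ystar t - ystar t'‖ ^ 2
        ≤ ⟪Fgrad t (ystar t) - Fgrad t (ystar t'), ystar t - ystar t'⟫_ℝ :=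
      strong_mono' (hhess t) (fun z v => hstrong t z v) _ _
    have h4 : ⟪Fgrad t (ystar t) - Fgrad t (ystar t'), ystar t - ystar t'⟫_ℝ
        = ⟪Fgrad t' (ystar t') - Fgrad t (ystar t'), ystar t - ystar t'⟫_ℝ := by
      rw [hgz t, hgz t']
    have h5 : ⟪Fgrad t' (ystar t') - Fgrad t (ystar t'), ystar t - ystar t'⟫_ℝ
        ≤ ‖Fgrad t' (ystar t') - Fgrad t (ystar t')‖ * ‖ystar t - ystar t'‖ :=
      real_inner_le_norm _ _
    have h6 : ‖Fgrad t' (ystar t') - Fgrad t (ystar t')‖ ≤ C0 * |t - t'| := by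
      rw [abs_sub_comm]
      exact hlip_t (ystar t') t' t
    rcases eq_or_lt_of_le (norm_nonneg (ystar t - ystar t')) with h7 | h7
    · rw [← h7, mul_zero]
      positivity
    · nlinarith [abs_nonneg (t - t')]
  have hHb : ∀ k, ‖H k (Gt (tk k) (y k))‖ ≤ (1 + ε) * C0 / m := by
    intro k
    set v := Gt (tk k) (y k) with hv
    set w := H k v with hw
    have h1 : m * ‖w‖ ^ 2 ≤ ‖Hess (tk k) (y k) w‖ * ‖w‖ :=
      le_trans (hstrong _ _ w) (real_inner_le_norm _ _)
    have h2 : m * ‖w‖ ≤ ‖Hess (tk k) (y k) w‖ := by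
      rcases eq_or_lt_of_le (norm_nonneg w) with h | h
      · rw [← h]
        simp [norm_nonneg]
      · nlinarith
    have h3 : Hess (tk k) (y k) w = ((Hess (tk k) (y k)).comp (H k)) v := by
      rw [hw]
      exact (ContinuousLinearMap.comp_apply _ _ _).symm
    have h4 : ‖(Hess (tk k) (y k)).comp (H k)‖ ≤ 1 + ε := by
      have e : (Hess (tk k) (y k)).comp (H k)
          = ContinuousLinearMap.id ℝ (E n)
            - (ContinuousLinearMap.id ℝ (E n) - (Hess (tk k) (y k)).comp (H k)) :=
        (sub_sub_cancel _ _).symm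
      rw [e]
      refine le_trans (norm_sub_le _ _) ?_
      have hid : ‖ContinuousLinearMap.id ℝ (E n)‖ ≤ 1 := ContinuousLinearMap.norm_id_le
      linarith [hHerr k]
    have h5 : ‖((Hess (tk k) (y k)).comp (H k)) v‖ ≤ (1 + ε) * ‖v‖ :=
      le_trans (ContinuousLinearMap.le_opNorm _ _)
        (mul_le_mul_of_nonneg_right h4 (norm_nonneg v))
    have h6 : ‖v‖ ≤ C0 := hC0b _ _
    rw [le_div_iff₀ hm]
    rw [h3] at h2
    nlinarith [norm_nonneg v]
  have htkd : ∀ k : ℕ, |tk k - tk (k + 1)| = h := by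
    intro k
    have e : tk k - tk (k + 1) = -h := by
      rw [htk, htk]
      push_cast
      ring
    rw [e, abs_neg, abs_of_pos hh]
  have hrec : ∀ k, ‖y (k + 1) - ystar (tk (k + 1))‖ ≤ ρ * (‖y k - ystar (tk k)‖ + B) := by
    intro k
    have hc : y (k + 1) - ystar (tk (k + 1))
        = (ypred k - γ • Fgrad (tk (k + 1)) (ypred k))
          - (ystar (tk (k + 1)) - γ • Fgrad (tk (k + 1)) (ystar (tk (k + 1)))) := by
      rw [hcorr k, hgz (tk (k + 1))]
      simp
    have h1 : ‖y (k + 1) - ystar (tk (k + 1))‖ ≤ ρ * ‖ypred k - ystar (tk (k + 1))‖ := by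
      rw [hc]
      exact contract_step' (hhess (tk (k + 1))) (hsym (tk (k + 1)))
        (fun z v => hstrong _ z v) (fun z v => hsmooth _ z v) hγ.le hρ _ _
    have h2 : ‖ypred k - ystar (tk (k + 1))‖
        ≤ ‖y k - ystar (tk k)‖ + ‖ystar (tk k) - ystar (tk (k + 1))‖
          + h * ‖H k (Gt (tk k) (y k))‖ := by
      rw [hpred k]
      have e : y k - h • H k (Gt (tk k) (y k)) - ystar (tk (k + 1))
          = (y k - ystar (tk k)) + (ystar (tk k) - ystar (tk (k + 1)))
            - h • H k (Gt (tk k) (y k)) := by abel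
      rw [e]
      refine le_trans (norm_sub_le _ _) ?_
      have hna := norm_add_le (y k - ystar (tk k)) (ystar (tk k) - ystar (tk (k + 1)))
      have hns : ‖h • H k (Gt (tk k) (y k))‖ = h * ‖H k (Gt (tk k) (y k))‖ := by
        rw [norm_smul, Real.norm_eq_abs, abs_of_pos hh]
      rw [hns]
      linarith
    have h3 : ‖ystar (tk k) - ystar (tk (k + 1))‖ ≤ h * C0 / m := by
      have hy := hystar (tk k) (tk (k + 1))
      rw [htkd k] at hy
      rw [le_div_iff₀ hm]
      nlinarith
    have h4 : h * ‖H k (Gt (tk k) (y k))‖ ≤ h * ((1 + ε) * C0 / m) :=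
      mul_le_mul_of_nonneg_left (hHb k) hh.le
    have hBge : h * C0 / m + h * ((1 + ε) * C0 / m) ≤ B := by
      rw [hB]
      have e : h * C0 / m + h * ((1 + ε) * C0 / m) = 2 * h * C0 / m + h * C0 * ε / m := by
        field_simp
        ring
      rw [e]
      nlinarith [sq_nonneg h]
    have hsum : ‖ypred k - ystar (tk (k + 1))‖ ≤ ‖y k - ystar (tk k)‖ + B := by linarith
    calc ‖y (k + 1) - ystar (tk (k + 1))‖ ≤ ρ * ‖ypred k - ystar (tk (k + 1))‖ := h1
      _ ≤ ρ * (‖y k - ystar (tk k)‖ + B) := mul_le_mul_of_nonneg_left hsum hρ0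
  have hmain : ∀ k : ℕ, ‖y k - ystar (tk k)‖
      ≤ ρ ^ k * ‖y 0 - ystar (tk 0)‖ + ρ * B * (1 - ρ ^ k) / (1 - ρ) := by
    intro k
    induction k with
    | zero => simp
    | succ k ih =>
      have hne : (1 : ℝ) - ρ ≠ 0 := ne_of_gt h1ρ
      have key : ρ * (ρ ^ k * ‖y 0 - ystar (tk 0)‖ + ρ * B * (1 - ρ ^ k) / (1 - ρ) + B)
          = ρ ^ (k + 1) * ‖y 0 - ystar (tk 0)‖ + ρ * B * (1 - ρ ^ (k + 1)) / (1 - ρ) := by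
        field_simp
        ring
      calc ‖y (k + 1) - ystar (tk (k + 1))‖
          ≤ ρ * (‖y k - ystar (tk k)‖ + B) := hrec k
        _ ≤ ρ * (ρ ^ k * ‖y 0 - ystar (tk 0)‖ + ρ * B * (1 - ρ ^ k) / (1 - ρ) + B) := by
            apply mul_le_mul_of_nonneg_left _ hρ0
            linarith
        _ = _ := key
  refine ⟨hmain, ?_⟩
  set d0 := ‖y 0 - ystar (tk 0)‖ with hd0
  clear_value d0
  have hbound : ∀ k, ‖y k - ystar (tk k)‖ ≤ ρ ^ k * d0 + ρ * B / (1 - ρ) := by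
    intro k
    refine le_trans (hmain k) ?_
    have h1 : ρ * B * (1 - ρ ^ k) / (1 - ρ) ≤ ρ * B / (1 - ρ) := by
      rw [div_le_div_iff₀ h1ρ h1ρ]
      have hx : 0 ≤ ρ * B * (1 - ρ) * ρ ^ k :=
        mul_nonneg (mul_nonneg (mul_nonneg hρ0 hB0) h1ρ.le) (pow_nonneg hρ0 k)
      nlinarith [hx]
    linarith
  have htend : Filter.Tendsto (fun k : ℕ => ρ ^ k * d0 + ρ * B / (1 - ρ)) Filter.atTop
      (nhds (0 * d0 + ρ * B / (1 - ρ))) :=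
    ((tendsto_pow_atTop_nhds_zero_of_lt_one hρ0 hρ1).mul_const d0).add_const _
  have hle : Filter.limsup (fun k => ‖y k - ystar (tk k)‖) Filter.atTop
      ≤ Filter.limsup (fun k : ℕ => ρ ^ k * d0 + ρ * B / (1 - ρ)) Filter.atTop := by
    refine Filter.limsup_le_limsup (Filter.Eventually.of_forall hbound) ?_ ?_
    · exact Filter.isCoboundedUnder_le_of_le Filter.atTop (fun k => norm_nonneg _)
    · exact htend.isBoundedUnder_le
  rw [htend.limsup_eq] at hle
  have e : (0 : ℝ) * d0 + ρ * B / (1 - ρ) = ρ / (1 - ρ) * B := by ring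
  rw [e] at hle
  exact hle
end

section
/- Let the DPC-G iterates be defined as follows: given y_0 ∈ E and a sequence of symmetric positive semidefinite linear maps H_k on E satisfying ‖id − (∇²_y F(t_k, y_k)) ∘ H_k‖ ≤ ε for all k (operator norm), set y_{k+1|k} := y_k − h · H_k (∂_t ∇_y F(t_k, y_k)) (prediction) and y_{k+1} := y_{k+1|k} − γ ∇_y F(t_{k+1}, y_{k+1|k}) (gradient correction). Define ρ := max(|1 − γm|, |1 − γL'|). If 0 < γ < 2/L' and in addition h < (C0C1/m² + C2/m)^{-1}(ρ^{-1} − 1) (equivalently ρσ < 1), then for every k ≥ 0: ‖y_k − y*(t_k)‖ ≤ (ρσ)^k ‖y_0 − y*(t_0)‖ + ρ · (hC0ε/m + h²Δ) · (1 − (ρσ)^k)/(1 − ρσ). In particular limsup_{k→∞} ‖y_k − y*(t_k)‖ ≤ ρ/(1 − ρσ) · (hC0ε/m + h²Δ). -/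
open scoped InnerProductSpace

local notation "E" n => EuclideanSpace ℝ (Fin n)

-- Cauchy-Schwarz for the PSD form of a symmetric operator shifted by m
lemma pc_key_quad {n : ℕ} (m L' : ℝ) (hmL : m ≤ L') (A : (E n) →L[ℝ] (E n))
    (hsym : ∀ v w : E n, ⟪A v, w⟫_ℝ = ⟪v, A w⟫_ℝ)
    (hlow : ∀ v : E n, m * ‖v‖ ^ 2 ≤ ⟪A v, v⟫_ℝ)
    (hupp : ∀ v : E n, ⟪A v, v⟫_ℝ ≤ L' * ‖v‖ ^ 2) (v : E n) :
    ‖A v‖ ^ 2 + m * L' * ‖v‖ ^ 2 ≤ (m + L') * ⟪A v, v⟫_ℝ := by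
  set w : E n := A v - m • v with hw
  -- quadratic form q x = ⟪A x, x⟫ - m ‖x‖²  is between 0 and (L'-m)‖x‖²
  have hq0 : ∀ x : E n, 0 ≤ ⟪A x, x⟫_ℝ - m * ‖x‖ ^ 2 := fun x => by
    have := hlow x; linarith
  have hq1 : ∀ x : E n, ⟪A x, x⟫_ℝ - m * ‖x‖ ^ 2 ≤ (L' - m) * ‖x‖ ^ 2 := fun x => by
    have := hupp x; ring_nf; ring_nf at this ⊢; nlinarith
  -- bilinear form b x y = ⟪A x, y⟫ - m ⟪x,y⟫, Cauchy-Schwarz via discriminant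
  have hCS : ∀ x z : E n,
      (⟪A x, z⟫_ℝ - m * ⟪x, z⟫_ℝ) ^ 2
        ≤ (⟪A x, x⟫_ℝ - m * ‖x‖ ^ 2) * (⟪A z, z⟫_ℝ - m * ‖z‖ ^ 2) := by
    intro x z
    have hd := discrim_le_zero (a := ⟪A z, z⟫_ℝ - m * ‖z‖ ^ 2)
      (b := 2 * (⟪A x, z⟫_ℝ - m * ⟪x, z⟫_ℝ)) (c := ⟪A x, x⟫_ℝ - m * ‖x‖ ^ 2) ?_
    · rw [discrim] at hd; nlinarith
    · intro t
      have h0 := hq0 (x + t • z)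
      have e1 : ⟪A (x + t • z), x + t • z⟫_ℝ
          = ⟪A x, x⟫_ℝ + 2 * t * ⟪A x, z⟫_ℝ + t ^ 2 * ⟪A z, z⟫_ℝ := by
        have hsymz : ⟪A z, x⟫_ℝ = ⟪A x, z⟫_ℝ := by
          rw [hsym z x, real_inner_comm]
        simp only [map_add, map_smul, inner_add_left, inner_add_right,
          real_inner_smul_left, real_inner_smul_right]
        rw [hsymz]; ring
      have e2 : ‖x + t • z‖ ^ 2 = ‖x‖ ^ 2 + 2 * t * ⟪x, z⟫_ℝ + t ^ 2 * ‖z‖ ^ 2 := by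
        rw [← real_inner_self_eq_norm_sq, ← real_inner_self_eq_norm_sq,
          ← real_inner_self_eq_norm_sq]
        simp only [inner_add_left, inner_add_right, real_inner_smul_left,
          real_inner_smul_right]
        rw [real_inner_comm z x]; ring
      rw [e1, e2] at h0; nlinarith
  -- apply CS with x = v, z = w
  have hbw : ⟪A v, w⟫_ℝ - m * ⟪v, w⟫_ℝ = ‖w‖ ^ 2 := by
    rw [← real_inner_self_eq_norm_sq, hw]
    simp only [inner_sub_left, inner_sub_right, real_inner_smul_left,
      real_inner_smul_right]
    rw [real_inner_comm v (A v)]; ring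
  have key : ‖w‖ ^ 2 ≤ (L' - m) * (⟪A v, v⟫_ℝ - m * ‖v‖ ^ 2) := by
    have h1 := hCS v w
    rw [hbw] at h1
    have h2 := hq1 w
    rcases eq_or_ne (‖w‖) 0 with hw0 | hw0
    · rw [hw0]; have := hq0 v; nlinarith
    · have hwpos : 0 < ‖w‖ ^ 2 := by positivity
      nlinarith [hq0 v, hq0 w]
  -- expand ‖w‖² = ‖A v - m v‖²
  have hexp : ‖w‖ ^ 2 = ‖A v‖ ^ 2 - 2 * m * ⟪A v, v⟫_ℝ + m ^ 2 * ‖v‖ ^ 2 := by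
    rw [← real_inner_self_eq_norm_sq, hw, ← real_inner_self_eq_norm_sq,
      ← real_inner_self_eq_norm_sq]
    simp only [inner_sub_left, inner_sub_right, real_inner_smul_left,
      real_inner_smul_right]
    rw [real_inner_comm v (A v)]; ring
  rw [hexp] at key; nlinarith

lemma pc_contraction_vec {n : ℕ} (m L' γ : ℝ) (hm : 0 < m) (hmL : m ≤ L')
    (hγ : 0 < γ) (A : (E n) →L[ℝ] (E n))
    (hsym : ∀ v w : E n, ⟪A v, w⟫_ℝ = ⟪v, A w⟫_ℝ)
    (hlow : ∀ v : E n, m * ‖v‖ ^ 2 ≤ ⟪A v, v⟫_ℝ)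
    (hupp : ∀ v : E n, ⟪A v, v⟫_ℝ ≤ L' * ‖v‖ ^ 2) (v : E n) :
    ‖v - γ • A v‖ ≤ max |1 - γ * m| |1 - γ * L'| * ‖v‖ := by
  set ρ := max |1 - γ * m| |1 - γ * L'| with hρ
  have hρ0 : 0 ≤ ρ := le_trans (abs_nonneg _) (le_max_left _ _)
  have h1 : (1 - γ * m) ^ 2 ≤ ρ ^ 2 := by
    have : |1 - γ * m| ≤ ρ := le_max_left _ _
    nlinarith [abs_nonneg (1 - γ * m), sq_abs (1 - γ * m)]
  have h2 : (1 - γ * L') ^ 2 ≤ ρ ^ 2 := by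
    have : |1 - γ * L'| ≤ ρ := le_max_right _ _
    nlinarith [abs_nonneg (1 - γ * L'), sq_abs (1 - γ * L')]
  have hkey := pc_key_quad m L' hmL A hsym hlow hupp v
  have hexp : ‖v - γ • A v‖ ^ 2
      = ‖v‖ ^ 2 - 2 * γ * ⟪A v, v⟫_ℝ + γ ^ 2 * ‖A v‖ ^ 2 := by
    rw [← real_inner_self_eq_norm_sq, ← real_inner_self_eq_norm_sq,
      ← real_inner_self_eq_norm_sq]
    simp only [inner_sub_left, inner_sub_right, real_inner_smul_left,
      real_inner_smul_right]
    rw [real_inner_comm v (A v)]; ring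
  have hsq : ‖v - γ • A v‖ ^ 2 ≤ ρ ^ 2 * ‖v‖ ^ 2 := by
    have hql := hlow v
    have hqu := hupp v
    rcases le_or_gt (γ * (γ * (m + L') - 2)) 0 with hc | hc
    · -- coefficient of q nonpositive, use q ≥ m‖v‖²
      nlinarith [mul_nonneg (neg_nonneg.2 hc) (sub_nonneg.2 hql)]
    · nlinarith [mul_nonneg hc.le (sub_nonneg.2 hqu)]
  calc ‖v - γ • A v‖ = Real.sqrt (‖v - γ • A v‖ ^ 2) := by
        rw [Real.sqrt_sq (norm_nonneg _)]
    _ ≤ Real.sqrt (ρ ^ 2 * ‖v‖ ^ 2) := Real.sqrt_le_sqrt hsq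
    _ = ρ * ‖v‖ := by
        rw [← mul_pow, Real.sqrt_sq (by positivity)]

lemma pc_exists_inverse {n : ℕ} (m : ℝ) (hm : 0 < m) (A : (E n) →L[ℝ] (E n))
    (hlow : ∀ v : E n, m * ‖v‖ ^ 2 ≤ ⟪A v, v⟫_ℝ) :
    ∃ B : (E n) →L[ℝ] (E n), (∀ v, B (A v) = v) ∧ (∀ w, A (B w) = w) ∧
      ∀ w, ‖B w‖ ≤ ‖w‖ / m := by
  have hinj : Function.Injective (A.toLinearMap) := by
    rw [← LinearMap.ker_eq_bot, LinearMap.ker_eq_bot']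
    intro v hv
    have hv' : A v = 0 := hv
    have := hlow v
    rw [hv'] at this
    simp only [inner_zero_left] at this
    have : ‖v‖ ^ 2 ≤ 0 := by nlinarith
    have : ‖v‖ = 0 := by nlinarith [sq_nonneg ‖v‖, norm_nonneg v]
    exact norm_eq_zero.mp this
  have hbij : Function.Bijective (A.toLinearMap) :=
    ⟨hinj, (LinearMap.injective_iff_surjective).mp hinj⟩
  let e : (E n) ≃ₗ[ℝ] (E n) := LinearEquiv.ofBijective A.toLinearMap hbij
  refine ⟨LinearMap.toContinuousLinearMap e.symm.toLinearMap, fun v => ?_, fun w => ?_, fun w => ?_⟩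
  · exact e.symm_apply_apply v
  · exact e.apply_symm_apply w
  · set z := LinearMap.toContinuousLinearMap e.symm.toLinearMap w with hz
    have hAz : A z = w := e.apply_symm_apply w
    have h1 : m * ‖z‖ ^ 2 ≤ ⟪A z, z⟫_ℝ := hlow z
    rw [hAz] at h1
    have h2 : ⟪w, z⟫_ℝ ≤ ‖w‖ * ‖z‖ := real_inner_le_norm w z
    rcases eq_or_ne (‖z‖) 0 with h0 | h0
    · rw [h0]; positivity
    · have hzpos : 0 < ‖z‖ := lt_of_le_of_ne (norm_nonneg _) (Ne.symm h0)
      rw [le_div_iff₀ hm]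
      nlinarith

section paths

variable {n : ℕ} {Fgrad : ℝ → (E n) → (E n)} {Hess : ℝ → (E n) → (E n) →L[ℝ] (E n)}
  {Gt : ℝ → (E n) → (E n)}

lemma pc_fderiv_eq (hG1 : ContDiff ℝ 1 (Function.uncurry Fgrad))
    (hhess : ∀ t y, HasFDerivAt (Fgrad t) (Hess t y) y)
    (ht : ∀ t y, HasDerivAt (fun s => Fgrad s y) (Gt t y) t)
    (t : ℝ) (y : E n) (a : ℝ) (v : E n) :
    fderiv ℝ (Function.uncurry Fgrad) (t, y) (a, v) = a • Gt t y + Hess t y v := by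
  have hD : HasFDerivAt (Function.uncurry Fgrad)
      (fderiv ℝ (Function.uncurry Fgrad) (t, y)) (t, y) :=
    (hG1.differentiable one_ne_zero (t, y)).hasFDerivAt
  set D := fderiv ℝ (Function.uncurry Fgrad) (t, y) with hDdef
  have h10 : D (1, 0) = Gt t y := by
    have hline : HasDerivAt (fun s : ℝ => (s, y)) ((1 : ℝ), (0 : E n)) t := by
      exact (hasDerivAt_id t).prodMk (hasDerivAt_const t y)
    have hcomp : HasDerivAt (fun s => Fgrad s y) (D (1, 0)) t := by
      exact hD.comp_hasDerivAt t hline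
    exact hcomp.unique (ht t y)
  have h0v : ∀ w, D (0, w) = Hess t y w := by
    intro w
    have hline : HasFDerivAt (fun z : E n => (t, z))
        (ContinuousLinearMap.inr ℝ ℝ (E n)) y := by
      exact (hasFDerivAt_const t y).prodMk (hasFDerivAt_id y)
    have hcomp : HasFDerivAt (fun z => Fgrad t z)
        (D.comp (ContinuousLinearMap.inr ℝ ℝ (E n))) y := hD.comp y hline
    have := hcomp.unique (hhess t y)
    calc D (0, w) = (D.comp (ContinuousLinearMap.inr ℝ ℝ (E n))) w := rfl
      _ = Hess t y w := by rw [this]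
  have : (a, v) = a • ((1 : ℝ), (0 : E n)) + ((0 : ℝ), v) := by
    simp [Prod.ext_iff]
  rw [this, map_add, map_smul, h10, h0v]

lemma pc_pathD (hG1 : ContDiff ℝ 1 (Function.uncurry Fgrad))
    (hhess : ∀ t y, HasFDerivAt (Fgrad t) (Hess t y) y)
    (ht : ∀ t y, HasDerivAt (fun s => Fgrad s y) (Gt t y) t)
    (t0 h0 : ℝ) (x0 d : E n) (σ : ℝ) :
    HasDerivAt (fun σ : ℝ => Fgrad (t0 + σ * h0) (x0 + σ • d))
      (h0 • Gt (t0 + σ * h0) (x0 + σ • d) + Hess (t0 + σ * h0) (x0 + σ • d) d) σ := by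
  have hline : HasDerivAt (fun σ : ℝ => (t0 + σ * h0, x0 + σ • d)) (h0, d) σ := by
    refine HasDerivAt.prodMk ?_ ?_
    · simpa using ((hasDerivAt_id σ).mul_const h0).const_add t0
    · simpa using ((hasDerivAt_id σ).smul_const d).const_add x0
  have hD : HasFDerivAt (Function.uncurry Fgrad)
      (fderiv ℝ (Function.uncurry Fgrad) (t0 + σ * h0, x0 + σ • d))
      (t0 + σ * h0, x0 + σ • d) :=
    (hG1.differentiable one_ne_zero _).hasFDerivAt
  have hcomp := hD.comp_hasDerivAt σ hline
  have heq := pc_fderiv_eq hG1 hhess ht (t0 + σ * h0) (x0 + σ • d) h0 d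
  rw [heq] at hcomp
  exact hcomp

lemma pc_pathD_cont (hG1 : ContDiff ℝ 1 (Function.uncurry Fgrad))
    (hhess : ∀ t y, HasFDerivAt (Fgrad t) (Hess t y) y)
    (ht : ∀ t y, HasDerivAt (fun s => Fgrad s y) (Gt t y) t)
    (t0 h0 : ℝ) (x0 d : E n) :
    Continuous (fun σ : ℝ =>
      h0 • Gt (t0 + σ * h0) (x0 + σ • d) + Hess (t0 + σ * h0) (x0 + σ • d) d) := by
  have : (fun σ : ℝ =>
      h0 • Gt (t0 + σ * h0) (x0 + σ • d) + Hess (t0 + σ * h0) (x0 + σ • d) d)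
      = fun σ : ℝ => fderiv ℝ (Function.uncurry Fgrad) (t0 + σ * h0, x0 + σ • d) (h0, d) := by
    funext σ
    rw [pc_fderiv_eq hG1 hhess ht]
  rw [this]
  have hc1 : Continuous (fun σ : ℝ => (t0 + σ * h0, x0 + σ • d)) := by continuity
  have hc2 : Continuous (fderiv ℝ (Function.uncurry Fgrad)) :=
    (hG1.fderiv_right (m := 0) le_rfl).continuous
  exact (hc2.comp hc1).clm_apply continuous_const

end paths

-- mean value inequality on ℝ, both orders
lemma pc_mvt {n : ℕ} {f : ℝ → E n} {f' : ℝ → E n} {C : ℝ}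
    (hf : ∀ x, HasDerivAt f (f' x) x) (hC : ∀ x, ‖f' x‖ ≤ C) (a b : ℝ) :
    ‖f b - f a‖ ≤ C * |b - a| := by
  have main : ∀ u v : ℝ, u ≤ v → ‖f v - f u‖ ≤ C * (v - u) := by
    intro u v huv
    have := norm_image_sub_le_of_norm_deriv_le_segment'
      (f := f) (f' := f') (a := u) (b := v)
      (fun x _ => (hf x).hasDerivWithinAt) (fun x _ => hC x) v
      (Set.right_mem_Icc.2 huv)
    simpa using this
  rcases le_total a b with hab | hab
  · rw [abs_of_nonneg (by linarith)]; exact main a b hab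
  · rw [abs_of_nonpos (by linarith), ← norm_neg, neg_sub]
    have := main b a hab; linarith [this]

-- lower bound on increments of a real function with derivative ≥ c on [0,1]
lemma pc_incr {f : ℝ → ℝ} {f' : ℝ → ℝ} {c : ℝ}
    (hf : ∀ x, HasDerivAt f (f' x) x) (hc : ∀ x, c ≤ f' x) :
    c ≤ f 1 - f 0 := by
  have hg : Differentiable ℝ (fun x => f x - c * x) := by
    intro x
    exact ((hf x).sub ((hasDerivAt_id x).const_mul c)).differentiableAt
  have hmono : Monotone (fun x => f x - c * x) := by
    apply monotone_of_deriv_nonneg hg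
    intro x
    have hd : HasDerivAt (fun x => f x - c * x) (f' x - c) x := by
      exact ((hf x).sub ((hasDerivAt_id x).const_mul c)).congr_deriv (by ring)
    rw [hd.deriv]
    linarith [hc x]
  have := hmono (by norm_num : (0:ℝ) ≤ 1)
  simp only at this
  linarith

set_option maxHeartbeats 1000000 in
/-- Theorem 1, part ii, decentralized form: DPC-G iterates with
ρσ < 1 converge Q-linearly with rate ρσ up to an asymptotic error
O(hε) + O(h²). -/
theorem stmt_1 {n : ℕ} (hn : 1 ≤ n)
    (F : ℝ → (E n) → ℝ)
    (Fgrad : ℝ → (E n) → (E n))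
    (Hess : ℝ → (E n) → (E n) →L[ℝ] (E n))
    (Gt Gtt : ℝ → (E n) → (E n))
    (m L' C0 C1 C2 C3 : ℝ)
    (hm : 0 < m) (hmL : m ≤ L')
    (hC0 : 0 ≤ C0) (hC1 : 0 ≤ C1) (hC2 : 0 ≤ C2) (hC3 : 0 ≤ C3)
    (hF2 : ∀ t, ContDiff ℝ 2 (F t))
    (hG1 : ContDiff ℝ 1 (Function.uncurry Fgrad))
    (hgrad : ∀ t y, HasGradientAt (F t) (Fgrad t y) y)
    (hhess : ∀ t y, HasFDerivAt (Fgrad t) (Hess t y) y)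
    (ht : ∀ t y, HasDerivAt (fun s => Fgrad s y) (Gt t y) t)
    (htt : ∀ t y, HasDerivAt (fun s => Gt s y) (Gtt t y) t)
    (hstrong : ∀ t y (v : E n), m * ‖v‖ ^ 2 ≤ ⟪Hess t y v, v⟫_ℝ)
    (hsmooth : ∀ t y (v : E n), ⟪Hess t y v, v⟫_ℝ ≤ L' * ‖v‖ ^ 2)
    (hC0b : ∀ t y, ‖Gt t y‖ ≤ C0)
    (hC1b : ∀ t y y', ‖Hess t y - Hess t y'‖ ≤ C1 * ‖y - y'‖)
    (hC2b : ∀ t y y', ‖Gt t y - Gt t y'‖ ≤ C2 * ‖y - y'‖)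
    (hC3b : ∀ t y, ‖Gtt t y‖ ≤ C3)
    (ystar : ℝ → E n)
    (hmin : ∀ t, IsMinOn (F t) Set.univ (ystar t))
    (h γ ε Δ σ ρ : ℝ) (hh : 0 < h) (hε : 0 ≤ ε)
    (hγ : 0 < γ) (hγ2 : γ < 2 / L')
    (hΔ : Δ = C0 ^ 2 * C1 / (2 * m ^ 3) + C0 * C2 / m ^ 2 + C3 / (2 * m))
    (hσ : σ = 1 + h * (C0 * C1 / m ^ 2 + C2 / m))
    (hρ : ρ = max |1 - γ * m| |1 - γ * L'|)
    (hρσ : ρ * σ < 1)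
    (tk : ℕ → ℝ) (htk : ∀ k : ℕ, tk k = k * h)
    (y ypred : ℕ → E n)
    (H : ℕ → (E n) →L[ℝ] (E n))
    (hHsa : ∀ k, IsSelfAdjoint (H k))
    (hHpsd : ∀ k (v : E n), 0 ≤ ⟪H k v, v⟫_ℝ)
    (hHerr : ∀ k, ‖ContinuousLinearMap.id ℝ (E n) - (Hess (tk k) (y k)).comp (H k)‖ ≤ ε)
    (hpred : ∀ k, ypred k = y k - h • H k (Gt (tk k) (y k)))
    (hcorr : ∀ k, y (k + 1) = ypred k - γ • Fgrad (tk (k + 1)) (ypred k)) :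
    (∀ k : ℕ, ‖y k - ystar (tk k)‖
        ≤ (ρ * σ) ^ k * ‖y 0 - ystar (tk 0)‖
          + ρ * (h * C0 * ε / m + h ^ 2 * Δ) * (1 - (ρ * σ) ^ k) / (1 - ρ * σ))
    ∧ Filter.limsup (fun k => ‖y k - ystar (tk k)‖) Filter.atTop
        ≤ ρ / (1 - ρ * σ) * (h * C0 * ε / m + h ^ 2 * Δ) := by
  have hL' : 0 < L' := lt_of_lt_of_le hm hmL
  have hρ0 : 0 ≤ ρ := hρ ▸ le_trans (abs_nonneg _) (le_max_left _ _)
  have hℓ0 : 0 ≤ C0 * C1 / m ^ 2 + C2 / m := by positivity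
  have hσ1 : 1 ≤ σ := by rw [hσ]; nlinarith
  have hσ0 : 0 < σ := lt_of_lt_of_le one_pos hσ1
  have hr0 : 0 ≤ ρ * σ := mul_nonneg hρ0 hσ0.le
  have hΔ0 : 0 ≤ Δ := by rw [hΔ]; positivity
  have hB0 : 0 ≤ h * C0 * ε / m + h ^ 2 * Δ := by positivity
  -- symmetry of the Hessian
  have hsym : ∀ t' y' (v w : E n), ⟪Hess t' y' v, w⟫_ℝ = ⟪v, Hess t' y' w⟫_ℝ := by
    intro t' y' v w
    set L : (E n) →L[ℝ] ((E n) →L[ℝ] ℝ) :=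
      (InnerProductSpace.toDual ℝ (E n)).toContinuousLinearEquiv.toContinuousLinearMap
      with hLdef
    have hf : ∀ z, HasFDerivAt (F t') (L (Fgrad t' z)) z := fun z =>
      (hgrad t' z).hasFDerivAt
    have hx : HasFDerivAt (fun z => L (Fgrad t' z)) (L.comp (Hess t' y')) y' :=
      L.hasFDerivAt.comp y' (hhess t' y')
    have hsymm := second_derivative_symmetric hf hx v w
    have e1 : (L.comp (Hess t' y')) v w = ⟪Hess t' y' v, w⟫_ℝ := by
      simp [hLdef, InnerProductSpace.toDual_apply_apply]
    have e2 : (L.comp (Hess t' y')) w v = ⟪Hess t' y' w, v⟫_ℝ := by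
      simp [hLdef, InnerProductSpace.toDual_apply_apply]
    rw [e1, e2] at hsymm
    rw [hsymm, real_inner_comm]
  -- gradient vanishes at the minimizer
  have hgrad0 : ∀ s, Fgrad s (ystar s) = 0 := by
    intro s
    have hloc : IsLocalMin (F s) (ystar s) :=
      Filter.Eventually.of_forall fun x => hmin s (Set.mem_univ x)
    have hz := hloc.hasFDerivAt_eq_zero (hgrad s (ystar s)).hasFDerivAt
    have : InnerProductSpace.toDual ℝ (E n) (Fgrad s (ystar s))
        = InnerProductSpace.toDual ℝ (E n) 0 := by
      rw [map_zero]; exact hz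
    exact (InnerProductSpace.toDual ℝ (E n)).injective this
  -- strong monotonicity
  have hmono : ∀ s (z w : E n),
      m * ‖z - w‖ ^ 2 ≤ ⟪Fgrad s z - Fgrad s w, z - w⟫_ℝ := by
    intro s z w
    set d : E n := z - w with hd
    have hpath : ∀ τ : ℝ, HasDerivAt (fun τ : ℝ => Fgrad s (w + τ • d))
        (Hess s (w + τ • d) d) τ := by
      intro τ
      have := pc_pathD hG1 hhess ht s 0 w d τ
      simpa only [mul_zero, add_zero, zero_smul, zero_add] using this
    have hinner : ∀ τ : ℝ, HasDerivAt (fun τ : ℝ => ⟪Fgrad s (w + τ • d), d⟫_ℝ)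
        (⟪Hess s (w + τ • d) d, d⟫_ℝ) τ := by
      intro τ
      have := HasDerivAt.inner ℝ (hpath τ) (hasDerivAt_const τ d)
      simpa using this
    have hincr := pc_incr hinner (fun τ => hstrong s (w + τ • d) d)
    have e1 : w + (1 : ℝ) • d = z := by rw [hd]; simp
    have e0 : w + (0 : ℝ) • d = w := by simp
    rw [e1, e0] at hincr
    rw [inner_sub_left]
    linarith [hincr]
  have hlower : ∀ s (z : E n), m * ‖z - ystar s‖ ≤ ‖Fgrad s z‖ := by
    intro s z
    have h1 := hmono s z (ystar s)
    rw [hgrad0 s, sub_zero] at h1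
    have h2 : ⟪Fgrad s z, z - ystar s⟫_ℝ ≤ ‖Fgrad s z‖ * ‖z - ystar s‖ :=
      real_inner_le_norm _ _
    rcases eq_or_ne (‖z - ystar s‖) 0 with h0 | h0
    · rw [h0]; simp [norm_nonneg]
    · have hpos : 0 < ‖z - ystar s‖ := lt_of_le_of_ne (norm_nonneg _) (Ne.symm h0)
      nlinarith
  -- Lipschitz-in-time bounds
  have hGtT : ∀ s t' (y0 : E n), ‖Gt s y0 - Gt t' y0‖ ≤ C3 * |s - t'| := by
    intro s t' y0
    exact pc_mvt (fun τ => htt τ y0) (fun τ => hC3b τ y0) t' s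
  have hFgT : ∀ s t' (y0 : E n), ‖Fgrad s y0 - Fgrad t' y0‖ ≤ C0 * |s - t'| := by
    intro s t' y0
    exact pc_mvt (fun τ => ht τ y0) (fun τ => hC0b τ y0) t' s
  have hystarLip : ∀ s t', ‖ystar s - ystar t'‖ ≤ C0 / m * |s - t'| := by
    intro s t'
    have h1 := hlower s (ystar t')
    have h2 : ‖Fgrad s (ystar t')‖ ≤ C0 * |s - t'| := by
      have := hFgT s t' (ystar t')
      rwa [hgrad0 t', sub_zero] at this
    rw [norm_sub_rev] at h1
    have h3 : m * ‖ystar s - ystar t'‖ ≤ C0 * |s - t'| := le_trans h1 h2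
    rw [div_mul_eq_mul_div, le_div_iff₀ hm]
    linarith [h3]
  have hHessT : ∀ s t' (x : E n), ‖Hess s x - Hess t' x‖ ≤ C2 * |s - t'| := by
    intro s t' x
    have hnn : 0 ≤ C2 * |s - t'| := by positivity
    have hlip : LipschitzWith (Real.toNNReal (C2 * |s - t'|))
        (fun z => Fgrad s z - Fgrad t' z) := by
      apply LipschitzWith.of_dist_le_mul
      intro z z'
      rw [dist_eq_norm, Real.coe_toNNReal _ hnn]
      have hmv := pc_mvt (f := fun τ => Fgrad τ z - Fgrad τ z')
        (f' := fun τ => Gt τ z - Gt τ z')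
        (fun τ => (ht τ z).sub (ht τ z')) (fun τ => hC2b τ z z') t' s
      calc ‖(Fgrad s z - Fgrad t' z) - (Fgrad s z' - Fgrad t' z')‖
          = ‖(Fgrad s z - Fgrad s z') - (Fgrad t' z - Fgrad t' z')‖ := by
            congr 1; abel
        _ ≤ C2 * ‖z - z'‖ * |s - t'| := hmv
        _ = C2 * |s - t'| * ‖z - z'‖ := by ring
        _ = C2 * |s - t'| * dist z z' := by rw [dist_eq_norm]
    have hder : HasFDerivAt (fun z => Fgrad s z - Fgrad t' z)
        (Hess s x - Hess t' x) x := (hhess s x).sub (hhess t' x)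
    have := hder.le_of_lipschitz hlip
    rwa [Real.coe_toNNReal _ hnn] at this
  -- inverse Hessians
  choose Binv hBA hAB hBn using
    fun (t' : ℝ) (z : E n) => pc_exists_inverse m hm (Hess t' z) (hstrong t' z)
  set ψ : ℝ → E n := fun t' => Binv t' (ystar t') (Gt t' (ystar t')) with hψdef
  have hψn : ∀ t', ‖ψ t'‖ ≤ C0 / m := by
    intro t'
    calc ‖ψ t'‖ ≤ ‖Gt t' (ystar t')‖ / m := hBn t' (ystar t') _
      _ ≤ C0 / m := by
          gcongr <;> first
            | exact hC0b t' (ystar t')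
            | exact hm.le
  -- prediction error of the exact continuous prediction
  have hE' : ∀ t', ‖ystar (t' + h) - (ystar t' - h • ψ t')‖ ≤ h ^ 2 * Δ := by
    intro t'
    set x0 : E n := ystar t' with hx0
    set δ : E n := -(h • ψ t') with hδdef
    have hδn : ‖δ‖ ≤ h * (C0 / m) := by
      rw [hδdef, norm_neg, norm_smul, Real.norm_eq_abs, abs_of_pos hh]
      exact mul_le_mul_of_nonneg_left (hψn t') hh.le
    have hδ0 : 0 ≤ ‖δ‖ := norm_nonneg δ
    -- the path
    have hp : ∀ τ : ℝ, HasDerivAt (fun τ : ℝ => Fgrad (t' + τ * h) (x0 + τ • δ))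
        (h • Gt (t' + τ * h) (x0 + τ • δ) + Hess (t' + τ * h) (x0 + τ • δ) δ) τ :=
      fun τ => pc_pathD hG1 hhess ht t' h x0 δ τ
    have hpc : Continuous (fun τ : ℝ =>
        h • Gt (t' + τ * h) (x0 + τ • δ) + Hess (t' + τ * h) (x0 + τ • δ) δ) :=
      pc_pathD_cont hG1 hhess ht t' h x0 δ
    have hzero : h • Gt t' x0 + Hess t' x0 δ = 0 := by
      rw [hδdef]
      rw [map_neg, map_smul, hψdef]
      simp only [hx0]
      rw [hAB t' (ystar t') (Gt t' (ystar t'))]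
      simp
    have hftc : Fgrad (t' + 1 * h) (x0 + (1:ℝ) • δ) - Fgrad (t' + 0 * h) (x0 + (0:ℝ) • δ)
        = ∫ τ in (0:ℝ)..1,
            (h • Gt (t' + τ * h) (x0 + τ • δ) + Hess (t' + τ * h) (x0 + τ • δ) δ) := by
      rw [intervalIntegral.integral_eq_sub_of_hasDerivAt (fun τ _ => hp τ)
        (hpc.intervalIntegrable 0 1)]
    set K : ℝ := h * (C2 * ‖δ‖ + C3 * h) + (C1 * ‖δ‖ + C2 * h) * ‖δ‖ with hKdef
    have hKnn : 0 ≤ K := by rw [hKdef]; positivity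
    have hbound : ∀ τ ∈ Set.Ioc (0:ℝ) 1,
        ‖h • Gt (t' + τ * h) (x0 + τ • δ) + Hess (t' + τ * h) (x0 + τ • δ) δ‖ ≤ τ * K := by
      intro τ hτ
      obtain ⟨hτ0, hτ1⟩ := hτ
      have hGtb : ‖Gt (t' + τ * h) (x0 + τ • δ) - Gt t' x0‖ ≤ τ * (C2 * ‖δ‖ + C3 * h) := by
        calc ‖Gt (t' + τ * h) (x0 + τ • δ) - Gt t' x0‖
            ≤ ‖Gt (t' + τ * h) (x0 + τ • δ) - Gt (t' + τ * h) x0‖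
              + ‖Gt (t' + τ * h) x0 - Gt t' x0‖ := norm_sub_le_norm_sub_add_norm_sub _ _ _
          _ ≤ C2 * ‖x0 + τ • δ - x0‖ + C3 * |t' + τ * h - t'| := by
              gcongr
              · exact hC2b _ _ _
              · exact hGtT _ _ _
          _ = C2 * (τ * ‖δ‖) + C3 * (τ * h) := by
              rw [add_sub_cancel_left, add_sub_cancel_left, norm_smul,
                Real.norm_eq_abs, abs_of_pos hτ0, abs_of_pos (by positivity : 0 < τ * h)]
          _ = τ * (C2 * ‖δ‖ + C3 * h) := by ring
      have hHb : ‖Hess (t' + τ * h) (x0 + τ • δ) - Hess t' x0‖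
          ≤ τ * (C1 * ‖δ‖ + C2 * h) := by
        calc ‖Hess (t' + τ * h) (x0 + τ • δ) - Hess t' x0‖
            ≤ ‖Hess (t' + τ * h) (x0 + τ • δ) - Hess (t' + τ * h) x0‖
              + ‖Hess (t' + τ * h) x0 - Hess t' x0‖ := norm_sub_le_norm_sub_add_norm_sub _ _ _
          _ ≤ C1 * ‖x0 + τ • δ - x0‖ + C2 * |t' + τ * h - t'| := by
              gcongr
              · exact hC1b _ _ _
              · exact hHessT _ _ _
          _ = C1 * (τ * ‖δ‖) + C2 * (τ * h) := by
              rw [add_sub_cancel_left, add_sub_cancel_left, norm_smul,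
                Real.norm_eq_abs, abs_of_pos hτ0, abs_of_pos (by positivity : 0 < τ * h)]
          _ = τ * (C1 * ‖δ‖ + C2 * h) := by ring
      calc ‖h • Gt (t' + τ * h) (x0 + τ • δ) + Hess (t' + τ * h) (x0 + τ • δ) δ‖
          = ‖(h • Gt (t' + τ * h) (x0 + τ • δ) + Hess (t' + τ * h) (x0 + τ • δ) δ)
              - (h • Gt t' x0 + Hess t' x0 δ)‖ := by rw [hzero, sub_zero]
        _ = ‖h • (Gt (t' + τ * h) (x0 + τ • δ) - Gt t' x0)
              + (Hess (t' + τ * h) (x0 + τ • δ) - Hess t' x0) δ‖ := by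
            congr 1
            simp only [smul_sub, ContinuousLinearMap.sub_apply]
            abel
        _ ≤ ‖h • (Gt (t' + τ * h) (x0 + τ • δ) - Gt t' x0)‖
              + ‖(Hess (t' + τ * h) (x0 + τ • δ) - Hess t' x0) δ‖ := norm_add_le _ _
        _ ≤ h * (τ * (C2 * ‖δ‖ + C3 * h)) + τ * (C1 * ‖δ‖ + C2 * h) * ‖δ‖ := by
            gcongr
            · rw [norm_smul, Real.norm_eq_abs, abs_of_pos hh]
              exact mul_le_mul_of_nonneg_left hGtb hh.le
            · calc ‖(Hess (t' + τ * h) (x0 + τ • δ) - Hess t' x0) δ‖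
                  ≤ ‖Hess (t' + τ * h) (x0 + τ • δ) - Hess t' x0‖ * ‖δ‖ :=
                    ContinuousLinearMap.le_opNorm _ _
                _ ≤ τ * (C1 * ‖δ‖ + C2 * h) * ‖δ‖ := by
                    apply mul_le_mul_of_nonneg_right hHb hδ0
        _ = τ * K := by rw [hKdef]; ring
    have hintb : ‖Fgrad (t' + h) (x0 + δ)‖ ≤ K / 2 := by
      have h10 : Fgrad (t' + h) (x0 + δ) = Fgrad (t' + 1 * h) (x0 + (1:ℝ) • δ)
          - Fgrad (t' + 0 * h) (x0 + (0:ℝ) • δ) := by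
        rw [one_mul, one_smul, zero_mul, add_zero, zero_smul, add_zero, hx0, hgrad0 t']
        simp
      rw [h10, hftc]
      have hb2 := intervalIntegral.norm_integral_le_of_norm_le
        (g := fun τ => τ * K) (μ := MeasureTheory.volume)
        (f := fun τ => h • Gt (t' + τ * h) (x0 + τ • δ) + Hess (t' + τ * h) (x0 + τ • δ) δ)
        (a := 0) (b := 1) zero_le_one ?_ ?_
      · calc ‖∫ τ in (0:ℝ)..1,
              (h • Gt (t' + τ * h) (x0 + τ • δ) + Hess (t' + τ * h) (x0 + τ • δ) δ)‖
            ≤ |∫ τ in (0:ℝ)..1, τ * K| := hb2.trans (le_abs_self _)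
          _ = K / 2 := by
              rw [intervalIntegral.integral_mul_const, integral_id]
              rw [abs_of_nonneg (by positivity)]
              ring
      · have : Set.uIoc (0:ℝ) 1 = Set.Ioc (0:ℝ) 1 := Set.uIoc_of_le zero_le_one
        rw [← this]
        filter_upwards with τ hτ
        rw [this] at hτ
        exact hbound τ hτ
      · exact (continuous_id.mul continuous_const).intervalIntegrable 0 1
    -- conclude
    have hlow2 := hlower (t' + h) (x0 + δ)
    have hKb : K / 2 ≤ m * (h ^ 2 * Δ) := by
      have hK' : K ≤ h * (C2 * (h * (C0 / m)) + C3 * h)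
          + (C1 * (h * (C0 / m)) + C2 * h) * (h * (C0 / m)) := by
        rw [hKdef]
        gcongr <;> exact hδn
      have hK'e : (h * (C2 * (h * (C0 / m)) + C3 * h)
          + (C1 * (h * (C0 / m)) + C2 * h) * (h * (C0 / m))) / 2 = m * (h ^ 2 * Δ) := by
        rw [hΔ]; field_simp; ring
      linarith
    have : m * ‖x0 + δ - ystar (t' + h)‖ ≤ m * (h ^ 2 * Δ) :=
      le_trans hlow2 (le_trans hintb hKb)
    have hfin : ‖x0 + δ - ystar (t' + h)‖ ≤ h ^ 2 * Δ := by
      exact le_of_mul_le_mul_left (by linarith) hm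
    have hvec : x0 + δ - ystar (t' + h) = -(ystar (t' + h) - (x0 - h • ψ t')) := by
      rw [hδdef]; abel
    rw [hvec, norm_neg] at hfin
    exact hfin
  -- Lipschitz continuity of the Newton direction in space
  have hφLip : ∀ t' (x z : E n),
      ‖Binv t' x (Gt t' x) - Binv t' z (Gt t' z)‖
        ≤ (C0 * C1 / m ^ 2 + C2 / m) * ‖x - z‖ := by
    intro t' x z
    have hw : ‖Binv t' z (Gt t' z)‖ ≤ C0 / m := by
      calc ‖Binv t' z (Gt t' z)‖ ≤ ‖Gt t' z‖ / m := hBn t' z _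
        _ ≤ C0 / m := by
            gcongr <;> first
              | exact hC0b t' z
              | exact hm.le
    set w : E n := Binv t' z (Gt t' z) with hwdef
    have hsplit : Binv t' x (Gt t' x) - w
        = Binv t' x (Gt t' x - Gt t' z) + Binv t' x (Hess t' z w - Hess t' x w) := by
      have e1 : Binv t' x (Gt t' x - Gt t' z)
          = Binv t' x (Gt t' x) - Binv t' x (Gt t' z) := map_sub _ _ _
      have e2 : Binv t' x (Hess t' z w - Hess t' x w)
          = Binv t' x (Hess t' z w) - Binv t' x (Hess t' x w) := map_sub _ _ _
      have e3 : Hess t' z w = Gt t' z := hAB t' z _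
      have e4 : Binv t' x (Hess t' x w) = w := hBA t' x w
      rw [e1, e2, e3, e4]
      abel
    rw [hsplit]
    have hb1 : ‖Binv t' x (Gt t' x - Gt t' z)‖ ≤ C2 / m * ‖x - z‖ := by
      calc ‖Binv t' x (Gt t' x - Gt t' z)‖ ≤ ‖Gt t' x - Gt t' z‖ / m := hBn t' x _
        _ ≤ C2 * ‖x - z‖ / m := by
            gcongr <;> first
              | exact hC2b t' x z
              | exact hm.le
        _ = C2 / m * ‖x - z‖ := by ring
    have hb2 : ‖Binv t' x (Hess t' z w - Hess t' x w)‖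
        ≤ C0 * C1 / m ^ 2 * ‖x - z‖ := by
      have hop : ‖Hess t' z w - Hess t' x w‖ ≤ C1 * ‖z - x‖ * (C0 / m) := by
        calc ‖Hess t' z w - Hess t' x w‖ = ‖(Hess t' z - Hess t' x) w‖ := by
              rw [ContinuousLinearMap.sub_apply]
          _ ≤ ‖Hess t' z - Hess t' x‖ * ‖w‖ := ContinuousLinearMap.le_opNorm _ _
          _ ≤ C1 * ‖z - x‖ * (C0 / m) := by
              gcongr <;> first
                | exact hC1b t' z x
                | exact hw
      calc ‖Binv t' x (Hess t' z w - Hess t' x w)‖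
          ≤ ‖Hess t' z w - Hess t' x w‖ / m := hBn t' x _
        _ ≤ C1 * ‖z - x‖ * (C0 / m) / m := by gcongr <;> exact hm.le
        _ = C0 * C1 / m ^ 2 * ‖x - z‖ := by
            rw [norm_sub_rev]
            field_simp
    calc ‖Binv t' x (Gt t' x - Gt t' z) + Binv t' x (Hess t' z w - Hess t' x w)‖
        ≤ ‖Binv t' x (Gt t' x - Gt t' z)‖ + ‖Binv t' x (Hess t' z w - Hess t' x w)‖ :=
          norm_add_le _ _
      _ ≤ C2 / m * ‖x - z‖ + C0 * C1 / m ^ 2 * ‖x - z‖ := by gcongr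
      _ = (C0 * C1 / m ^ 2 + C2 / m) * ‖x - z‖ := by ring
  -- the prediction step
  have htk1 : ∀ k : ℕ, tk (k + 1) = tk k + h := by
    intro k
    rw [htk, htk]
    push_cast
    ring
  have hpredErr : ∀ k : ℕ, ‖ypred k - ystar (tk (k + 1))‖
      ≤ σ * ‖y k - ystar (tk k)‖ + (h * C0 * ε / m + h ^ 2 * Δ) := by
    intro k
    set t' : ℝ := tk k with ht'def
    set x : E n := y k with hxdef
    set g : E n := Gt t' x with hgdef
    -- approximate Newton step error
    have hNewt : ‖Binv t' x g - H k g‖ ≤ ε * C0 / m := by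
      have e1 : Binv t' x g - H k g = Binv t' x (g - Hess t' x (H k g)) := by
        rw [map_sub, hBA t' x]
      have e2 : g - Hess t' x (H k g)
          = (ContinuousLinearMap.id ℝ (E n) - (Hess t' x).comp (H k)) g := by
        simp [ContinuousLinearMap.sub_apply]
      have e3 : ‖g - Hess t' x (H k g)‖ ≤ ε * ‖g‖ := by
        rw [e2]
        calc ‖(ContinuousLinearMap.id ℝ (E n) - (Hess t' x).comp (H k)) g‖
            ≤ ‖ContinuousLinearMap.id ℝ (E n) - (Hess t' x).comp (H k)‖ * ‖g‖ :=
              ContinuousLinearMap.le_opNorm _ _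
          _ ≤ ε * ‖g‖ := by
              gcongr <;> exact hHerr k
      calc ‖Binv t' x g - H k g‖ = ‖Binv t' x (g - Hess t' x (H k g))‖ := by rw [e1]
        _ ≤ ‖g - Hess t' x (H k g)‖ / m := hBn t' x _
        _ ≤ ε * ‖g‖ / m := by gcongr <;> exact hm.le
        _ ≤ ε * C0 / m := by
            gcongr <;> first
              | exact hC0b t' x
              | exact hm.le
    -- decomposition
    have hdecomp : ypred k - ystar (tk (k + 1))
        = (x - ystar t') + h • (Binv t' x g - H k g) + h • (ψ t' - Binv t' x g)
          + ((ystar t' - h • ψ t') - ystar (t' + h)) := by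
      rw [hpred k, htk1 k]
      simp only [smul_sub]
      abel
    rw [hdecomp]
    have hT4 : ‖(ystar t' - h • ψ t') - ystar (t' + h)‖ ≤ h ^ 2 * Δ := by
      rw [norm_sub_rev]
      exact hE' t'
    have hT3 : ‖h • (ψ t' - Binv t' x g)‖
        ≤ h * ((C0 * C1 / m ^ 2 + C2 / m) * ‖x - ystar t'‖) := by
      rw [norm_smul, Real.norm_eq_abs, abs_of_pos hh]
      gcongr
      have := hφLip t' (ystar t') x
      rw [norm_sub_rev] at this
      calc ‖ψ t' - Binv t' x g‖
          = ‖Binv t' x (Gt t' x) - Binv t' (ystar t') (Gt t' (ystar t'))‖ := by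
            rw [norm_sub_rev, hψdef, hgdef]
        _ ≤ (C0 * C1 / m ^ 2 + C2 / m) * ‖x - ystar t'‖ := by
            have := hφLip t' x (ystar t')
            exact this
    have hT2 : ‖h • (Binv t' x g - H k g)‖ ≤ h * C0 * ε / m := by
      rw [norm_smul, Real.norm_eq_abs, abs_of_pos hh]
      calc h * ‖Binv t' x g - H k g‖ ≤ h * (ε * C0 / m) := by
            gcongr <;> exact hNewt
        _ = h * C0 * ε / m := by ring
    calc ‖(x - ystar t') + h • (Binv t' x g - H k g) + h • (ψ t' - Binv t' x g)
          + ((ystar t' - h • ψ t') - ystar (t' + h))‖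
        ≤ ‖(x - ystar t') + h • (Binv t' x g - H k g) + h • (ψ t' - Binv t' x g)‖
          + ‖(ystar t' - h • ψ t') - ystar (t' + h)‖ := norm_add_le _ _
      _ ≤ (‖(x - ystar t') + h • (Binv t' x g - H k g)‖ + ‖h • (ψ t' - Binv t' x g)‖)
          + ‖(ystar t' - h • ψ t') - ystar (t' + h)‖ := by
          gcongr
          exact norm_add_le _ _
      _ ≤ ((‖x - ystar t'‖ + ‖h • (Binv t' x g - H k g)‖) + ‖h • (ψ t' - Binv t' x g)‖)
          + ‖(ystar t' - h • ψ t') - ystar (t' + h)‖ := by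
          gcongr
          exact norm_add_le _ _
      _ ≤ ((‖x - ystar t'‖ + h * C0 * ε / m)
            + h * ((C0 * C1 / m ^ 2 + C2 / m) * ‖x - ystar t'‖)) + h ^ 2 * Δ := by
          gcongr
      _ = σ * ‖x - ystar t'‖ + (h * C0 * ε / m + h ^ 2 * Δ) := by
          rw [hσ]; ring
  -- the correction step contracts
  have hcontract : ∀ k : ℕ, ‖y (k + 1) - ystar (tk (k + 1))‖
      ≤ ρ * ‖ypred k - ystar (tk (k + 1))‖ := by
    intro k
    set s' : ℝ := tk (k + 1) with hs'def
    set x' : E n := ystar s' with hx'def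
    set d : E n := ypred k - x' with hddef
    have hP : ∀ τ : ℝ, HasDerivAt
        (fun τ : ℝ => (x' + τ • d) - γ • Fgrad s' (x' + τ • d))
        (d - γ • Hess s' (x' + τ • d) d) τ := by
      intro τ
      have h1 : HasDerivAt (fun τ : ℝ => x' + τ • d) d τ := by
        simpa using ((hasDerivAt_id τ).smul_const d).const_add x'
      have h2 : HasDerivAt (fun τ : ℝ => Fgrad s' (x' + τ • d))
          (Hess s' (x' + τ • d) d) τ := by
        have := pc_pathD hG1 hhess ht s' 0 x' d τ
        simpa only [mul_zero, add_zero, zero_smul, zero_add] using this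
      exact h1.sub (h2.const_smul γ)
    have hbnd : ∀ τ : ℝ, ‖d - γ • Hess s' (x' + τ • d) d‖ ≤ ρ * ‖d‖ := by
      intro τ
      rw [hρ]
      exact pc_contraction_vec m L' γ hm hmL hγ (Hess s' (x' + τ • d))
        (hsym s' (x' + τ • d)) (hstrong s' (x' + τ • d)) (hsmooth s' (x' + τ • d)) d
    have hmvt := norm_image_sub_le_of_norm_deriv_le_segment_01'
      (f := fun τ : ℝ => (x' + τ • d) - γ • Fgrad s' (x' + τ • d))
      (f' := fun τ : ℝ => d - γ • Hess s' (x' + τ • d) d)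
      (fun τ _ => (hP τ).hasDerivWithinAt) (fun τ _ => hbnd τ)
    have e1 : x' + (1 : ℝ) • d - γ • Fgrad s' (x' + (1 : ℝ) • d)
        = y (k + 1) := by
      have hxd : x' + (1 : ℝ) • d = ypred k := by rw [one_smul, hddef]; abel
      rw [hxd, hcorr k, hs'def]
    have e0 : x' + (0 : ℝ) • d - γ • Fgrad s' (x' + (0 : ℝ) • d) = x' := by
      rw [zero_smul, add_zero, hx'def, hgrad0 s']
      simp
    simp only [e1, e0] at hmvt
    exact hmvt
  -- one-step recursion
  have hrec : ∀ k : ℕ, ‖y (k + 1) - ystar (tk (k + 1))‖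
      ≤ (ρ * σ) * ‖y k - ystar (tk k)‖ + ρ * (h * C0 * ε / m + h ^ 2 * Δ) := by
    intro k
    calc ‖y (k + 1) - ystar (tk (k + 1))‖ ≤ ρ * ‖ypred k - ystar (tk (k + 1))‖ :=
          hcontract k
      _ ≤ ρ * (σ * ‖y k - ystar (tk k)‖ + (h * C0 * ε / m + h ^ 2 * Δ)) := by
          gcongr
          exact hpredErr k
      _ = (ρ * σ) * ‖y k - ystar (tk k)‖ + ρ * (h * C0 * ε / m + h ^ 2 * Δ) := by ring
  -- geometric induction
  have h1r : 0 < 1 - ρ * σ := by linarith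
  have hboundk : ∀ k : ℕ, ‖y k - ystar (tk k)‖
      ≤ (ρ * σ) ^ k * ‖y 0 - ystar (tk 0)‖
        + ρ * (h * C0 * ε / m + h ^ 2 * Δ) * (1 - (ρ * σ) ^ k) / (1 - ρ * σ) := by
    intro k
    induction k with
    | zero => simp
    | succ k ih =>
      calc ‖y (k + 1) - ystar (tk (k + 1))‖
          ≤ (ρ * σ) * ‖y k - ystar (tk k)‖ + ρ * (h * C0 * ε / m + h ^ 2 * Δ) := hrec k
        _ ≤ (ρ * σ) * ((ρ * σ) ^ k * ‖y 0 - ystar (tk 0)‖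
              + ρ * (h * C0 * ε / m + h ^ 2 * Δ) * (1 - (ρ * σ) ^ k) / (1 - ρ * σ))
            + ρ * (h * C0 * ε / m + h ^ 2 * Δ) := by
            gcongr
        _ = (ρ * σ) ^ (k + 1) * ‖y 0 - ystar (tk 0)‖
            + ρ * (h * C0 * ε / m + h ^ 2 * Δ) * (1 - (ρ * σ) ^ (k + 1)) / (1 - ρ * σ) := by
            field_simp
            ring
  refine ⟨hboundk, ?_⟩
  -- limsup bound
  have hpow : Filter.Tendsto (fun k : ℕ => (ρ * σ) ^ k) Filter.atTop (nhds 0) :=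
    tendsto_pow_atTop_nhds_zero_of_lt_one hr0 hρσ
  have htendv : Filter.Tendsto (fun k : ℕ => (ρ * σ) ^ k * ‖y 0 - ystar (tk 0)‖
      + ρ * (h * C0 * ε / m + h ^ 2 * Δ) * (1 - (ρ * σ) ^ k) / (1 - ρ * σ))
      Filter.atTop
      (nhds (0 * ‖y 0 - ystar (tk 0)‖
        + ρ * (h * C0 * ε / m + h ^ 2 * Δ) * (1 - 0) / (1 - ρ * σ))) := by
    apply Filter.Tendsto.add
    · exact hpow.mul_const _
    · apply Filter.Tendsto.div_const
      exact (tendsto_const_nhds.sub hpow).const_mul _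
  have hlim : Filter.limsup (fun k : ℕ => (ρ * σ) ^ k * ‖y 0 - ystar (tk 0)‖
      + ρ * (h * C0 * ε / m + h ^ 2 * Δ) * (1 - (ρ * σ) ^ k) / (1 - ρ * σ))
      Filter.atTop
      = 0 * ‖y 0 - ystar (tk 0)‖
        + ρ * (h * C0 * ε / m + h ^ 2 * Δ) * (1 - 0) / (1 - ρ * σ) :=
    htendv.limsup_eq
  have hle := Filter.limsup_le_limsup (Filter.Eventually.of_forall hboundk)
    (Filter.isCoboundedUnder_le_of_le Filter.atTop (x := 0) fun k => norm_nonneg _)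
    htendv.isBoundedUnder_le
  rw [hlim] at hle
  calc Filter.limsup (fun k => ‖y k - ystar (tk k)‖) Filter.atTop
      ≤ 0 * ‖y 0 - ystar (tk 0)‖
        + ρ * (h * C0 * ε / m + h ^ 2 * Δ) * (1 - 0) / (1 - ρ * σ) := hle
    _ = ρ / (1 - ρ * σ) * (h * C0 * ε / m + h ^ 2 * Δ) := by
        ring
end

section
/- Let the DPC-N iterates be defined as follows: given y_0 ∈ E and sequences of symmetric positive semidefinite linear maps H_k and Ĥ_k on E satisfying ‖id − (∇²_y F(t_k, y_k)) ∘ H_k‖ ≤ ε and ‖id − (∇²_y F(t_{k+1}, y_{k+1|k})) ∘ Ĥ_k‖ ≤ ε' for all k, set y_{k+1|k} := y_k − h · H_k (∂_t ∇_y F(t_k, y_k)) (prediction) and y_{k+1} := y_{k+1|k} − γ · Ĥ_k (∇_y F(t_{k+1}, y_{k+1|k})) (approximate damped Newton correction) with step-size γ ∈ (0,1]. Define φ := hC0ε/m + h²Δ, α₂ := γC1σ²/(2m), α₁ := σ·(γC1φ/m + γL'ε'/m + 1 − γ), α₀ := φ·(γC1φ/(2m) + γL'ε'/m + 1 − γ).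 Suppose α₂ > 0 and there exists τ ∈ (0,1) such that α₁ < τ, ‖y_0 − y*(t_0)‖ ≤ (τ − α₁)/α₂, and τ(τ − α₁)/α₂ + α₀ ≤ (τ − α₁)/α₂. Then for every k ≥ 0: ‖y_k − y*(t_k)‖ ≤ τ^k ‖y_0 − y*(t_0)‖ + α₀ (1 − τ^k)/(1 − τ); in particular limsup_{k→∞} ‖y_k − y*(t_k)‖ ≤ α₀/(1 − τ). -/
open scoped InnerProductSpace

local notation "E" n => EuclideanSpace ℝ (Fin n)

lemma aux_opnorm_le {n : ℕ} {L : ℝ} (hL : 0 ≤ L) (A : (E n) →L[ℝ] (E n))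
    (hsym : ∀ v w, ⟪A v, w⟫_ℝ = ⟪A w, v⟫_ℝ)
    (h0 : ∀ v, 0 ≤ ⟪A v, v⟫_ℝ)
    (hLb : ∀ v, ⟪A v, v⟫_ℝ ≤ L * ‖v‖ ^ 2) : ‖A‖ ≤ L := by
  have key : ∀ v w : E n, ⟪A v, w⟫_ℝ ≤ L * (‖v‖ * ‖w‖) := by
    intro v w
    rcases eq_or_ne v 0 with rfl | hv
    · simp
    rcases eq_or_ne w 0 with rfl | hw
    · simp
    have hvn : 0 < ‖v‖ := norm_pos_iff.mpr hv
    have hwn : 0 < ‖w‖ := norm_pos_iff.mpr hw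
    set t : ℝ := ‖v‖ / ‖w‖ with htdef
    have htpos : 0 < t := div_pos hvn hwn
    have htw : t * ‖w‖ = ‖v‖ := div_mul_cancel₀ _ (ne_of_gt hwn)
    have hpol : 4 * ⟪A v, t • w⟫_ℝ ≤ L * ‖v + t • w‖ ^ 2 := by
      have e1 : 4 * ⟪A v, t • w⟫_ℝ
          = ⟪A (v + t • w), v + t • w⟫_ℝ - ⟪A (v - t • w), v - t • w⟫_ℝ := by
        have h1 := hsym (t • w) v
        simp only [map_add, map_sub, inner_add_left, inner_add_right,
          inner_sub_left, inner_sub_right]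
        linarith
      have e2 : ⟪A (v - t • w), v - t • w⟫_ℝ ≥ 0 := h0 _
      have e3 := hLb (v + t • w)
      linarith
    have hnb : ‖v + t • w‖ ≤ 2 * ‖v‖ := by
      calc ‖v + t • w‖ ≤ ‖v‖ + ‖t • w‖ := norm_add_le _ _
        _ = ‖v‖ + t * ‖w‖ := by rw [norm_smul, Real.norm_eq_abs, abs_of_pos htpos]
        _ = 2 * ‖v‖ := by rw [htw]; ring
    have hsq : ‖v + t • w‖ ^ 2 ≤ (2 * ‖v‖) ^ 2 := by
      have := norm_nonneg (v + t • w)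
      nlinarith
    have h4 : 4 * (t * ⟪A v, w⟫_ℝ) ≤ L * (2 * ‖v‖) ^ 2 := by
      rw [real_inner_smul_right] at hpol
      nlinarith [mul_le_mul_of_nonneg_left hsq hL]
    have h5 : t * ⟪A v, w⟫_ℝ ≤ L * ‖v‖ ^ 2 := by nlinarith
    have h6 : t * ⟪A v, w⟫_ℝ ≤ (L * (‖v‖ * ‖w‖)) * t := by
      calc t * ⟪A v, w⟫_ℝ ≤ L * ‖v‖ ^ 2 := h5
        _ = (L * (‖v‖ * ‖w‖)) * t := by rw [← htw]; ring
    have := le_of_mul_le_mul_right (by linarith [h6] : ⟪A v, w⟫_ℝ * t ≤ (L * (‖v‖ * ‖w‖)) * t) htpos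
    exact this
  refine A.opNorm_le_bound hL (fun v => ?_)
  rcases eq_or_lt_of_le (norm_nonneg (A v)) with h' | hpos
  · rw [← h']; positivity
  · have hk := key v (A v)
    rw [real_inner_self_eq_norm_sq] at hk
    nlinarith

lemma aux_inv {n : ℕ} {m : ℝ} (hm : 0 < m) (A : (E n) →L[ℝ] (E n))
    (hA : ∀ v, m * ‖v‖ ^ 2 ≤ ⟪A v, v⟫_ℝ) :
    ∃ B : (E n) →L[ℝ] (E n), (∀ w, A (B w) = w) ∧ (∀ v, B (A v) = v) ∧
      ∀ w, ‖B w‖ ≤ ‖w‖ / m := by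
  have hker : ∀ v, A v = 0 → v = 0 := by
    intro v hv
    have h1 := hA v
    rw [hv, inner_zero_left] at h1
    have h2 : ‖v‖ = 0 := by
      by_contra hne
      have hpos : 0 < ‖v‖ := (norm_nonneg v).lt_of_ne (Ne.symm hne)
      nlinarith [mul_pos hm (mul_pos hpos hpos)]
    exact norm_eq_zero.mp h2
  have hinj : Function.Injective A := by
    intro a b hab
    have h1 : A (a - b) = 0 := by rw [map_sub, hab, sub_self]
    exact sub_eq_zero.mp (hker _ h1)
  have hinjl : Function.Injective (A : (E n) →ₗ[ℝ] (E n)) := hinj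
  have hsurj := LinearMap.injective_iff_surjective.mp hinjl
  let eqv := LinearEquiv.ofBijective (A : (E n) →ₗ[ℝ] (E n)) ⟨hinjl, hsurj⟩
  let B := LinearMap.toContinuousLinearMap (eqv.symm : (E n) →ₗ[ℝ] (E n))
  have hBA : ∀ v, B (A v) = v := fun v => eqv.symm_apply_apply v
  have hAB : ∀ w, A (B w) = w := fun w => eqv.apply_symm_apply w
  refine ⟨B, hAB, hBA, fun w => ?_⟩
  have h1 := hA (B w)
  rw [hAB w] at h1
  have h2 : ⟪w, B w⟫_ℝ ≤ ‖w‖ * ‖B w‖ := real_inner_le_norm _ _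
  rcases eq_or_lt_of_le (norm_nonneg (B w)) with h' | hpos
  · rw [← h']; positivity
  · rw [le_div_iff₀ hm]; nlinarith

-- symmetry of the Hessian
lemma aux_symm {n : ℕ} (F : ℝ → (E n) → ℝ) (Fgrad : ℝ → (E n) → (E n))
    (Hess : ℝ → (E n) → (E n) →L[ℝ] (E n))
    (hgrad : ∀ t y, HasGradientAt (F t) (Fgrad t y) y)
    (hhess : ∀ t y, HasFDerivAt (Fgrad t) (Hess t y) y) :
    ∀ t y v w, ⟪Hess t y v, w⟫_ℝ = ⟪Hess t y w, v⟫_ℝ := by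
  intro t y v w
  let J : (E n) →L[ℝ] ((E n) →L[ℝ] ℝ) := innerSL ℝ
  have hf' : ∀ z, HasFDerivAt (F t) (J (Fgrad t z)) z := fun z => (hgrad t z).hasFDerivAt
  have hf'' : HasFDerivAt (fun z => J (Fgrad t z)) (J.comp (Hess t y)) y :=
    (J.hasFDerivAt).comp y (hhess t y)
  have hs := second_derivative_symmetric hf' hf'' v w
  exact hs

-- mean value: time-Lipschitz of a function with bounded time derivative
lemma aux_time_lip {n : ℕ} {C : ℝ} (f f' : ℝ → E n)
    (hf : ∀ t, HasDerivAt f (f' t) t) (hb : ∀ t, ‖f' t‖ ≤ C) :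
    ∀ t t', ‖f t' - f t‖ ≤ C * |t' - t| := by
  intro t t'
  have := Convex.norm_image_sub_le_of_norm_hasDerivWithin_le
    (f := f) (f' := f') (s := Set.univ)
    (fun x _ => (hf x).hasDerivWithinAt) (fun x _ => hb x)
    convex_univ (Set.mem_univ t) (Set.mem_univ t')
  simpa [Real.norm_eq_abs] using this

-- time-Lipschitz of the Hessian (constant C2)
lemma aux_hess_time {n : ℕ} {C2 : ℝ} (hC2 : 0 ≤ C2)
    (Fgrad : ℝ → (E n) → (E n)) (Hess : ℝ → (E n) → (E n) →L[ℝ] (E n))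
    (Gt Gtt : ℝ → (E n) → (E n))
    (hhess : ∀ t y, HasFDerivAt (Fgrad t) (Hess t y) y)
    (ht : ∀ t y, HasDerivAt (fun s => Fgrad s y) (Gt t y) t)
    (htt : ∀ t y, HasDerivAt (fun s => Gt s y) (Gtt t y) t)
    (hC2b : ∀ t y y', ‖Gt t y - Gt t y'‖ ≤ C2 * ‖y - y'‖) :
    ∀ t t' y, ‖Hess t' y - Hess t y‖ ≤ C2 * |t' - t| := by
  intro t t' y
  have hcont : ∀ z, Continuous (fun s => Gt s z) := by
    intro z
    rw [continuous_iff_continuousAt]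
    exact fun s => (htt s z).continuousAt
  have hint : ∀ z : E n, IntervalIntegrable (fun s => Gt s z) MeasureTheory.volume t t' :=
    fun z => (hcont z).intervalIntegrable t t'
  have hftc : ∀ z : E n, (∫ s in t..t', Gt s z) = Fgrad t' z - Fgrad t z := by
    intro z
    exact intervalIntegral.integral_eq_sub_of_hasDerivAt (fun s _ => ht s z) (hint z)
  set W : (E n) → E n := fun z => Fgrad t' z - Fgrad t z with hW
  have hWd : HasFDerivAt W (Hess t' y - Hess t y) y := (hhess t' y).sub (hhess t y)
  have hK : 0 ≤ C2 * |t' - t| := mul_nonneg hC2 (abs_nonneg _)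
  have hlip : LipschitzWith (Real.toNNReal (C2 * |t' - t|)) W := by
    apply LipschitzWith.of_dist_le_mul
    intro a b
    rw [dist_eq_norm, dist_eq_norm, Real.coe_toNNReal _ hK]
    have hsub : W a - W b = ∫ s in t..t', (Gt s a - Gt s b) := by
      rw [intervalIntegral.integral_sub (hint a) (hint b), hftc a, hftc b]
    rw [hsub]
    have := intervalIntegral.norm_integral_le_of_norm_le_const
      (f := fun s => Gt s a - Gt s b) (a := t) (b := t') (C := C2 * ‖a - b‖)
      (fun s _ => hC2b s a b)
    calc ‖∫ s in t..t', (Gt s a - Gt s b)‖ ≤ C2 * ‖a - b‖ * |t' - t| := this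
      _ = C2 * |t' - t| * ‖a - b‖ := by ring
  have := hWd.le_of_lipschitz hlip
  rwa [Real.coe_toNNReal _ hK] at this

-- strong monotonicity of a gradient field
lemma aux_strong_mono {n : ℕ} {m C1 : ℝ} (hm : 0 < m) (hC1' : 0 ≤ C1) (G : (E n) → (E n))
    (A : (E n) → (E n) →L[ℝ] (E n))
    (hG : ∀ z, HasFDerivAt G (A z) z)
    (hAlow : ∀ z v, m * ‖v‖ ^ 2 ≤ ⟪A z v, v⟫_ℝ)
    (hAlip : ∀ z z', ‖A z - A z'‖ ≤ C1 * ‖z - z'‖) :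
    ∀ a b, m * ‖a - b‖ ≤ ‖G a - G b‖ := by
  intro a b
  set δ : E n := a - b with hδ
  set ψ' : ℝ → ℝ := fun u => ⟪δ, A (b + u • δ) δ⟫_ℝ with hψ'
  have hcur : ∀ u : ℝ, HasDerivAt (fun u : ℝ => b + u • δ) δ u := by
    intro u
    simpa using (((hasDerivAt_id u).smul_const δ).const_add b)
  have hψ : ∀ u, HasDerivAt (fun u => ⟪δ, G (b + u • δ)⟫_ℝ) (ψ' u) u := by
    intro u
    have h1 : HasDerivAt (fun u : ℝ => G (b + u • δ)) (A (b + u • δ) δ) u :=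
      (hG _).comp_hasDerivAt u (hcur u)
    exact ((innerSL ℝ δ).hasFDerivAt).comp_hasDerivAt u h1
  have hlipA : LipschitzWith (Real.toNNReal (C1 * ‖δ‖)) (fun u : ℝ => A (b + u • δ)) := by
    apply LipschitzWith.of_dist_le_mul
    intro u v
    rw [dist_eq_norm, dist_eq_norm, Real.coe_toNNReal _ (mul_nonneg hC1' (norm_nonneg δ))]
    have h1 : b + u • δ - (b + v • δ) = (u - v) • δ := by
      rw [sub_smul]; abel
    calc ‖A (b + u • δ) - A (b + v • δ)‖ ≤ C1 * ‖b + u • δ - (b + v • δ)‖ := hAlip _ _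
      _ = C1 * ‖δ‖ * ‖u - v‖ := by rw [h1, norm_smul, Real.norm_eq_abs]; ring
      _ = C1 * ‖δ‖ * dist u v := by rw [Real.dist_eq, Real.norm_eq_abs]
  have hcontψ : Continuous ψ' := by
    apply Continuous.inner continuous_const
    exact (hlipA.continuous).clm_apply continuous_const
  have hInt : IntervalIntegrable ψ' MeasureTheory.volume 0 1 := hcontψ.intervalIntegrable 0 1
  have heq : ∫ u in (0:ℝ)..1, ψ' u = ⟪δ, G a⟫_ℝ - ⟪δ, G b⟫_ℝ := by
    have h1 := intervalIntegral.integral_eq_sub_of_hasDerivAt (fun u _ => hψ u) hInt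
    have h2 : b + (1:ℝ) • δ = a := by rw [one_smul, hδ]; abel
    have h3 : b + (0:ℝ) • δ = b := by rw [zero_smul, add_zero]
    rw [h1, h2, h3]
  have hlow : m * ‖δ‖ ^ 2 ≤ ∫ u in (0:ℝ)..1, ψ' u := by
    have h1 : ∫ u in (0:ℝ)..1, (m * ‖δ‖ ^ 2) ≤ ∫ u in (0:ℝ)..1, ψ' u := by
      apply intervalIntegral.integral_mono_on zero_le_one intervalIntegrable_const hInt
      intro u _
      calc m * ‖δ‖ ^ 2 ≤ ⟪A (b + u • δ) δ, δ⟫_ℝ := hAlow _ _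
        _ = ψ' u := real_inner_comm _ _
    simpa using h1
  have hup : ⟪δ, G a⟫_ℝ - ⟪δ, G b⟫_ℝ ≤ ‖δ‖ * ‖G a - G b‖ := by
    calc ⟪δ, G a⟫_ℝ - ⟪δ, G b⟫_ℝ = ⟪δ, G a - G b⟫_ℝ := (inner_sub_right _ _ _).symm
      _ ≤ ‖δ‖ * ‖G a - G b‖ := real_inner_le_norm _ _
  have hkey : m * ‖δ‖ ^ 2 ≤ ‖δ‖ * ‖G a - G b‖ := by
    rw [heq] at hlow; linarith
  show m * ‖δ‖ ≤ ‖G a - G b‖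
  rcases (norm_nonneg δ).eq_or_lt with h' | hpos
  · rw [← h', mul_zero]; exact norm_nonneg _
  · nlinarith [hkey, hpos]

set_option maxHeartbeats 1000000 in
lemma aux_taylor {n : ℕ} {C1 C2 C3 : ℝ} (hC1 : 0 ≤ C1) (hC2 : 0 ≤ C2) (hC3 : 0 ≤ C3)
    (Fgrad : ℝ → (E n) → (E n)) (Hess : ℝ → (E n) → (E n) →L[ℝ] (E n))
    (Gt : ℝ → (E n) → (E n))
    (hG1 : ContDiff ℝ 1 (Function.uncurry Fgrad))
    (hhess : ∀ t y, HasFDerivAt (Fgrad t) (Hess t y) y)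
    (ht : ∀ t y, HasDerivAt (fun s => Fgrad s y) (Gt t y) t)
    (hGtT : ∀ t t' y, ‖Gt t' y - Gt t y‖ ≤ C3 * |t' - t|)
    (hGtY : ∀ t y y', ‖Gt t y - Gt t y'‖ ≤ C2 * ‖y - y'‖)
    (hHT : ∀ t t' y, ‖Hess t' y - Hess t y‖ ≤ C2 * |t' - t|)
    (hHY : ∀ t y y', ‖Hess t y - Hess t y'‖ ≤ C1 * ‖y - y'‖) :
    ∀ (t : ℝ) (y : E n) (s : ℝ) (y' : E n),
      ‖Fgrad s y' - Fgrad t y - Hess t y (y' - y) - (s - t) • Gt t y‖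
        ≤ C1 / 2 * ‖y' - y‖ ^ 2 + C2 * |s - t| * ‖y' - y‖ + C3 / 2 * (s - t) ^ 2 := by
  intro t y s y'
  set δt : ℝ := s - t with hδt
  set δy : E n := y' - y with hδy
  -- joint derivative of (uncurry Fgrad)
  have hD : ∀ p : ℝ × (E n), HasFDerivAt (Function.uncurry Fgrad)
      (((Hess p.1 p.2).comp (ContinuousLinearMap.snd ℝ ℝ (E n))) +
        ((ContinuousLinearMap.fst ℝ ℝ (E n)).smulRight (Gt p.1 p.2))) p := by
    intro p
    have hdiff : DifferentiableAt ℝ (Function.uncurry Fgrad) p :=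
      (hG1.differentiable one_ne_zero).differentiableAt
    have hD' := hdiff.hasFDerivAt
    set D' := fderiv ℝ (Function.uncurry Fgrad) p with hD'def
    have hcurve1 : HasDerivAt (fun u : ℝ => (u, p.2)) ((1:ℝ), (0 : E n)) p.1 :=
      (hasDerivAt_id p.1).prodMk (hasDerivAt_const p.1 p.2)
    have h1 : HasDerivAt (fun u => Function.uncurry Fgrad (u, p.2)) (D' (1, 0)) p.1 :=
      by have := hD'.comp_hasDerivAt p.1 hcurve1; exact this
    have e1 : Gt p.1 p.2 = D' (1, 0) := (ht p.1 p.2).unique h1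
    set L : (E n) →L[ℝ] ℝ × (E n) :=
      (0 : (E n) →L[ℝ] ℝ).prod (ContinuousLinearMap.id ℝ (E n)) with hL
    have hline : HasFDerivAt (fun z : E n => (p.1, z)) L p.2 :=
      (hasFDerivAt_const p.1 p.2).prodMk (hasFDerivAt_id p.2)
    have h2 : HasFDerivAt (fun z => Function.uncurry Fgrad (p.1, z)) (D'.comp L) p.2 :=
      by have := hD'.comp p.2 hline; exact this
    have e2 : Hess p.1 p.2 = D'.comp L := (hhess p.1 p.2).unique h2
    have hmaps : (((Hess p.1 p.2).comp (ContinuousLinearMap.snd ℝ ℝ (E n))) +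
        ((ContinuousLinearMap.fst ℝ ℝ (E n)).smulRight (Gt p.1 p.2))) = D' := by
      refine ContinuousLinearMap.ext fun q => ?_
      have hq : q = q.1 • ((1:ℝ), (0 : E n)) + L q.2 := by
        simp [L, Prod.ext_iff]
      calc (((Hess p.1 p.2).comp (ContinuousLinearMap.snd ℝ ℝ (E n))) +
          ((ContinuousLinearMap.fst ℝ ℝ (E n)).smulRight (Gt p.1 p.2))) q
          = Hess p.1 p.2 q.2 + q.1 • Gt p.1 p.2 := by
            simp [ContinuousLinearMap.add_apply, ContinuousLinearMap.comp_apply,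
              ContinuousLinearMap.smulRight_apply]
        _ = q.1 • (D' (1, 0)) + (D'.comp L) q.2 := by rw [← e1, ← e2]; abel
        _ = D' (q.1 • ((1:ℝ), (0 : E n)) + L q.2) := by
            rw [map_add, map_smul, ContinuousLinearMap.comp_apply]
        _ = D' q := by rw [← hq]
    rw [hmaps]; exact hD'
  -- the curve
  set c : ℝ → ℝ × (E n) := fun u => (t + u * δt, y + u • δy) with hc
  have hcurve : ∀ u : ℝ, HasDerivAt c (δt, δy) u := by
    intro u
    apply HasDerivAt.prodMk
    · exact (hasDerivAt_mul_const δt).const_add t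
    · simpa using ((hasDerivAt_id u).smul_const δy).const_add y
  set g' : ℝ → E n := fun u => Hess (c u).1 (c u).2 δy + δt • Gt (c u).1 (c u).2 with hg'
  have hgd : ∀ u, HasDerivAt (fun u => Function.uncurry Fgrad (c u)) (g' u) u := by
    intro u
    have h1 := (hD (c u)).comp_hasDerivAt u (hcurve u)
    simpa [g', Function.comp_def, ContinuousLinearMap.add_apply, ContinuousLinearMap.comp_apply,
      ContinuousLinearMap.smulRight_apply] using h1
  -- Lipschitz estimates along the curve
  have hlipH : ∀ u v : ℝ, ‖Hess (c u).1 (c u).2 - Hess (c v).1 (c v).2‖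
      ≤ (C2 * |δt| + C1 * ‖δy‖) * |u - v| := by
    intro u v
    have h1 : ‖Hess (c u).1 (c u).2 - Hess (c v).1 (c u).2‖ ≤ C2 * (|u - v| * |δt|) := by
      have := hHT (c v).1 (c u).1 (c u).2
      have harg : (c u).1 - (c v).1 = (u - v) * δt := by simp [c]; try ring
      calc ‖Hess (c u).1 (c u).2 - Hess (c v).1 (c u).2‖ ≤ C2 * |(c u).1 - (c v).1| := this
        _ = C2 * (|u - v| * |δt|) := by rw [harg, abs_mul]
    have h2 : ‖Hess (c v).1 (c u).2 - Hess (c v).1 (c v).2‖ ≤ C1 * (|u - v| * ‖δy‖) := by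
      have := hHY (c v).1 (c u).2 (c v).2
      have harg : (c u).2 - (c v).2 = (u - v) • δy := by
        simp [c, sub_smul]; try abel
      calc ‖Hess (c v).1 (c u).2 - Hess (c v).1 (c v).2‖ ≤ C1 * ‖(c u).2 - (c v).2‖ := this
        _ = C1 * (|u - v| * ‖δy‖) := by rw [harg, norm_smul, Real.norm_eq_abs]
    calc ‖Hess (c u).1 (c u).2 - Hess (c v).1 (c v).2‖
        ≤ ‖Hess (c u).1 (c u).2 - Hess (c v).1 (c u).2‖
          + ‖Hess (c v).1 (c u).2 - Hess (c v).1 (c v).2‖ := by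
          have : Hess (c u).1 (c u).2 - Hess (c v).1 (c v).2
              = (Hess (c u).1 (c u).2 - Hess (c v).1 (c u).2)
                + (Hess (c v).1 (c u).2 - Hess (c v).1 (c v).2) := by abel
          rw [this]; exact norm_add_le _ _
      _ ≤ C2 * (|u - v| * |δt|) + C1 * (|u - v| * ‖δy‖) := add_le_add h1 h2
      _ = (C2 * |δt| + C1 * ‖δy‖) * |u - v| := by ring
  have hlipG : ∀ u v : ℝ, ‖Gt (c u).1 (c u).2 - Gt (c v).1 (c v).2‖
      ≤ (C3 * |δt| + C2 * ‖δy‖) * |u - v| := by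
    intro u v
    have h1 : ‖Gt (c u).1 (c u).2 - Gt (c v).1 (c u).2‖ ≤ C3 * (|u - v| * |δt|) := by
      have := hGtT (c v).1 (c u).1 (c u).2
      have harg : (c u).1 - (c v).1 = (u - v) * δt := by simp [c]; try ring
      calc ‖Gt (c u).1 (c u).2 - Gt (c v).1 (c u).2‖ ≤ C3 * |(c u).1 - (c v).1| := this
        _ = C3 * (|u - v| * |δt|) := by rw [harg, abs_mul]
    have h2 : ‖Gt (c v).1 (c u).2 - Gt (c v).1 (c v).2‖ ≤ C2 * (|u - v| * ‖δy‖) := by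
      have := hGtY (c v).1 (c u).2 (c v).2
      have harg : (c u).2 - (c v).2 = (u - v) • δy := by
        simp [c, sub_smul]; try abel
      calc ‖Gt (c v).1 (c u).2 - Gt (c v).1 (c v).2‖ ≤ C2 * ‖(c u).2 - (c v).2‖ := this
        _ = C2 * (|u - v| * ‖δy‖) := by rw [harg, norm_smul, Real.norm_eq_abs]
    calc ‖Gt (c u).1 (c u).2 - Gt (c v).1 (c v).2‖
        ≤ ‖Gt (c u).1 (c u).2 - Gt (c v).1 (c u).2‖
          + ‖Gt (c v).1 (c u).2 - Gt (c v).1 (c v).2‖ := by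
          have : Gt (c u).1 (c u).2 - Gt (c v).1 (c v).2
              = (Gt (c u).1 (c u).2 - Gt (c v).1 (c u).2)
                + (Gt (c v).1 (c u).2 - Gt (c v).1 (c v).2) := by abel
          rw [this]; exact norm_add_le _ _
      _ ≤ C3 * (|u - v| * |δt|) + C2 * (|u - v| * ‖δy‖) := add_le_add h1 h2
      _ = (C3 * |δt| + C2 * ‖δy‖) * |u - v| := by ring
  -- continuity of g'
  have hKH : 0 ≤ C2 * |δt| + C1 * ‖δy‖ := by positivity
  have hKG : 0 ≤ C3 * |δt| + C2 * ‖δy‖ := by positivity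
  have hcontH : Continuous fun u => Hess (c u).1 (c u).2 := by
    refine LipschitzWith.continuous (K := Real.toNNReal (C2 * |δt| + C1 * ‖δy‖)) ?_
    apply LipschitzWith.of_dist_le_mul
    intro u v
    rw [dist_eq_norm, Real.dist_eq, Real.coe_toNNReal _ hKH]
    exact hlipH u v
  have hcontG : Continuous fun u => Gt (c u).1 (c u).2 := by
    refine LipschitzWith.continuous (K := Real.toNNReal (C3 * |δt| + C2 * ‖δy‖)) ?_
    apply LipschitzWith.of_dist_le_mul
    intro u v
    rw [dist_eq_norm, Real.dist_eq, Real.coe_toNNReal _ hKG]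
    exact hlipG u v
  have hcontg' : Continuous g' :=
    (hcontH.clm_apply continuous_const).add (hcontG.const_smul δt)
  have hInt : IntervalIntegrable g' MeasureTheory.volume 0 1 :=
    hcontg'.intervalIntegrable 0 1
  -- endpoints
  have hc0 : c 0 = (t, y) := by simp [c]
  have hc1 : c 1 = (s, y') := by
    simp only [c, one_mul, one_smul, hδt, hδy, Prod.mk.injEq]
    constructor <;> abel
  have hftc : ∫ u in (0:ℝ)..1, g' u = Fgrad s y' - Fgrad t y := by
    have h1 := intervalIntegral.integral_eq_sub_of_hasDerivAt (fun u _ => hgd u) hInt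
    rw [h1]
    have e1 : Function.uncurry Fgrad (c 1) = Fgrad s y' := by rw [hc1]; rfl
    have e0 : Function.uncurry Fgrad (c 0) = Fgrad t y := by rw [hc0]; rfl
    rw [e1, e0]
  have hg'0 : g' 0 = Hess t y δy + δt • Gt t y := by
    simp [g', c]
  -- the integral representation of the remainder
  have hrep : Fgrad s y' - Fgrad t y - Hess t y (y' - y) - (s - t) • Gt t y
      = ∫ u in (0:ℝ)..1, (g' u - g' 0) := by
    rw [intervalIntegral.integral_sub hInt intervalIntegrable_const, hftc,
      intervalIntegral.integral_const, hg'0]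
    simp only [sub_zero, one_smul, ← hδt, ← hδy]
    abel
  set K : ℝ := C3 * δt ^ 2 + 2 * C2 * |δt| * ‖δy‖ + C1 * ‖δy‖ ^ 2 with hK
  have hKnn : 0 ≤ K := by positivity
  -- pointwise bound on the remainder integrand
  have hptb : ∀ u : ℝ, 0 ≤ u → ‖g' u - g' 0‖ ≤ K * u := by
    intro u hu
    have habs : |u - 0| = u := by rw [sub_zero, abs_of_nonneg hu]
    have h1 : ‖(Hess (c u).1 (c u).2 - Hess (c 0).1 (c 0).2) δy‖
        ≤ (C2 * |δt| + C1 * ‖δy‖) * u * ‖δy‖ := by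
      calc ‖(Hess (c u).1 (c u).2 - Hess (c 0).1 (c 0).2) δy‖
          ≤ ‖Hess (c u).1 (c u).2 - Hess (c 0).1 (c 0).2‖ * ‖δy‖ :=
            ContinuousLinearMap.le_opNorm _ _
        _ ≤ ((C2 * |δt| + C1 * ‖δy‖) * |u - 0|) * ‖δy‖ :=
            mul_le_mul_of_nonneg_right (hlipH u 0) (norm_nonneg _)
        _ = (C2 * |δt| + C1 * ‖δy‖) * u * ‖δy‖ := by rw [habs]
    have h2 : ‖δt • (Gt (c u).1 (c u).2 - Gt (c 0).1 (c 0).2)‖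
        ≤ |δt| * ((C3 * |δt| + C2 * ‖δy‖) * u) := by
      rw [norm_smul, Real.norm_eq_abs]
      refine mul_le_mul_of_nonneg_left ?_ (abs_nonneg δt)
      have := hlipG u 0
      rwa [habs] at this
    have hdecomp : g' u - g' 0 = (Hess (c u).1 (c u).2 - Hess (c 0).1 (c 0).2) δy
        + δt • (Gt (c u).1 (c u).2 - Gt (c 0).1 (c 0).2) := by
      simp only [g', ContinuousLinearMap.sub_apply, smul_sub]
      abel
    calc ‖g' u - g' 0‖ ≤ ‖(Hess (c u).1 (c u).2 - Hess (c 0).1 (c 0).2) δy‖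
          + ‖δt • (Gt (c u).1 (c u).2 - Gt (c 0).1 (c 0).2)‖ := by
          rw [hdecomp]; exact norm_add_le _ _
      _ ≤ (C2 * |δt| + C1 * ‖δy‖) * u * ‖δy‖ + |δt| * ((C3 * |δt| + C2 * ‖δy‖) * u) :=
          add_le_add h1 h2
      _ = K * u := by
          rw [hK, ← sq_abs δt]; ring
  -- integrate the bound
  have hintK : IntervalIntegrable (fun u : ℝ => K * u) MeasureTheory.volume 0 1 :=
    (continuous_const.mul continuous_id).intervalIntegrable 0 1
  have hae : ∀ᵐ u ∂(MeasureTheory.volume.restrict (Set.uIoc (0:ℝ) 1)),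
      ‖g' u - g' 0‖ ≤ K * u := by
    filter_upwards [MeasureTheory.ae_restrict_mem measurableSet_uIoc] with u hu
    rw [Set.uIoc_of_le (zero_le_one)] at hu
    exact hptb u (le_of_lt hu.1)
  have hnorm : ‖∫ u in (0:ℝ)..1, (g' u - g' 0)‖ ≤ |∫ u in (0:ℝ)..1, K * u| :=
    le_trans (intervalIntegral.norm_integral_le_of_norm_le zero_le_one
      ((MeasureTheory.ae_restrict_iff' measurableSet_Ioc).mp
        (by rwa [Set.uIoc_of_le zero_le_one] at hae)) hintK) (le_abs_self _)
  have hval : ∫ u in (0:ℝ)..1, K * u = K / 2 := by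
    rw [intervalIntegral.integral_const_mul, integral_id]
    ring
  rw [hrep]
  calc ‖∫ u in (0:ℝ)..1, (g' u - g' 0)‖ ≤ |∫ u in (0:ℝ)..1, K * u| := hnorm
    _ = K / 2 := by rw [hval, abs_of_nonneg (by linarith)]
    _ = C1 / 2 * ‖δy‖ ^ 2 + C2 * |δt| * ‖δy‖ + C3 / 2 * δt ^ 2 := by rw [hK]; ring
    _ = C1 / 2 * ‖y' - y‖ ^ 2 + C2 * |s - t| * ‖y' - y‖ + C3 / 2 * (s - t) ^ 2 := by
        rw [hδt, hδy]

set_option maxHeartbeats 1600000 in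
/-- Theorem 2, decentralized form: DPC-N iterates, with
approximate Hessian inverses H_k (prediction, error ε) and Ĥ_k (correction,
error ε') and damped Newton step-size γ ∈ (0,1], converge Q-linearly with
rate τ inside the attraction region, up to asymptotic error α₀/(1−τ). -/
theorem stmt_2 {n : ℕ} (hn : 1 ≤ n)
    (F : ℝ → (E n) → ℝ)
    (Fgrad : ℝ → (E n) → (E n))
    (Hess : ℝ → (E n) → (E n) →L[ℝ] (E n))
    (Gt Gtt : ℝ → (E n) → (E n))
    (m L' C0 C1 C2 C3 : ℝ)
    (hm : 0 < m) (hmL : m ≤ L')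
    (hC0 : 0 ≤ C0) (hC1 : 0 ≤ C1) (hC2 : 0 ≤ C2) (hC3 : 0 ≤ C3)
    (hF2 : ∀ t, ContDiff ℝ 2 (F t))
    (hG1 : ContDiff ℝ 1 (Function.uncurry Fgrad))
    (hgrad : ∀ t y, HasGradientAt (F t) (Fgrad t y) y)
    (hhess : ∀ t y, HasFDerivAt (Fgrad t) (Hess t y) y)
    (ht : ∀ t y, HasDerivAt (fun s => Fgrad s y) (Gt t y) t)
    (htt : ∀ t y, HasDerivAt (fun s => Gt s y) (Gtt t y) t)
    (hstrong : ∀ t y (v : E n), m * ‖v‖ ^ 2 ≤ ⟪Hess t y v, v⟫_ℝ)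
    (hsmooth : ∀ t y (v : E n), ⟪Hess t y v, v⟫_ℝ ≤ L' * ‖v‖ ^ 2)
    (hC0b : ∀ t y, ‖Gt t y‖ ≤ C0)
    (hC1b : ∀ t y y', ‖Hess t y - Hess t y'‖ ≤ C1 * ‖y - y'‖)
    (hC2b : ∀ t y y', ‖Gt t y - Gt t y'‖ ≤ C2 * ‖y - y'‖)
    (hC3b : ∀ t y, ‖Gtt t y‖ ≤ C3)
    (ystar : ℝ → E n)
    (hmin : ∀ t, IsMinOn (F t) Set.univ (ystar t))
    (h γ ε ε' Δ σ : ℝ) (hh : 0 < h) (hε : 0 ≤ ε) (hε' : 0 ≤ ε')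
    (hγ : 0 < γ) (hγ1 : γ ≤ 1)
    (hΔ : Δ = C0 ^ 2 * C1 / (2 * m ^ 3) + C0 * C2 / m ^ 2 + C3 / (2 * m))
    (hσ : σ = 1 + h * (C0 * C1 / m ^ 2 + C2 / m))
    (tk : ℕ → ℝ) (htk : ∀ k : ℕ, tk k = k * h)
    (y ypred : ℕ → E n)
    (H Hhat : ℕ → (E n) →L[ℝ] (E n))
    (hHsa : ∀ k, IsSelfAdjoint (H k))
    (hHpsd : ∀ k (v : E n), 0 ≤ ⟪H k v, v⟫_ℝ)
    (hHhatsa : ∀ k, IsSelfAdjoint (Hhat k))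
    (hHhatpsd : ∀ k (v : E n), 0 ≤ ⟪Hhat k v, v⟫_ℝ)
    (hHerr : ∀ k, ‖ContinuousLinearMap.id ℝ (E n) - (Hess (tk k) (y k)).comp (H k)‖ ≤ ε)
    (hHhaterr : ∀ k,
      ‖ContinuousLinearMap.id ℝ (E n) - (Hess (tk (k + 1)) (ypred k)).comp (Hhat k)‖ ≤ ε')
    (hpred : ∀ k, ypred k = y k - h • H k (Gt (tk k) (y k)))
    (hcorr : ∀ k, y (k + 1) = ypred k - γ • Hhat k (Fgrad (tk (k + 1)) (ypred k)))
    (φ α₀ α₁ α₂ τ : ℝ)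
    (hφ : φ = h * C0 * ε / m + h ^ 2 * Δ)
    (hα₂ : α₂ = γ * C1 * σ ^ 2 / (2 * m))
    (hα₁ : α₁ = σ * (γ * C1 * φ / m + γ * L' * ε' / m + 1 - γ))
    (hα₀ : α₀ = φ * (γ * C1 * φ / (2 * m) + γ * L' * ε' / m + 1 - γ))
    (hα₂pos : 0 < α₂)
    (hτ0 : 0 < τ) (hτ1 : τ < 1)
    (hτα₁ : α₁ < τ)
    (hinit : ‖y 0 - ystar (tk 0)‖ ≤ (τ - α₁) / α₂)
    (hstab : τ * ((τ - α₁) / α₂) + α₀ ≤ (τ - α₁) / α₂) :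
    (∀ k : ℕ, ‖y k - ystar (tk k)‖
        ≤ τ ^ k * ‖y 0 - ystar (tk 0)‖ + α₀ * (1 - τ ^ k) / (1 - τ))
    ∧ Filter.limsup (fun k => ‖y k - ystar (tk k)‖) Filter.atTop ≤ α₀ / (1 - τ) := by
  have hm0 : m ≠ 0 := ne_of_gt hm
  have hL'0 : 0 ≤ L' := le_trans hm.le hmL
  -- symmetry of the Hessian and operator norm bound
  have hsym := aux_symm F Fgrad Hess hgrad hhess
  have hHnorm : ∀ t y₀, ‖Hess t y₀‖ ≤ L' := fun t y₀ =>
    aux_opnorm_le hL'0 _ (hsym t y₀)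
      (fun v => le_trans (by positivity) (hstrong t y₀ v)) (hsmooth t y₀)
  -- pointwise inverses of the Hessian
  choose B hB1 hB2 hB3 using fun (t : ℝ) (y₀ : E n) => aux_inv hm (Hess t y₀) (hstrong t y₀)
  -- Lipschitz gradient
  have hgradlip : ∀ t (a b : E n), ‖Fgrad t a - Fgrad t b‖ ≤ L' * ‖a - b‖ := by
    intro t a b
    exact Convex.norm_image_sub_le_of_norm_hasFDerivWithin_le
      (fun x _ => (hhess t x).hasFDerivWithinAt) (fun x _ => hHnorm t x)
      convex_univ (Set.mem_univ b) (Set.mem_univ a)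
  -- strong monotonicity
  have hmono : ∀ t (a b : E n), m * ‖a - b‖ ≤ ‖Fgrad t a - Fgrad t b‖ := fun t =>
    aux_strong_mono hm hC1 (Fgrad t) (Hess t) (hhess t)
      (fun z v => hstrong t z v) (fun z z' => hC1b t z z')
  -- time-Lipschitz bounds
  have hGtT : ∀ t t' (y₀ : E n), ‖Gt t' y₀ - Gt t y₀‖ ≤ C3 * |t' - t| := fun t t' y₀ =>
    aux_time_lip (fun s => Gt s y₀) (fun s => Gtt s y₀)
      (fun s => htt s y₀) (fun s => hC3b s y₀) t t'
  have hFgT : ∀ t t' (y₀ : E n), ‖Fgrad t' y₀ - Fgrad t y₀‖ ≤ C0 * |t' - t| := fun t t' y₀ =>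
    aux_time_lip (fun s => Fgrad s y₀) (fun s => Gt s y₀)
      (fun s => ht s y₀) (fun s => hC0b s y₀) t t'
  have hHT : ∀ t t' (y₀ : E n), ‖Hess t' y₀ - Hess t y₀‖ ≤ C2 * |t' - t| :=
    aux_hess_time hC2 Fgrad Hess Gt Gtt hhess ht htt hC2b
  have htaylor := aux_taylor hC1 hC2 hC3 Fgrad Hess Gt hG1 hhess ht hGtT hC2b hHT hC1b
  -- the gradient vanishes at the minimizer
  have hgrad0 : ∀ t, Fgrad t (ystar t) = 0 := by
    intro t
    have hloc : IsLocalMin (F t) (ystar t) := (hmin t).isLocalMin (Filter.univ_mem)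
    have h0 := hloc.hasFDerivAt_eq_zero (hgrad t (ystar t)).hasFDerivAt
    have h1 := congrArg (fun (L : (E n) →L[ℝ] ℝ) =>
      (InnerProductSpace.toDual ℝ (E n)).symm L) h0
    simpa using h1
  -- the optimal trajectory is Lipschitz in time
  have hylip : ∀ t t', ‖ystar t' - ystar t‖ ≤ C0 / m * |t' - t| := by
    intro t t'
    have h1 := hmono t' (ystar t') (ystar t)
    rw [hgrad0 t', zero_sub, norm_neg] at h1
    have h3 := hFgT t t' (ystar t)
    rw [hgrad0 t, sub_zero] at h3
    have h4 : m * ‖ystar t' - ystar t‖ ≤ C0 * |t' - t| := le_trans h1 h3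
    rw [div_mul_eq_mul_div, le_div_iff₀ hm]
    linarith
  -- ============ per-step bound ============
  have estep : ∀ k, ‖y (k+1) - ystar (tk (k+1))‖
      ≤ α₂ * ‖y k - ystar (tk k)‖ ^ 2 + α₁ * ‖y k - ystar (tk k)‖ + α₀ := by
    intro k
    have hts : tk (k+1) - tk k = h := by rw [htk, htk]; push_cast; ring
    have habs : |tk (k+1) - tk k| = h := by rw [hts]; exact abs_of_pos hh
    set e := ‖y k - ystar (tk k)‖ with he
    have he0 : 0 ≤ e := norm_nonneg _
    -- ====== prediction ======
    set bk := Gt (tk k) (y k) with hbkdef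
    set bs := Gt (tk k) (ystar (tk k)) with hbsdef
    have hbk : ‖bk‖ ≤ C0 := hC0b _ _
    have hbs : ‖bs‖ ≤ C0 := hC0b _ _
    -- Taylor step for the trajectory
    have hδs : ‖ystar (tk (k+1)) - ystar (tk k)‖ ≤ C0 / m * h := by
      have := hylip (tk k) (tk (k+1)); rwa [habs] at this
    have hw : ‖Hess (tk k) (ystar (tk k)) (ystar (tk (k+1)) - ystar (tk k)) + h • bs‖
        ≤ C1 / 2 * (C0 / m * h) ^ 2 + C2 * h * (C0 / m * h) + C3 / 2 * h ^ 2 := by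
      have htay := htaylor (tk k) (ystar (tk k)) (tk (k+1)) (ystar (tk (k+1)))
      rw [hgrad0 (tk (k+1)), hgrad0 (tk k), hts, abs_of_pos hh] at htay
      have hne : (0:E n) - 0 - Hess (tk k) (ystar (tk k)) (ystar (tk (k+1)) - ystar (tk k))
          - h • bs
          = -(Hess (tk k) (ystar (tk k)) (ystar (tk (k+1)) - ystar (tk k)) + h • bs) := by
        abel
      rw [hne, norm_neg] at htay
      refine le_trans htay ?_
      have hsq : ‖ystar (tk (k+1)) - ystar (tk k)‖ ^ 2 ≤ (C0 / m * h) ^ 2 :=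
        pow_le_pow_left₀ (norm_nonneg _) hδs 2
      have hlin : C2 * h * ‖ystar (tk (k+1)) - ystar (tk k)‖ ≤ C2 * h * (C0 / m * h) :=
        mul_le_mul_of_nonneg_left hδs (by positivity)
      have hsq' : C1 / 2 * ‖ystar (tk (k+1)) - ystar (tk k)‖ ^ 2 ≤ C1 / 2 * (C0 / m * h) ^ 2 :=
        mul_le_mul_of_nonneg_left hsq (by positivity)
      linarith
    have hT3 : ‖ystar (tk (k+1)) - ystar (tk k) + h • B (tk k) (ystar (tk k)) bs‖
        ≤ h ^ 2 * Δ := by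
      have hid : ystar (tk (k+1)) - ystar (tk k) + h • B (tk k) (ystar (tk k)) bs
          = B (tk k) (ystar (tk k))
            (Hess (tk k) (ystar (tk k)) (ystar (tk (k+1)) - ystar (tk k)) + h • bs) := by
        rw [map_add, map_smul, hB2]
      rw [hid]
      refine le_trans (hB3 _ _ _) ?_
      rw [div_le_iff₀ hm]
      refine le_trans hw ?_
      have : C1 / 2 * (C0 / m * h) ^ 2 + C2 * h * (C0 / m * h) + C3 / 2 * h ^ 2
          = h ^ 2 * Δ * m := by rw [hΔ]; field_simp
      linarith [this.le]
    -- approximate-inverse error in the prediction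
    have hT2a : ‖H k bk - B (tk k) (y k) bk‖ ≤ ε * C0 / m := by
      have hid : H k bk - B (tk k) (y k) bk
          = B (tk k) (y k) ((Hess (tk k) (y k)) (H k bk) - bk) := by
        rw [map_sub, hB2]
      have h1 : (Hess (tk k) (y k)) (H k bk) - bk
          = -((ContinuousLinearMap.id ℝ (E n) - (Hess (tk k) (y k)).comp (H k)) bk) := by
        simp [ContinuousLinearMap.sub_apply, ContinuousLinearMap.comp_apply]
      have h2 : ‖(ContinuousLinearMap.id ℝ (E n) - (Hess (tk k) (y k)).comp (H k)) bk‖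
          ≤ ε * C0 :=
        le_trans (ContinuousLinearMap.le_opNorm _ _)
          (mul_le_mul (hHerr k) hbk (norm_nonneg _) hε)
      rw [hid]
      refine le_trans (hB3 _ _ _) ?_
      rw [h1, norm_neg]
      exact (div_le_div_iff_of_pos_right hm).mpr h2
    have hT2b : ‖B (tk k) (y k) bk - B (tk k) (y k) bs‖ ≤ C2 * e / m := by
      rw [← map_sub]
      refine le_trans (hB3 _ _ _) ?_
      exact (div_le_div_iff_of_pos_right hm).mpr (hC2b (tk k) (y k) (ystar (tk k)))
    have hT2c : ‖B (tk k) (y k) bs - B (tk k) (ystar (tk k)) bs‖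
        ≤ C1 * C0 / (m * m) * e := by
      have hid : B (tk k) (y k) bs - B (tk k) (ystar (tk k)) bs
          = B (tk k) (y k)
            ((Hess (tk k) (ystar (tk k)) - Hess (tk k) (y k)) (B (tk k) (ystar (tk k)) bs)) := by
        rw [ContinuousLinearMap.sub_apply, map_sub, hB1, hB2]
      have h2 : ‖(Hess (tk k) (ystar (tk k)) - Hess (tk k) (y k)) (B (tk k) (ystar (tk k)) bs)‖
          ≤ (C1 * e) * (C0 / m) := by
        have ha : ‖Hess (tk k) (ystar (tk k)) - Hess (tk k) (y k)‖ ≤ C1 * e := by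
          have := hC1b (tk k) (ystar (tk k)) (y k)
          rwa [norm_sub_rev (ystar (tk k)) (y k)] at this
        have hb : ‖B (tk k) (ystar (tk k)) bs‖ ≤ C0 / m :=
          le_trans (hB3 _ _ _) ((div_le_div_iff_of_pos_right hm).mpr hbs)
        calc ‖(Hess (tk k) (ystar (tk k)) - Hess (tk k) (y k)) (B (tk k) (ystar (tk k)) bs)‖
            ≤ ‖Hess (tk k) (ystar (tk k)) - Hess (tk k) (y k)‖ * ‖B (tk k) (ystar (tk k)) bs‖ :=
              ContinuousLinearMap.le_opNorm _ _
          _ ≤ (C1 * e) * (C0 / m) := by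
              apply mul_le_mul ha hb (norm_nonneg _) (by positivity)
      rw [hid]
      refine le_trans (hB3 _ _ _) ?_
      calc ‖(Hess (tk k) (ystar (tk k)) - Hess (tk k) (y k)) (B (tk k) (ystar (tk k)) bs)‖ / m
          ≤ ((C1 * e) * (C0 / m)) / m := (div_le_div_iff_of_pos_right hm).mpr h2
        _ = C1 * C0 / (m * m) * e := by field_simp
    -- prediction bound
    have hpredb : ‖ypred k - ystar (tk (k+1))‖ ≤ σ * e + φ := by
      have hid : ypred k - ystar (tk (k+1))
          = (y k - ystar (tk k)) - h • (H k bk - B (tk k) (y k) bk)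
            - h • (B (tk k) (y k) bk - B (tk k) (y k) bs)
            - h • (B (tk k) (y k) bs - B (tk k) (ystar (tk k)) bs)
            - (ystar (tk (k+1)) - ystar (tk k) + h • B (tk k) (ystar (tk k)) bs) := by
        rw [hpred k]
        simp only [smul_sub]
        abel
      rw [hid]
      have hn1 : ∀ v : E n, ‖h • v‖ = h * ‖v‖ := fun v => by
        rw [norm_smul, Real.norm_eq_abs, abs_of_pos hh]
      calc ‖(y k - ystar (tk k)) - h • (H k bk - B (tk k) (y k) bk)
            - h • (B (tk k) (y k) bk - B (tk k) (y k) bs)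
            - h • (B (tk k) (y k) bs - B (tk k) (ystar (tk k)) bs)
            - (ystar (tk (k+1)) - ystar (tk k) + h • B (tk k) (ystar (tk k)) bs)‖
          ≤ ‖(y k - ystar (tk k)) - h • (H k bk - B (tk k) (y k) bk)
            - h • (B (tk k) (y k) bk - B (tk k) (y k) bs)
            - h • (B (tk k) (y k) bs - B (tk k) (ystar (tk k)) bs)‖
            + ‖ystar (tk (k+1)) - ystar (tk k) + h • B (tk k) (ystar (tk k)) bs‖ :=
            norm_sub_le _ _
        _ ≤ (‖(y k - ystar (tk k)) - h • (H k bk - B (tk k) (y k) bk)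
            - h • (B (tk k) (y k) bk - B (tk k) (y k) bs)‖
            + ‖h • (B (tk k) (y k) bs - B (tk k) (ystar (tk k)) bs)‖)
            + ‖ystar (tk (k+1)) - ystar (tk k) + h • B (tk k) (ystar (tk k)) bs‖ :=
            add_le_add_left (norm_sub_le _ _) _
        _ ≤ ((‖(y k - ystar (tk k)) - h • (H k bk - B (tk k) (y k) bk)‖
            + ‖h • (B (tk k) (y k) bk - B (tk k) (y k) bs)‖)
            + ‖h • (B (tk k) (y k) bs - B (tk k) (ystar (tk k)) bs)‖)
            + ‖ystar (tk (k+1)) - ystar (tk k) + h • B (tk k) (ystar (tk k)) bs‖ := by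
            refine add_le_add_left (add_le_add_left (norm_sub_le _ _) _) _
        _ ≤ (((‖y k - ystar (tk k)‖ + ‖h • (H k bk - B (tk k) (y k) bk)‖)
            + ‖h • (B (tk k) (y k) bk - B (tk k) (y k) bs)‖)
            + ‖h • (B (tk k) (y k) bs - B (tk k) (ystar (tk k)) bs)‖)
            + ‖ystar (tk (k+1)) - ystar (tk k) + h • B (tk k) (ystar (tk k)) bs‖ := by
            refine add_le_add_left (add_le_add_left (add_le_add_left (norm_sub_le _ _) _) _) _
        _ ≤ (((e + h * (ε * C0 / m)) + h * (C2 * e / m)) + h * (C1 * C0 / (m * m) * e))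
            + h ^ 2 * Δ := by
            have b1 : ‖h • (H k bk - B (tk k) (y k) bk)‖ ≤ h * (ε * C0 / m) := by
              rw [hn1]; exact mul_le_mul_of_nonneg_left hT2a hh.le
            have b2 : ‖h • (B (tk k) (y k) bk - B (tk k) (y k) bs)‖ ≤ h * (C2 * e / m) := by
              rw [hn1]; exact mul_le_mul_of_nonneg_left hT2b hh.le
            have b3 : ‖h • (B (tk k) (y k) bs - B (tk k) (ystar (tk k)) bs)‖
                ≤ h * (C1 * C0 / (m * m) * e) := by
              rw [hn1]; exact mul_le_mul_of_nonneg_left hT2c hh.le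
            exact add_le_add (add_le_add (add_le_add (add_le_add (le_refl e) b1) b2) b3) hT3
        _ = σ * e + φ := by rw [hσ, hφ]; field_simp; ring
    -- ====== correction ======
    set p := ‖ypred k - ystar (tk (k+1))‖ with hpdef
    have hp0 : 0 ≤ p := norm_nonneg _
    have hgs0 : Fgrad (tk (k+1)) (ystar (tk (k+1))) = 0 := hgrad0 _
    have hgn : ‖Fgrad (tk (k+1)) (ypred k)‖ ≤ L' * p := by
      have := hgradlip (tk (k+1)) (ypred k) (ystar (tk (k+1)))
      rwa [hgs0, sub_zero] at this
    have hcentral : ‖(ypred k - ystar (tk (k+1)))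
        - B (tk (k+1)) (ypred k) (Fgrad (tk (k+1)) (ypred k))‖ ≤ C1 / (2 * m) * p ^ 2 := by
      have hid : (ypred k - ystar (tk (k+1)))
          - B (tk (k+1)) (ypred k) (Fgrad (tk (k+1)) (ypred k))
          = B (tk (k+1)) (ypred k)
            ((Hess (tk (k+1)) (ypred k)) (ypred k - ystar (tk (k+1)))
              - Fgrad (tk (k+1)) (ypred k)) := by
        rw [map_sub, hB2]
      rw [hid]
      refine le_trans (hB3 _ _ _) ?_
      have htay := htaylor (tk (k+1)) (ypred k) (tk (k+1)) (ystar (tk (k+1)))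
      rw [hgs0, sub_self, abs_zero, zero_smul, sub_zero] at htay
      have he2 : (0:E n) - Fgrad (tk (k+1)) (ypred k)
          - (Hess (tk (k+1)) (ypred k)) (ystar (tk (k+1)) - ypred k)
          = -(Fgrad (tk (k+1)) (ypred k)
              - (Hess (tk (k+1)) (ypred k)) (ypred k - ystar (tk (k+1)))) := by
        rw [map_sub, map_sub]; abel
      rw [he2, norm_neg, norm_sub_rev] at htay
      have hps : ‖ystar (tk (k+1)) - ypred k‖ = p := norm_sub_rev _ _
      rw [hps] at htay
      calc ‖(Hess (tk (k+1)) (ypred k)) (ypred k - ystar (tk (k+1)))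
            - Fgrad (tk (k+1)) (ypred k)‖ / m
          ≤ (C1 / 2 * p ^ 2 + C2 * 0 * p + C3 / 2 * 0 ^ 2) / m :=
            (div_le_div_iff_of_pos_right hm).mpr htay
        _ = C1 / (2 * m) * p ^ 2 := by field_simp; try ring
    have happrox : ‖B (tk (k+1)) (ypred k) (Fgrad (tk (k+1)) (ypred k))
        - Hhat k (Fgrad (tk (k+1)) (ypred k))‖ ≤ ε' * (L' * p) / m := by
      have hid : B (tk (k+1)) (ypred k) (Fgrad (tk (k+1)) (ypred k))
          - Hhat k (Fgrad (tk (k+1)) (ypred k))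
          = B (tk (k+1)) (ypred k)
            ((ContinuousLinearMap.id ℝ (E n) - (Hess (tk (k+1)) (ypred k)).comp (Hhat k))
              (Fgrad (tk (k+1)) (ypred k))) := by
        simp only [ContinuousLinearMap.sub_apply, ContinuousLinearMap.id_apply,
          ContinuousLinearMap.comp_apply, map_sub, hB2]
      rw [hid]
      refine le_trans (hB3 _ _ _) ?_
      have h1 : ‖(ContinuousLinearMap.id ℝ (E n) - (Hess (tk (k+1)) (ypred k)).comp (Hhat k))
          (Fgrad (tk (k+1)) (ypred k))‖ ≤ ε' * (L' * p) :=
        le_trans (ContinuousLinearMap.le_opNorm _ _)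
          (mul_le_mul (hHhaterr k) hgn (norm_nonneg _) hε')
      exact (div_le_div_iff_of_pos_right hm).mpr h1
    have hcorrb : ‖y (k+1) - ystar (tk (k+1))‖
        ≤ (1 - γ) * p + γ * (C1 / (2 * m) * p ^ 2) + γ * (ε' * (L' * p) / m) := by
      have hid : y (k+1) - ystar (tk (k+1))
          = (1 - γ) • (ypred k - ystar (tk (k+1)))
            + γ • ((ypred k - ystar (tk (k+1)))
                - B (tk (k+1)) (ypred k) (Fgrad (tk (k+1)) (ypred k)))
            + γ • (B (tk (k+1)) (ypred k) (Fgrad (tk (k+1)) (ypred k))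
                - Hhat k (Fgrad (tk (k+1)) (ypred k))) := by
        rw [hcorr k]
        simp only [smul_sub, sub_smul, one_smul]
        abel
      rw [hid]
      have h1γ : (0:ℝ) ≤ 1 - γ := by linarith
      calc ‖(1 - γ) • (ypred k - ystar (tk (k+1)))
            + γ • ((ypred k - ystar (tk (k+1)))
                - B (tk (k+1)) (ypred k) (Fgrad (tk (k+1)) (ypred k)))
            + γ • (B (tk (k+1)) (ypred k) (Fgrad (tk (k+1)) (ypred k))
                - Hhat k (Fgrad (tk (k+1)) (ypred k)))‖
          ≤ ‖(1 - γ) • (ypred k - ystar (tk (k+1)))‖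
            + ‖γ • ((ypred k - ystar (tk (k+1)))
                - B (tk (k+1)) (ypred k) (Fgrad (tk (k+1)) (ypred k)))‖
            + ‖γ • (B (tk (k+1)) (ypred k) (Fgrad (tk (k+1)) (ypred k))
                - Hhat k (Fgrad (tk (k+1)) (ypred k)))‖ :=
            le_trans (norm_add_le _ _)
              (add_le_add_left (norm_add_le _ _) _)
        _ ≤ (1 - γ) * p + γ * (C1 / (2 * m) * p ^ 2) + γ * (ε' * (L' * p) / m) := by
            refine add_le_add (add_le_add ?_ ?_) ?_
            · rw [norm_smul, Real.norm_eq_abs, abs_of_nonneg h1γ]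
            · rw [norm_smul, Real.norm_eq_abs, abs_of_pos hγ]
              exact mul_le_mul_of_nonneg_left hcentral hγ.le
            · rw [norm_smul, Real.norm_eq_abs, abs_of_pos hγ]
              exact mul_le_mul_of_nonneg_left happrox hγ.le
    -- ====== combine ======
    have h1γ : (0:ℝ) ≤ 1 - γ := by linarith
    have hq2 : p ^ 2 ≤ (σ * e + φ) ^ 2 := pow_le_pow_left₀ hp0 hpredb 2
    have hcoef1 : (0:ℝ) ≤ γ * (C1 / (2 * m)) := by positivity
    have hq : ‖y (k+1) - ystar (tk (k+1))‖
        ≤ (1 - γ) * (σ * e + φ) + γ * (C1 / (2 * m) * (σ * e + φ) ^ 2)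
          + γ * (ε' * (L' * (σ * e + φ)) / m) := by
      refine le_trans hcorrb (add_le_add (add_le_add ?_ ?_) ?_)
      · exact mul_le_mul_of_nonneg_left hpredb h1γ
      · exact mul_le_mul_of_nonneg_left
          (mul_le_mul_of_nonneg_left hq2 (by positivity)) hγ.le
      · have h2 : ε' * (L' * p) / m ≤ ε' * (L' * (σ * e + φ)) / m := by
          apply (div_le_div_iff_of_pos_right hm).mpr
          exact mul_le_mul_of_nonneg_left (mul_le_mul_of_nonneg_left hpredb hL'0) hε'
        exact mul_le_mul_of_nonneg_left h2 hγ.le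
    have hfinal_eq : (1 - γ) * (σ * e + φ) + γ * (C1 / (2 * m) * (σ * e + φ) ^ 2)
        + γ * (ε' * (L' * (σ * e + φ)) / m) = α₂ * e ^ 2 + α₁ * e + α₀ := by
      rw [hα₂, hα₁, hα₀]; field_simp; ring
    linarith [hq, hfinal_eq.le, hfinal_eq.ge]
  -- ============ induction ============
  have hα₂0 : α₂ ≠ 0 := ne_of_gt hα₂pos
  have hRτ : α₂ * ((τ - α₁) / α₂) + α₁ = τ := by field_simp; ring
  have h1τ : 0 < 1 - τ := by linarith
  have key : ∀ k, ‖y k - ystar (tk k)‖ ≤ (τ - α₁) / α₂ ∧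
      ‖y k - ystar (tk k)‖ ≤ τ ^ k * ‖y 0 - ystar (tk 0)‖ + α₀ * (1 - τ ^ k) / (1 - τ) := by
    intro k
    induction k with
    | zero => exact ⟨hinit, by simp⟩
    | succ k ih =>
      obtain ⟨ihR, ihB⟩ := ih
      have he0 : 0 ≤ ‖y k - ystar (tk k)‖ := norm_nonneg _
      have h1 : α₂ * ‖y k - ystar (tk k)‖ ≤ α₂ * ((τ - α₁) / α₂) :=
        mul_le_mul_of_nonneg_left ihR hα₂pos.le
      have hτe : α₂ * ‖y k - ystar (tk k)‖ ^ 2 + α₁ * ‖y k - ystar (tk k)‖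
          ≤ τ * ‖y k - ystar (tk k)‖ := by
        have h2 : α₂ * ‖y k - ystar (tk k)‖ + α₁ ≤ τ := by linarith
        calc α₂ * ‖y k - ystar (tk k)‖ ^ 2 + α₁ * ‖y k - ystar (tk k)‖
            = (α₂ * ‖y k - ystar (tk k)‖ + α₁) * ‖y k - ystar (tk k)‖ := by ring
          _ ≤ τ * ‖y k - ystar (tk k)‖ := mul_le_mul_of_nonneg_right h2 he0
      have hstep := estep k
      have hek1 : ‖y (k+1) - ystar (tk (k+1))‖ ≤ τ * ‖y k - ystar (tk k)‖ + α₀ := by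
        linarith
      constructor
      · have h2 : τ * ‖y k - ystar (tk k)‖ ≤ τ * ((τ - α₁) / α₂) :=
          mul_le_mul_of_nonneg_left ihR hτ0.le
        linarith
      · have h2 : τ * ‖y k - ystar (tk k)‖
            ≤ τ * (τ ^ k * ‖y 0 - ystar (tk 0)‖ + α₀ * (1 - τ ^ k) / (1 - τ)) :=
          mul_le_mul_of_nonneg_left ihB hτ0.le
        have h3 : τ * (τ ^ k * ‖y 0 - ystar (tk 0)‖ + α₀ * (1 - τ ^ k) / (1 - τ)) + α₀
            = τ ^ (k+1) * ‖y 0 - ystar (tk 0)‖ + α₀ * (1 - τ ^ (k+1)) / (1 - τ) := by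
          rw [pow_succ]
          field_simp
          ring
        linarith
  refine ⟨fun k => (key k).2, ?_⟩
  -- ============ limsup ============
  have hpow : Filter.Tendsto (fun k : ℕ => τ ^ k) Filter.atTop (nhds 0) :=
    tendsto_pow_atTop_nhds_zero_of_lt_one hτ0.le hτ1
  have hv : Filter.Tendsto
      (fun k : ℕ => τ ^ k * ‖y 0 - ystar (tk 0)‖ + α₀ * (1 - τ ^ k) / (1 - τ))
      Filter.atTop (nhds (0 * ‖y 0 - ystar (tk 0)‖ + α₀ * (1 - 0) / (1 - τ))) :=
    (hpow.mul_const _).add (((tendsto_const_nhds.sub hpow).const_mul α₀).div_const (1 - τ))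
  have hlimval : (0 * ‖y 0 - ystar (tk 0)‖ + α₀ * (1 - 0) / (1 - τ)) = α₀ / (1 - τ) := by
    ring
  rw [hlimval] at hv
  have hlb : Filter.IsBoundedUnder (· ≥ ·) Filter.atTop
      (fun k : ℕ => ‖y k - ystar (tk k)‖) :=
    Filter.isBoundedUnder_of ⟨0, fun k => norm_nonneg _⟩
  have hcb : Filter.IsCoboundedUnder (· ≤ ·) Filter.atTop
      (fun k : ℕ => ‖y k - ystar (tk k)‖) :=
    hlb.isCoboundedUnder_le
  have h1 := Filter.limsup_le_limsup
    (Filter.Eventually.of_forall (fun k => (key k).2)) hcb hv.isBoundedUnder_le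
  exact le_trans h1 (le_of_eq hv.limsup_eq)
end

section
/- Let A and D̂ be symmetric real N×N matrices with A ⪰ m·I for some m > 0 and D̂ positive definite with D̂ ⪯ (L/2)·I for some L > 0, and set D := A + D̂. Let B be a symmetric real N×N matrix with ‖D̂^{-1/2} B D̂^{-1/2}‖ ≤ 1. Then ‖D^{-1/2} B D^{-1/2}‖ ≤ (L/2)/(m + L/2) < 1. -/
open scoped Matrix.Norms.L2Operator MatrixOrder
open scoped Matrix

private lemma psd_smul_aux {n : ℕ} {M : Matrix (Fin n) (Fin n) ℝ} (hM : M.PosSemidef) {c : ℝ}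
    (hc : 0 ≤ c) : (c • M).PosSemidef := by
  constructor
  · unfold Matrix.IsHermitian
    rw [Matrix.conjTranspose_smul, hM.1.eq]
    simp
  · exact (hM.smul hc).2

private lemma psd_norm_le_aux {n : ℕ} {M : Matrix (Fin n) (Fin n) ℝ} (hM : M.PosSemidef) {c : ℝ}
    (hc : 0 ≤ c) (h : (c • (1 : Matrix (Fin n) (Fin n) ℝ) - M).PosSemidef) : ‖M‖ ≤ c := by
  have hS := Matrix.nonneg_iff_posSemidef.mp (CFC.sqrt_nonneg M)
  have h1 : ‖M‖ = ‖CFC.sqrt M‖ * ‖CFC.sqrt M‖ := by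
    rw [← Matrix.l2_opNorm_conjTranspose_mul_self, hS.1.eq, CFC.sqrt_mul_sqrt_self M hM.nonneg]
  have h2 : ‖CFC.sqrt M‖ ≤ Real.sqrt c := by
    rw [Matrix.l2_opNorm_def]
    apply ContinuousLinearMap.opNorm_le_bound _ (Real.sqrt_nonneg c)
    intro x
    have key : ∀ w : Fin n → ℝ, w ⬝ᵥ M *ᵥ w ≤ c * (w ⬝ᵥ w) := by
      intro w
      have h2 := h.dotProduct_mulVec_nonneg w
      simp only [star_trivial, Matrix.sub_mulVec, Matrix.smul_mulVec, Matrix.one_mulVec,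
        dotProduct_sub, dotProduct_smul, smul_eq_mul] at h2
      linarith
    set v : Fin n → ℝ := WithLp.equiv 2 _ x with hv
    set y : EuclideanSpace ℝ (Fin n) := (WithLp.equiv 2 _).symm (CFC.sqrt M *ᵥ v) with hy
    have happ : (LinearEquiv.trans Matrix.toEuclideanLin
        LinearMap.toContinuousLinearMap (CFC.sqrt M)) x = y := rfl
    rw [happ]
    have hT : (CFC.sqrt M)ᵀ = CFC.sqrt M := by
      rw [← Matrix.conjTranspose_eq_transpose_of_trivial]; exact hS.1
    have hny : ‖y‖ ^ 2 = v ⬝ᵥ (M *ᵥ v) := by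
      rw [← real_inner_self_eq_norm_sq, hy, EuclideanSpace.inner_eq_star_dotProduct, star_trivial]
      change (CFC.sqrt M *ᵥ v) ⬝ᵥ (CFC.sqrt M *ᵥ v) = _
      rw [Matrix.dotProduct_mulVec, ← Matrix.mulVec_transpose, Matrix.mulVec_mulVec, hT,
        CFC.sqrt_mul_sqrt_self M hM.nonneg, Matrix.dotProduct_mulVec, dotProduct_comm (M *ᵥ v) v,
        Matrix.dotProduct_mulVec]
    have hnx : ‖x‖ ^ 2 = v ⬝ᵥ v := by
      rw [← real_inner_self_eq_norm_sq, EuclideanSpace.inner_eq_star_dotProduct, star_trivial]; rfl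
    have hyb : ‖y‖ ^ 2 ≤ (Real.sqrt c * ‖x‖) ^ 2 := by
      rw [hny, mul_pow, Real.sq_sqrt hc, hnx]
      exact key v
    calc ‖y‖ = Real.sqrt (‖y‖ ^ 2) := by rw [Real.sqrt_sq (norm_nonneg _)]
      _ ≤ Real.sqrt ((Real.sqrt c * ‖x‖) ^ 2) := Real.sqrt_le_sqrt hyb
      _ = Real.sqrt c * ‖x‖ := Real.sqrt_sq (by positivity)
  calc ‖M‖ = ‖CFC.sqrt M‖ * ‖CFC.sqrt M‖ := h1
    _ ≤ Real.sqrt c * Real.sqrt c :=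
        mul_le_mul h2 h2 (norm_nonneg _) (Real.sqrt_nonneg _)
    _ = c := Real.mul_self_sqrt hc

/-- the contraction factor ϱ = (L/2)/(m + L/2) of Proposition 3.
Here `Dh` plays the role of D̂ = diag[∇²g], A that of ∇²f, and D = A + D̂. -/
theorem stmt_4 {N : ℕ} (hN : 1 ≤ N)
    (A Dh B : Matrix (Fin N) (Fin N) ℝ)
    (m L : ℝ) (hm : 0 < m) (hL : 0 < L)
    (hA : A.IsHermitian)
    (hAm : (A - m • (1 : Matrix (Fin N) (Fin N) ℝ)).PosSemidef)
    (hDh : Dh.PosDef)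
    (hDhL : ((L / 2) • (1 : Matrix (Fin N) (Fin N) ℝ) - Dh).PosSemidef)
    (hB : B.IsHermitian)
    (hBn : ‖(CFC.sqrt Dh)⁻¹ * B * (CFC.sqrt Dh)⁻¹‖ ≤ 1)
    (hD : (A + Dh).PosDef) :
    ‖(CFC.sqrt (A + Dh))⁻¹ * B * (CFC.sqrt (A + Dh))⁻¹‖ ≤ (L / 2) / (m + L / 2)
      ∧ (L / 2) / (m + L / 2) < 1 := by
  have hden : 0 < m + L / 2 := by linarith
  set ρ : ℝ := (L / 2) / (m + L / 2) with hρ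
  have hρ1 : ρ < 1 := by
    rw [hρ, div_lt_one hden]; linarith
  have hρ0 : 0 ≤ ρ := by positivity
  refine ⟨?_, hρ1⟩
  set S := CFC.sqrt Dh with hSdef
  set T := CFC.sqrt (A + Dh) with hTdef
  have hSps := Matrix.nonneg_iff_posSemidef.mp (CFC.sqrt_nonneg Dh)
  have hTps := Matrix.nonneg_iff_posSemidef.mp (CFC.sqrt_nonneg (A + Dh))
  have hSS : S * S = Dh := CFC.sqrt_mul_sqrt_self Dh hDh.posSemidef.nonneg
  have hTT : T * T = A + Dh := CFC.sqrt_mul_sqrt_self (A + Dh) hD.posSemidef.nonneg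
  have hSu : IsUnit S.det := by
    have hd : S.det * S.det = Dh.det := by rw [← Matrix.det_mul, hSS]
    have := hDh.det_pos
    rw [isUnit_iff_ne_zero]
    intro h0; rw [h0] at hd; simp at hd; linarith
  have hTu : IsUnit T.det := by
    have hd : T.det * T.det = (A + Dh).det := by rw [← Matrix.det_mul, hTT]
    have := hD.det_pos
    rw [isUnit_iff_ne_zero]
    intro h0; rw [h0] at hd; simp at hd; linarith
  have hTinvH : (T⁻¹)ᴴ = T⁻¹ := (hTps.1.inv).eq
  -- factorization
  have hfact : T⁻¹ * B * T⁻¹ = (T⁻¹ * S) * (S⁻¹ * B * S⁻¹) * (S * T⁻¹) := by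
    simp only [Matrix.mul_assoc, Matrix.mul_nonsing_inv_cancel_left _ _ hSu,
      Matrix.nonsing_inv_mul_cancel_left _ _ hSu]
  -- norm of T⁻¹ S equals norm of S T⁻¹
  have hCH : (S * T⁻¹)ᴴ = T⁻¹ * S := by
    rw [Matrix.conjTranspose_mul, hTinvH, hSps.1.eq]
  have hnormTS : ‖T⁻¹ * S‖ = ‖S * T⁻¹‖ := by
    rw [← hCH, Matrix.l2_opNorm_conjTranspose]
  -- the conjugated Dh
  have hMpsd : (T⁻¹ * Dh * T⁻¹).PosSemidef := by
    have := hDh.posSemidef.mul_mul_conjTranspose_same T⁻¹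
    rwa [hTinvH] at this
  -- ρ • (A + Dh) - Dh is PSD
  have hscal : ρ * m = (1 - ρ) * (L / 2) := by
    rw [hρ]; field_simp; ring
  have hid : ρ • (A + Dh) - Dh
      = ρ • (A - m • (1 : Matrix (Fin N) (Fin N) ℝ))
        + (1 - ρ) • ((L / 2) • (1 : Matrix (Fin N) (Fin N) ℝ) - Dh) := by
    rw [smul_sub, smul_sub, smul_add, smul_smul, smul_smul, ← hscal]
    module
  have hkey : (ρ • (A + Dh) - Dh).PosSemidef := by
    rw [hid]
    exact (psd_smul_aux hAm hρ0).add (psd_smul_aux hDhL (by linarith))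
  -- conjugate it by T⁻¹
  have hTinv1 : T⁻¹ * (A + Dh) * T⁻¹ = 1 := by
    rw [← hTT, ← Matrix.mul_assoc, Matrix.mul_assoc,
      Matrix.mul_nonsing_inv _ hTu, Matrix.nonsing_inv_mul _ hTu, Matrix.mul_one]
  have hsub : ρ • (1 : Matrix (Fin N) (Fin N) ℝ) - T⁻¹ * Dh * T⁻¹
      = T⁻¹ * (ρ • (A + Dh) - Dh) * T⁻¹ := by
    rw [Matrix.mul_sub, Matrix.sub_mul, Matrix.mul_smul, Matrix.smul_mul, hTinv1]
  have hconj : (ρ • (1 : Matrix (Fin N) (Fin N) ℝ) - T⁻¹ * Dh * T⁻¹).PosSemidef := by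
    rw [hsub]
    have := hkey.mul_mul_conjTranspose_same T⁻¹
    rwa [hTinvH] at this
  have hMnorm : ‖T⁻¹ * Dh * T⁻¹‖ ≤ ρ := psd_norm_le_aux hMpsd hρ0 hconj
  -- assemble
  have hprod : ‖S * T⁻¹‖ * ‖S * T⁻¹‖ = ‖T⁻¹ * Dh * T⁻¹‖ := by
    rw [← Matrix.l2_opNorm_conjTranspose_mul_self, hCH]
    congr 1
    rw [Matrix.mul_assoc, ← Matrix.mul_assoc S, hSS, Matrix.mul_assoc]
  calc ‖T⁻¹ * B * T⁻¹‖ = ‖(T⁻¹ * S) * (S⁻¹ * B * S⁻¹) * (S * T⁻¹)‖ := by rw [hfact]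
    _ ≤ ‖(T⁻¹ * S) * (S⁻¹ * B * S⁻¹)‖ * ‖S * T⁻¹‖ := Matrix.l2_opNorm_mul _ _
    _ ≤ (‖T⁻¹ * S‖ * ‖S⁻¹ * B * S⁻¹‖) * ‖S * T⁻¹‖ :=
        mul_le_mul_of_nonneg_right (Matrix.l2_opNorm_mul _ _) (norm_nonneg _)
    _ ≤ (‖T⁻¹ * S‖ * 1) * ‖S * T⁻¹‖ := by
        apply mul_le_mul_of_nonneg_right _ (norm_nonneg _)
        exact mul_le_mul_of_nonneg_left hBn (norm_nonneg _)
    _ = ‖S * T⁻¹‖ * ‖S * T⁻¹‖ := by rw [mul_one, hnormTS]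
    _ = ‖T⁻¹ * Dh * T⁻¹‖ := hprod
    _ ≤ ρ := hMnorm
end

section
/- Let D and B be symmetric real N×N matrices with D positive definite, D ⪰ d·I for some d > 0, and set X := D^{-1/2} B D^{-1/2}. Suppose ‖X‖ ≤ ϱ for some ϱ ∈ [0,1), and for K ∈ ℕ define H_K^{-1} := D^{-1/2} (∑_{τ=0}^{K} X^τ) D^{-1/2}. Then the identity I − (D − B) · H_K^{-1} = D^{1/2} X^{K+1} D^{-1/2} holds, and consequently ‖H_K^{-1} − (D − B)^{-1}‖ ≤ ϱ^{K+1} / (d(1 − ϱ)). -/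
open scoped Matrix.Norms.L2Operator MatrixOrder
open Matrix

lemma aux_norm_le {N : ℕ} (A : Matrix (Fin N) (Fin N) ℝ) (c : ℝ) (hc : 0 ≤ c)
    (key : ∀ y : Fin N → ℝ,
      dotProduct (A.mulVec y) (A.mulVec y) ≤ c * dotProduct y y) :
    ‖A‖ ≤ Real.sqrt c := by
  rw [Matrix.l2_opNorm_def]
  apply ContinuousLinearMap.opNorm_le_bound _ (Real.sqrt_nonneg _)
  intro x
  change ‖WithLp.toLp 2 (A *ᵥ x.ofLp)‖ ≤ Real.sqrt c * ‖x‖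
  set y : Fin N → ℝ := x.ofLp with hy
  have hyn : dotProduct y y = ‖x‖ ^ 2 := by
    rw [EuclideanSpace.norm_eq, Real.sq_sqrt (by positivity)]
    simp [dotProduct, hy, pow_two]
  have hAyn : ‖WithLp.toLp 2 (A *ᵥ y)‖ ^ 2
      = dotProduct (A.mulVec y) (A.mulVec y) := by
    rw [EuclideanSpace.norm_eq, Real.sq_sqrt (by positivity)]
    simp [dotProduct, pow_two]
  calc ‖WithLp.toLp 2 (A *ᵥ y)‖
      = Real.sqrt (dotProduct (A.mulVec y) (A.mulVec y)) := by
        rw [← hAyn, Real.sqrt_sq (norm_nonneg _)]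
    _ ≤ Real.sqrt (c * ‖x‖ ^ 2) := by
        apply Real.sqrt_le_sqrt; rw [← hyn]; exact key y
    _ = Real.sqrt c * ‖x‖ := by
        rw [Real.sqrt_mul hc, Real.sqrt_sq (norm_nonneg _)]


/-- the error of the K-th order Hessian-inverse approximation
(quantifying e_k of Proposition 3): the identity
I − (D − B)·H_K^{-1} = D^{1/2} X^{K+1} D^{-1/2} and the resulting bound
‖H_K^{-1} − (D − B)^{-1}‖ ≤ ϱ^{K+1}/(d(1 − ϱ)). -/
theorem stmt_7 {N : ℕ} (hN : 1 ≤ N)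
    (D B : Matrix (Fin N) (Fin N) ℝ)
    (hD : D.PosDef) (hB : B.IsHermitian)
    (d ϱ : ℝ) (hd : 0 < d)
    (hDd : (D - d • (1 : Matrix (Fin N) (Fin N) ℝ)).PosSemidef)
    (hϱ0 : 0 ≤ ϱ) (hϱ1 : ϱ < 1)
    (hX : ‖(CFC.sqrt D)⁻¹ * B * (CFC.sqrt D)⁻¹‖ ≤ ϱ) :
    ∀ K : ℕ,
      (1 : Matrix (Fin N) (Fin N) ℝ) -
          (D - B) *
            ((CFC.sqrt D)⁻¹ *
              (∑ τ ∈ Finset.range (K + 1),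
                ((CFC.sqrt D)⁻¹ * B * (CFC.sqrt D)⁻¹) ^ τ) *
              (CFC.sqrt D)⁻¹) =
        (CFC.sqrt D) *
          ((CFC.sqrt D)⁻¹ * B * (CFC.sqrt D)⁻¹) ^ (K + 1) *
          (CFC.sqrt D)⁻¹
      ∧ ‖((CFC.sqrt D)⁻¹ *
            (∑ τ ∈ Finset.range (K + 1),
              ((CFC.sqrt D)⁻¹ * B * (CFC.sqrt D)⁻¹) ^ τ) *
            (CFC.sqrt D)⁻¹) - (D - B)⁻¹‖
          ≤ ϱ ^ (K + 1) / (d * (1 - ϱ)) := by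
  classical
  intro K
  set S : Matrix (Fin N) (Fin N) ℝ := CFC.sqrt D with hSdef
  set Si : Matrix (Fin N) (Fin N) ℝ := S⁻¹ with hSidef
  set X : Matrix (Fin N) (Fin N) ℝ := Si * B * Si with hXdef
  set G : Matrix (Fin N) (Fin N) ℝ := ∑ τ ∈ Finset.range (K + 1), X ^ τ with hGdef
  have hSS : S * S = D := CFC.sqrt_mul_sqrt_self D hD.posSemidef.nonneg
  have hSherm : S.IsHermitian := (CFC.sqrt_nonneg D).posSemidef.isHermitian
  have hdet : IsUnit S.det := by
    have hmul : S.det * S.det = D.det := by rw [← Matrix.det_mul, hSS]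
    have hDdet := hD.det_pos
    refine isUnit_iff_ne_zero.mpr fun h0 => ?_
    rw [h0, mul_zero] at hmul
    exact hDdet.ne' hmul.symm
  have hSiS : Si * S = 1 := Matrix.nonsing_inv_mul S hdet
  have hSSi : S * Si = 1 := Matrix.mul_nonsing_inv S hdet
  have hSiherm : Siᴴ = Si := by
    rw [hSidef, Matrix.conjTranspose_nonsing_inv, hSherm.eq]
  have hSiD : Si * Si = D⁻¹ := by rw [hSidef, ← Matrix.mul_inv_rev, hSS]
  have cancel1 : ∀ t : Matrix (Fin N) (Fin N) ℝ, S * (Si * t) = t := fun t => by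
    rw [← mul_assoc, hSSi, one_mul]
  have cancel2 : ∀ t : Matrix (Fin N) (Fin N) ℝ, Si * (S * t) = t := fun t => by
    rw [← mul_assoc, hSiS, one_mul]
  have hSXS : S * X * S = B := by
    rw [hXdef, ← mul_assoc, ← mul_assoc, hSSi, one_mul, mul_assoc, hSiS, mul_one]
  have hDB : S * (1 - X) * S = D - B := by
    rw [mul_sub, sub_mul, mul_one, hSS, hSXS]
  have h1 : (1 - X) * G = 1 - X ^ (K + 1) := by
    rw [hGdef, ← neg_sub X 1, neg_mul, mul_geom_sum, neg_sub]
  -- Part 1: the identity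
  have hid : (1 : Matrix (Fin N) (Fin N) ℝ) - (D - B) * (Si * G * Si)
      = S * X ^ (K + 1) * Si := by
    rw [← hDB]
    have key : (S * (1 - X) * S) * (Si * G * Si) = S * (((1 - X) * G) * Si) := by
      simp only [mul_assoc]
      rw [cancel1]
    rw [key, h1, sub_mul, one_mul, mul_sub, hSSi, sub_sub_cancel, mul_assoc]
  refine ⟨hid, ?_⟩
  -- Part 2: the bound
  haveI : CompleteSpace (Matrix (Fin N) (Fin N) ℝ) := FiniteDimensional.complete ℝ _
  haveI : Nonempty (Fin N) := ⟨⟨0, hN⟩⟩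
  have hXlt : ‖X‖ < 1 := lt_of_le_of_lt hX hϱ1
  have hXunit : IsUnit (1 - X) := ⟨Units.oneSub X hXlt, rfl⟩
  have hXdet2 : IsUnit (1 - X).det := (Matrix.isUnit_iff_isUnit_det _).mp hXunit
  set Y : Matrix (Fin N) (Fin N) ℝ := (1 - X)⁻¹ with hYdef
  have hY1 : Y * (1 - X) = 1 := Matrix.nonsing_inv_mul _ hXdet2
  have hY2 : (1 - X) * Y = 1 := Matrix.mul_nonsing_inv _ hXdet2
  have hϱpos : 0 < 1 - ϱ := by linarith
  have hYnorm : ‖Y‖ ≤ 1 / (1 - ϱ) := by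
    have hYeq : Y = 1 + Y * X := by
      have h := hY1
      rw [mul_sub, mul_one] at h
      exact eq_add_of_sub_eq h
    have h1n : ‖(1 : Matrix (Fin N) (Fin N) ℝ)‖ = 1 := norm_one
    have hest : ‖Y‖ ≤ 1 + ‖Y‖ * ϱ := by
      calc ‖Y‖ = ‖1 + Y * X‖ := by rw [← hYeq]
        _ ≤ ‖(1 : Matrix (Fin N) (Fin N) ℝ)‖ + ‖Y * X‖ := norm_add_le _ _
        _ ≤ 1 + ‖Y‖ * ‖X‖ := by rw [h1n]; exact add_le_add_right (norm_mul_le _ _) 1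
        _ ≤ 1 + ‖Y‖ * ϱ := by
            exact add_le_add_right (mul_le_mul_of_nonneg_left hX (norm_nonneg _)) 1
    rw [le_div_iff₀ hϱpos]
    nlinarith [hest]
  have hDBinv : (D - B)⁻¹ = Si * Y * Si := by
    apply Matrix.inv_eq_left_inv
    rw [← hDB]
    simp only [mul_assoc]
    rw [cancel2, ← mul_assoc Y, hY1, one_mul, hSiS]
  have hG : G = Y - Y * X ^ (K + 1) := by
    have h := congrArg (fun M => Y * M) h1
    rw [← mul_assoc, hY1, one_mul, mul_sub, mul_one] at h
    exact h
  have herr : Si * G * Si - (D - B)⁻¹ = -(Si * (Y * X ^ (K + 1)) * Si) := by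
    rw [hDBinv, hG]
    noncomm_ring
  rw [herr, norm_neg]
  -- norm of Si
  have base : ((1 : Matrix (Fin N) (Fin N) ℝ) - d • D⁻¹).PosSemidef := by
    have hb := hDd.conjTranspose_mul_mul_same Si
    have e : Si * D * Si = 1 := by
      rw [← hSS, ← mul_assoc, hSiS, one_mul, hSSi]
    have this2 : Siᴴ * (D - d • (1 : Matrix (Fin N) (Fin N) ℝ)) * Si
        = 1 - d • D⁻¹ := by
      rw [hSiherm, mul_sub, sub_mul, e, mul_smul_comm, mul_one, smul_mul_assoc, hSiD]
    rwa [this2] at hb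
  have hSin : ‖Si‖ ≤ Real.sqrt d⁻¹ := by
    apply aux_norm_le Si d⁻¹ (inv_nonneg.mpr hd.le)
    intro y
    have h2 := base.dotProduct_mulVec_nonneg y
    have e1 : dotProduct (star y) (((1 : Matrix (Fin N) (Fin N) ℝ) - d • D⁻¹).mulVec y)
        = dotProduct y y - d * dotProduct y (D⁻¹.mulVec y) := by
      rw [Matrix.sub_mulVec]
      simp [dotProduct_sub, Matrix.smul_mulVec, dotProduct_smul]
    rw [e1] at h2
    have e2 : dotProduct (Si.mulVec y) (Si.mulVec y)
        = dotProduct y (D⁻¹.mulVec y) := by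
      have hSiT : Siᵀ = Si := by
        ext i j
        have := congrFun (congrFun hSiherm i) j
        simpa [Matrix.conjTranspose_apply] using this
      rw [Matrix.dotProduct_mulVec, Matrix.vecMul_mulVec, hSiT, hSiD,
        ← Matrix.dotProduct_mulVec]
    rw [e2]
    rw [inv_mul_eq_div, le_div_iff₀ hd]
    linarith [h2]
  -- assemble
  have hXp : ‖X ^ (K + 1)‖ ≤ ϱ ^ (K + 1) :=
    le_trans (norm_pow_le' X (Nat.succ_pos K)) (pow_le_pow_left₀ (norm_nonneg _) hX _)
  have hSi2 : ‖Si‖ * ‖Si‖ ≤ d⁻¹ := by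
    have := mul_le_mul hSin hSin (norm_nonneg _) (Real.sqrt_nonneg _)
    rwa [Real.mul_self_sqrt (inv_nonneg.mpr hd.le)] at this
  have hYXp : ‖Y * X ^ (K + 1)‖ ≤ (1 / (1 - ϱ)) * ϱ ^ (K + 1) :=
    le_trans (norm_mul_le _ _)
      (mul_le_mul hYnorm hXp (norm_nonneg _) (by positivity))
  calc ‖Si * (Y * X ^ (K + 1)) * Si‖
      ≤ ‖Si * (Y * X ^ (K + 1))‖ * ‖Si‖ := norm_mul_le _ _
    _ ≤ (‖Si‖ * ‖Y * X ^ (K + 1)‖) * ‖Si‖ :=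
        mul_le_mul_of_nonneg_right (norm_mul_le _ _) (norm_nonneg _)
    _ = (‖Si‖ * ‖Si‖) * ‖Y * X ^ (K + 1)‖ := by ring
    _ ≤ d⁻¹ * ((1 / (1 - ϱ)) * ϱ ^ (K + 1)) :=
        mul_le_mul hSi2 hYXp (norm_nonneg _) (inv_nonneg.mpr hd.le)
    _ = ϱ ^ (K + 1) / (d * (1 - ϱ)) := by
        field_simp
end

section
/- The solution trajectory is Lipschitz in time: for all t, t' ∈ ℝ, ‖y*(t') − y*(t)‖ ≤ (C0/m)·|t' − t|. -/
open scoped InnerProductSpace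

/-- the solution trajectory is Lipschitz in time with constant C0/m. -/
theorem stmt_10 {n : ℕ} (hn : 1 ≤ n)
    (F : ℝ → EuclideanSpace ℝ (Fin n) → ℝ)
    (Fgrad : ℝ → EuclideanSpace ℝ (Fin n) → EuclideanSpace ℝ (Fin n))
    (m C0 : ℝ) (hm : 0 < m) (hC0 : 0 ≤ C0)
    (hgrad : ∀ t y, HasGradientAt (F t) (Fgrad t y) y)
    (hstrong : ∀ t (y y' : EuclideanSpace ℝ (Fin n)),
      m * ‖y - y'‖ ^ 2 ≤ ⟪Fgrad t y - Fgrad t y', y - y'⟫_ℝ)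
    (htlip : ∀ t t' y, ‖Fgrad t y - Fgrad t' y‖ ≤ C0 * |t - t'|)
    (ystar : ℝ → EuclideanSpace ℝ (Fin n))
    (hmin : ∀ t, IsMinOn (F t) Set.univ (ystar t))
    (hcrit : ∀ t, Fgrad t (ystar t) = 0) :
    ∀ t t', ‖ystar t' - ystar t‖ ≤ (C0 / m) * |t' - t| := by
  intro t t'
  set d : EuclideanSpace ℝ (Fin n) := ystar t' - ystar t with hd
  have key : m * ‖d‖ ^ 2 ≤ C0 * |t' - t| * ‖d‖ := by
    calc m * ‖d‖ ^ 2 ≤ ⟪Fgrad t' (ystar t') - Fgrad t' (ystar t), d⟫_ℝ :=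
          hstrong t' (ystar t') (ystar t)
      _ = ⟪Fgrad t (ystar t) - Fgrad t' (ystar t), d⟫_ℝ := by
          rw [hcrit t', hcrit t]
      _ ≤ ‖Fgrad t (ystar t) - Fgrad t' (ystar t)‖ * ‖d‖ :=
          real_inner_le_norm _ _
      _ ≤ C0 * |t - t'| * ‖d‖ := by
          gcongr
          exact htlip t t' (ystar t)
      _ = C0 * |t' - t| * ‖d‖ := by rw [abs_sub_comm]
  rcases eq_or_lt_of_le (norm_nonneg d) with h0 | hpos
  · rw [← h0]
    positivity
  · have h1 : m * ‖d‖ ≤ C0 * |t' - t| := by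
      have := key
      rw [sq] at this
      nlinarith
    rw [div_mul_eq_mul_div, le_div_iff₀ hm]
    nlinarith
end

section
/- Let E = EuclideanSpace ℝ (Fin n), and let f : E → ℝ be differentiable, m-strongly convex with L-Lipschitz gradient (0 < m ≤ L), and let x* be its minimizer (∇f(x*) = 0). Then for every γ > 0 and every x ∈ E, the gradient descent step satisfies ‖x − γ∇f(x) − x*‖ ≤ max(|1 − γm|, |1 − γL|)·‖x − x*‖. -/
open scoped InnerProductSpace

variable {E : Type*} [NormedAddCommGroup E] [InnerProductSpace ℝ E] [CompleteSpace E]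

lemma line_deriv (f : E → ℝ) (f' : E → E) (hgrad : ∀ z, HasGradientAt f (f' z) z)
    (x d : E) (t : ℝ) :
    HasDerivAt (fun s : ℝ => f (x + s • d)) ⟪f' (x + t • d), d⟫_ℝ t := by
  have hc : HasDerivAt (fun s : ℝ => x + s • d) d t := by
    simpa using ((hasDerivAt_id t).smul_const d).const_add x
  have hf := (hasGradientAt_iff_hasFDerivAt.mp (hgrad (x + t • d)))
  have := hf.comp_hasDerivAt t hc
  simpa [InnerProductSpace.toDual_apply_apply, Function.comp_def] using this

lemma line_integral (f : E → ℝ) (f' : E → E) (hgrad : ∀ z, HasGradientAt f (f' z) z)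
    (hcont : Continuous f') (x d : E) :
    f (x + d) - f x = ∫ t in (0:ℝ)..1, ⟪f' (x + t • d), d⟫_ℝ := by
  have hint : Continuous fun t : ℝ => ⟪f' (x + t • d), d⟫_ℝ := by
    exact (hcont.comp (by continuity)).inner continuous_const
  have := intervalIntegral.integral_eq_sub_of_hasDerivAt
    (fun t _ => line_deriv f f' hgrad x d t) (hint.intervalIntegrable 0 1)
  simpa using this.symm

lemma lower_bound (f : E → ℝ) (f' : E → E) (hgrad : ∀ z, HasGradientAt f (f' z) z)
    (hcont : Continuous f') (a : ℝ)
    (hmono : ∀ u v : E, a * ‖u - v‖ ^ 2 ≤ ⟪f' u - f' v, u - v⟫_ℝ) (x y : E) :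
    f x + ⟪f' x, y - x⟫_ℝ + a / 2 * ‖y - x‖ ^ 2 ≤ f y := by
  set d := y - x with hd
  have hxy : x + d = y := by simp [hd]
  have hI := line_integral f f' hgrad hcont x d
  rw [hxy] at hI
  have hint : Continuous fun t : ℝ => ⟪f' (x + t • d), d⟫_ℝ :=
    (hcont.comp (by continuity)).inner continuous_const
  have hmono' : ∀ t ∈ Set.Icc (0:ℝ) 1,
      ⟪f' x, d⟫_ℝ + a * t * ‖d‖ ^ 2 ≤ ⟪f' (x + t • d), d⟫_ℝ := by
    intro t ht
    rcases eq_or_lt_of_le ht.1 with h0 | h0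
    · simp [← h0]
    · have := hmono (x + t • d) x
      have hsub : x + t • d - x = t • d := by abel
      rw [hsub] at this
      have h1 : ⟪f' (x + t • d) - f' x, t • d⟫_ℝ = t * ⟪f' (x + t • d) - f' x, d⟫_ℝ := by
        rw [real_inner_smul_right]
      have h2 : ‖t • d‖ ^ 2 = t ^ 2 * ‖d‖ ^ 2 := by
        rw [norm_smul]; simp [abs_of_pos h0]; ring
      rw [h1, h2] at this
      have h3 : a * t * ‖d‖ ^ 2 ≤ ⟪f' (x + t • d) - f' x, d⟫_ℝ := by
        have := (mul_le_mul_iff_right₀ h0).mp (by linarith [this] : t * (a * t * ‖d‖ ^ 2) ≤ t * ⟪f' (x + t • d) - f' x, d⟫_ℝ)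
        linarith
      have h4 : ⟪f' (x + t • d) - f' x, d⟫_ℝ = ⟪f' (x + t • d), d⟫_ℝ - ⟪f' x, d⟫_ℝ := by
        rw [inner_sub_left]
      linarith
  have hmonoInt : (∫ t in (0:ℝ)..1, (⟪f' x, d⟫_ℝ + a * t * ‖d‖ ^ 2)) ≤
      ∫ t in (0:ℝ)..1, ⟪f' (x + t • d), d⟫_ℝ := by
    apply intervalIntegral.integral_mono_on (by norm_num)
    · exact (Continuous.intervalIntegrable (by continuity) 0 1)
    · exact hint.intervalIntegrable 0 1
    · exact hmono'
  have hval : (∫ t in (0:ℝ)..1, (⟪f' x, d⟫_ℝ + a * t * ‖d‖ ^ 2)) =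
      ⟪f' x, d⟫_ℝ + a / 2 * ‖d‖ ^ 2 := by
    have heq : (fun t : ℝ => ⟪f' x, d⟫_ℝ + a * t * ‖d‖ ^ 2) =
        fun t : ℝ => ⟪f' x, d⟫_ℝ + (a * ‖d‖ ^ 2) * t := by
      funext t; ring
    rw [heq, intervalIntegral.integral_add intervalIntegrable_const
      (Continuous.intervalIntegrable (by continuity) 0 1),
      intervalIntegral.integral_const_mul, integral_id]
    norm_num; ring
  rw [hval] at hmonoInt
  linarith [hI ▸ hmonoInt]

lemma upper_bound (f : E → ℝ) (f' : E → E) (hgrad : ∀ z, HasGradientAt f (f' z) z)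
    (hcont : Continuous f') (b : ℝ)
    (hmono : ∀ u v : E, ⟪f' u - f' v, u - v⟫_ℝ ≤ b * ‖u - v‖ ^ 2) (x y : E) :
    f y ≤ f x + ⟪f' x, y - x⟫_ℝ + b / 2 * ‖y - x‖ ^ 2 := by
  have hg : ∀ z, HasGradientAt (fun w => -f w) (-f' z) z := by
    intro z
    rw [hasGradientAt_iff_hasFDerivAt] at *
    have := (hgrad z).neg
    rw [map_neg]; exact this
  have hm : ∀ u v : E, (-b) * ‖u - v‖ ^ 2 ≤ ⟪(fun z => -f' z) u - (fun z => -f' z) v, u - v⟫_ℝ := by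
    intro u v
    have := hmono u v
    have h1 : ⟪-f' u - -f' v, u - v⟫_ℝ = -⟪f' u - f' v, u - v⟫_ℝ := by
      rw [show -f' u - -f' v = -(f' u - f' v) by abel, inner_neg_left]
    simp only [h1]
    linarith
  have := lower_bound (fun w => -f w) (fun z => -f' z) hg hcont.neg (-b) hm x y
  simp only [inner_neg_left] at this
  linarith

lemma interp (f : E → ℝ) (f' : E → E) (m L : ℝ) (hm : 0 < m) (hmL : m ≤ L)
    (hgrad : ∀ z, HasGradientAt f (f' z) z) (hcont : Continuous f')
    (hstrong : ∀ u v : E, m * ‖u - v‖ ^ 2 ≤ ⟪f' u - f' v, u - v⟫_ℝ)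
    (hlip : ∀ u v : E, ‖f' u - f' v‖ ≤ L * ‖u - v‖) (x y : E) :
    ‖f' x - f' y‖ ^ 2 + m * L * ‖x - y‖ ^ 2 ≤ (L + m) * ⟪f' x - f' y, x - y⟫_ℝ := by
  -- upper quadratic monotonicity from Cauchy-Schwarz + Lipschitz
  have hub : ∀ u v : E, ⟪f' u - f' v, u - v⟫_ℝ ≤ L * ‖u - v‖ ^ 2 := by
    intro u v
    calc ⟪f' u - f' v, u - v⟫_ℝ ≤ ‖f' u - f' v‖ * ‖u - v‖ := real_inner_le_norm _ _
    _ ≤ L * ‖u - v‖ * ‖u - v‖ := by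
        apply mul_le_mul_of_nonneg_right (hlip u v) (norm_nonneg _)
    _ = L * ‖u - v‖ ^ 2 := by ring
  rcases eq_or_lt_of_le hmL with hK0 | hK
  · -- L = m : degenerate case
    subst hK0
    have h1 := hstrong x y
    have h2 := hlip x y
    have h3 : ‖f' x - f' y‖ ^ 2 ≤ m ^ 2 * ‖x - y‖ ^ 2 := by
      nlinarith [norm_nonneg (f' x - f' y), norm_nonneg (x - y)]
    nlinarith
  · set K := L - m with hKdef
    have hKpos : 0 < K := by simp [hKdef]; linarith
    -- function value inequalities for f
    have hLo := fun u v => lower_bound f f' hgrad hcont m hstrong u v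
    have hUp := fun u v => upper_bound f f' hgrad hcont L hub u v
    -- shifted function h and its gradient p
    set h : E → ℝ := fun z => f z - m / 2 * ‖z‖ ^ 2 with hh
    set p : E → E := fun z => f' z - m • z with hp
    -- translate the inequalities to h
    have hnorm : ∀ u v : E, ‖v‖ ^ 2 = ‖u‖ ^ 2 + 2 * ⟪u, v - u⟫_ℝ + ‖v - u‖ ^ 2 := by
      intro u v
      have := norm_add_sq_real u (v - u)
      simpa using this
    have hinner : ∀ u v : E, ⟪p u, v - u⟫_ℝ = ⟪f' u, v - u⟫_ℝ - m * ⟪u, v - u⟫_ℝ := by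
      intro u v
      simp [hp, inner_sub_left, real_inner_smul_left]
    have hLo' : ∀ u v : E, h u + ⟪p u, v - u⟫_ℝ ≤ h v := by
      intro u v
      have := hLo u v
      have hn := hnorm u v
      have hi := hinner u v
      simp only [hh]
      nlinarith
    have hUp' : ∀ u v : E, h v ≤ h u + ⟪p u, v - u⟫_ℝ + K / 2 * ‖v - u‖ ^ 2 := by
      intro u v
      have := hUp u v
      have hn := hnorm u v
      have hi := hinner u v
      simp only [hh, hKdef]
      nlinarith
    -- Baillon-Haddad key inequality
    have hKne : K ≠ 0 := ne_of_gt hKpos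
    have key : ∀ u v : E, h u + ⟪p u, v - u⟫_ℝ + K⁻¹ / 2 * ‖p v - p u‖ ^ 2 ≤ h v := by
      intro u v
      set g : E := p v - p u with hg
      set z : E := v - K⁻¹ • g with hz
      have h1 := hLo' u z
      have h2 := hUp' v z
      have hzv : z - v = -(K⁻¹ • g) := by rw [hz]; abel
      have hzu : z - u = (v - u) - K⁻¹ • g := by rw [hz]; abel
      have e1 : ⟪p u, z - u⟫_ℝ = ⟪p u, v - u⟫_ℝ - K⁻¹ * ⟪p u, g⟫_ℝ := by
        rw [hzu, inner_sub_right, real_inner_smul_right]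
      have e2 : ⟪p v, z - v⟫_ℝ = -(K⁻¹ * ⟪p v, g⟫_ℝ) := by
        rw [hzv, inner_neg_right, real_inner_smul_right]
      have e3 : ‖z - v‖ ^ 2 = K⁻¹ ^ 2 * ‖g‖ ^ 2 := by
        rw [hzv, norm_neg, norm_smul, mul_pow, Real.norm_eq_abs, sq_abs]
      have e4 : K⁻¹ * ⟪p v, g⟫_ℝ - K⁻¹ * ⟪p u, g⟫_ℝ = K⁻¹ * ‖g‖ ^ 2 := by
        rw [← mul_sub, ← inner_sub_left, ← hg, real_inner_self_eq_norm_sq]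
      have c1 : K / 2 * (K⁻¹ ^ 2 * ‖g‖ ^ 2) = K⁻¹ / 2 * ‖g‖ ^ 2 := by
        rw [sq]
        field_simp
      rw [e1] at h1
      rw [e2, e3, c1] at h2
      linarith
    -- combine both directions
    have coco : K⁻¹ * ‖p x - p y‖ ^ 2 ≤ ⟪p x - p y, x - y⟫_ℝ := by
      have k1 := key x y
      have k2 := key y x
      have e5 : ⟪p y, x - y⟫_ℝ = -⟪p y, y - x⟫_ℝ := by
        rw [show x - y = -(y - x) by abel, inner_neg_right]
      have e6 : ‖p x - p y‖ = ‖p y - p x‖ := norm_sub_rev _ _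
      have e7 : ⟪p x - p y, x - y⟫_ℝ = ⟪p x, x - y⟫_ℝ - ⟪p y, x - y⟫_ℝ := inner_sub_left _ _ _
      have e8 : ⟪p x, x - y⟫_ℝ = -⟪p x, y - x⟫_ℝ := by
        rw [show x - y = -(y - x) by abel, inner_neg_right]
      rw [e7, e8, e5, e6]
      rw [e5] at k2
      rw [show ‖p x - p y‖ ^ 2 = ‖p y - p x‖ ^ 2 by rw [e6]] at k2
      linarith
    -- unfold p and conclude
    set g : E := f' x - f' y with hgdef
    set d : E := x - y with hddef
    have hpd : p x - p y = g - m • d := by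
      simp only [hp, hgdef, hddef]
      module
    have e9 : ‖p x - p y‖ ^ 2 = ‖g‖ ^ 2 - 2 * m * ⟪g, d⟫_ℝ + m ^ 2 * ‖d‖ ^ 2 := by
      rw [hpd]
      have hns := norm_sub_sq_real g (m • d)
      rw [real_inner_smul_right, norm_smul, mul_pow, Real.norm_eq_abs, sq_abs] at hns
      rw [hns]
      ring
    have e10 : ⟪p x - p y, d⟫_ℝ = ⟪g, d⟫_ℝ - m * ‖d‖ ^ 2 := by
      rw [hpd, inner_sub_left, real_inner_smul_left, real_inner_self_eq_norm_sq]
    rw [e9, e10] at coco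
    have h1 : ‖g‖ ^ 2 - 2 * m * ⟪g, d⟫_ℝ + m ^ 2 * ‖d‖ ^ 2 ≤ K * (⟪g, d⟫_ℝ - m * ‖d‖ ^ 2) := by
      have h2 := mul_le_mul_of_nonneg_left coco hKpos.le
      rw [← mul_assoc, mul_inv_cancel₀ hKne, one_mul] at h2
      exact h2
    rw [hKdef] at h1
    nlinarith [h1]

lemma final_algebra (m L γ nd ng s A : ℝ) (hm : 0 < m) (hmL : m ≤ L) (hγ : 0 < γ)
    (hnd : 0 ≤ nd) (hng : 0 ≤ ng)
    (hI : ng ^ 2 + m * L * nd ^ 2 ≤ (L + m) * s)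
    (hm2 : m * nd ≤ ng) (hL2 : ng ≤ L * nd) (hA : 0 ≤ A)
    (hAsq : A ^ 2 = nd ^ 2 - 2 * γ * s + γ ^ 2 * ng ^ 2) :
    A ≤ max |1 - γ * m| |1 - γ * L| * nd := by
  set ρ : ℝ := max |1 - γ * m| |1 - γ * L| with hρ
  have hρ0 : 0 ≤ ρ := le_trans (abs_nonneg _) (le_max_left _ _)
  have hG : m ^ 2 * nd ^ 2 ≤ ng ^ 2 := by
    have := mul_le_mul hm2 hm2 (mul_nonneg hm.le hnd) hng
    nlinarith [this]
  have hG2 : ng ^ 2 ≤ L ^ 2 * nd ^ 2 := by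
    have := mul_le_mul hL2 hL2 hng (mul_nonneg (by linarith : (0:ℝ) ≤ L) hnd)
    nlinarith [this]
  have hsq : A ^ 2 ≤ ρ ^ 2 * nd ^ 2 := by
    rw [hAsq]
    rcases le_total (γ * (m + L)) 2 with hc | hc
    · have hρm : (1 - γ * m) ^ 2 ≤ ρ ^ 2 := by
        have h1 : |1 - γ * m| ≤ ρ := le_max_left _ _
        nlinarith [abs_nonneg (1 - γ * m), sq_abs (1 - γ * m)]
      have t1 : 0 ≤ γ * ((L + m) * s - (ng ^ 2 + m * L * nd ^ 2)) :=
        mul_nonneg hγ.le (by linarith)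
      have t2 : 0 ≤ γ * (2 - γ * (m + L)) * (ng ^ 2 - m ^ 2 * nd ^ 2) :=
        mul_nonneg (mul_nonneg hγ.le (by linarith)) (by linarith)
      have keyid : (L + m) * ((1 - γ * m) ^ 2 * nd ^ 2 -
            (nd ^ 2 - 2 * γ * s + γ ^ 2 * ng ^ 2)) =
          2 * (γ * ((L + m) * s - (ng ^ 2 + m * L * nd ^ 2))) +
          γ * (2 - γ * (m + L)) * (ng ^ 2 - m ^ 2 * nd ^ 2) := by ring
      have hLm : (0:ℝ) < L + m := by linarith
      have h9 : 0 ≤ (L + m) * ((1 - γ * m) ^ 2 * nd ^ 2 -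
          (nd ^ 2 - 2 * γ * s + γ ^ 2 * ng ^ 2)) := by rw [keyid]; linarith
      have h10 : 0 ≤ (1 - γ * m) ^ 2 * nd ^ 2 -
          (nd ^ 2 - 2 * γ * s + γ ^ 2 * ng ^ 2) := by
        have h9' : (L + m) * 0 ≤ (L + m) * ((1 - γ * m) ^ 2 * nd ^ 2 -
            (nd ^ 2 - 2 * γ * s + γ ^ 2 * ng ^ 2)) := by simpa using h9
        exact le_of_mul_le_mul_left h9' hLm
      linarith [mul_le_mul_of_nonneg_right hρm (sq_nonneg nd), h10]
    · have hρL : (1 - γ * L) ^ 2 ≤ ρ ^ 2 := by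
        have h1 : |1 - γ * L| ≤ ρ := le_max_right _ _
        nlinarith [abs_nonneg (1 - γ * L), sq_abs (1 - γ * L)]
      have t1 : 0 ≤ γ * ((L + m) * s - (ng ^ 2 + m * L * nd ^ 2)) :=
        mul_nonneg hγ.le (by linarith)
      have t2 : 0 ≤ γ * (γ * (m + L) - 2) * (L ^ 2 * nd ^ 2 - ng ^ 2) :=
        mul_nonneg (mul_nonneg hγ.le (by linarith)) (by linarith)
      have keyid : (L + m) * ((1 - γ * L) ^ 2 * nd ^ 2 -
            (nd ^ 2 - 2 * γ * s + γ ^ 2 * ng ^ 2)) =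
          2 * (γ * ((L + m) * s - (ng ^ 2 + m * L * nd ^ 2))) +
          γ * (γ * (m + L) - 2) * (L ^ 2 * nd ^ 2 - ng ^ 2) := by ring
      have hLm : (0:ℝ) < L + m := by linarith
      have h9 : 0 ≤ (L + m) * ((1 - γ * L) ^ 2 * nd ^ 2 -
          (nd ^ 2 - 2 * γ * s + γ ^ 2 * ng ^ 2)) := by rw [keyid]; linarith
      have h10 : 0 ≤ (1 - γ * L) ^ 2 * nd ^ 2 -
          (nd ^ 2 - 2 * γ * s + γ ^ 2 * ng ^ 2) := by
        have h9' : (L + m) * 0 ≤ (L + m) * ((1 - γ * L) ^ 2 * nd ^ 2 -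
            (nd ^ 2 - 2 * γ * s + γ ^ 2 * ng ^ 2)) := by simpa using h9
        exact le_of_mul_le_mul_left h9' hLm
      linarith [mul_le_mul_of_nonneg_right hρL (sq_nonneg nd), h10]
  have h11 : A ^ 2 ≤ (ρ * nd) ^ 2 := by rw [mul_pow]; exact hsq
  exact (pow_le_pow_iff_left₀ hA (mul_nonneg hρ0 hnd) two_ne_zero).mp h11

/-- linear contraction of the gradient descent (correction) step
for an m-strongly convex function with L-Lipschitz gradient. -/
theorem stmt_13 {n : ℕ} (hn : 1 ≤ n)
    (f : EuclideanSpace ℝ (Fin n) → ℝ)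
    (f' : EuclideanSpace ℝ (Fin n) → EuclideanSpace ℝ (Fin n))
    (m L : ℝ) (hm : 0 < m) (hmL : m ≤ L)
    (hgrad : ∀ x, HasGradientAt f (f' x) x)
    (hstrong : ∀ x y : EuclideanSpace ℝ (Fin n), m * ‖x - y‖ ^ 2 ≤ ⟪f' x - f' y, x - y⟫_ℝ)
    (hlip : ∀ x y : EuclideanSpace ℝ (Fin n), ‖f' x - f' y‖ ≤ L * ‖x - y‖)
    (xs : EuclideanSpace ℝ (Fin n))
    (hmin : IsMinOn f Set.univ xs) (hcrit : f' xs = 0) :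
    ∀ γ : ℝ, 0 < γ → ∀ x : EuclideanSpace ℝ (Fin n),
      ‖x - γ • f' x - xs‖ ≤ max |1 - γ * m| |1 - γ * L| * ‖x - xs‖ := by
  intro γ hγ x
  have hcont : Continuous f' := by
    have hl : LipschitzWith (Real.toNNReal L) f' := by
      apply LipschitzWith.of_dist_le_mul
      intro u v
      rw [dist_eq_norm, dist_eq_norm]
      calc ‖f' u - f' v‖ ≤ L * ‖u - v‖ := hlip u v
      _ ≤ Real.toNNReal L * ‖u - v‖ :=
          mul_le_mul_of_nonneg_right (Real.le_coe_toNNReal L) (norm_nonneg _)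
    exact hl.continuous
  set d : EuclideanSpace ℝ (Fin n) := x - xs with hd
  set g : EuclideanSpace ℝ (Fin n) := f' x with hg
  have hgsub : f' x - f' xs = g := by rw [hcrit, hg, sub_zero]
  by_cases hxx : x = xs
  · subst hxx
    have hg0 : g = 0 := by rw [hg, hcrit]
    have hd0 : d = (0 : EuclideanSpace ℝ (Fin n)) := by rw [hd, sub_self]
    have h0 : x - γ • f' x - x = -(γ • g) := by rw [hg]; abel
    rw [h0, hg0, hd0]
    simp
  have hD0 : 0 < ‖d‖ := by
    rw [norm_pos_iff, hd]
    exact fun hc => hxx (sub_eq_zero.mp hc)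
  -- the three scalar facts
  have hI : ‖g‖ ^ 2 + m * L * ‖d‖ ^ 2 ≤ (L + m) * ⟪g, d⟫_ℝ := by
    have := interp f f' m L hm hmL hgrad hcont hstrong hlip x xs
    rwa [hgsub, ← hd] at this
  have hS : m * ‖d‖ ^ 2 ≤ ⟪g, d⟫_ℝ := by
    have := hstrong x xs
    rwa [hgsub, ← hd] at this
  have hL2 : ‖g‖ ≤ L * ‖d‖ := by
    have := hlip x xs
    rwa [hgsub, ← hd] at this
  have hm2 : m * ‖d‖ ≤ ‖g‖ := by
    have hcs : ⟪g, d⟫_ℝ ≤ ‖g‖ * ‖d‖ := real_inner_le_norm g d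
    have h2 : m * ‖d‖ * ‖d‖ ≤ ‖g‖ * ‖d‖ := by nlinarith [hS, hcs]
    exact le_of_mul_le_mul_right h2 hD0
  -- norm expansion of the step
  have hexp : ‖x - γ • f' x - xs‖ ^ 2 = ‖d‖ ^ 2 - 2 * γ * ⟪g, d⟫_ℝ + γ ^ 2 * ‖g‖ ^ 2 := by
    have h0 : x - γ • f' x - xs = d - γ • g := by rw [hd, hg]; abel
    rw [h0]
    have hns := norm_sub_sq_real d (γ • g)
    rw [real_inner_smul_right, norm_smul, mul_pow, Real.norm_eq_abs, sq_abs] at hns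
    rw [hns]
    linear_combination (-2) * γ * real_inner_comm g d
  exact final_algebra m L γ ‖d‖ ‖g‖ ⟪g, d⟫_ℝ _ hm hmL hγ (norm_nonneg d)
    (norm_nonneg g) hI hm2 hL2 (norm_nonneg _) hexp
end

section
/- Let E = EuclideanSpace ℝ (Fin n), and let f : E → ℝ be twice continuously differentiable with ∇²f(x) ⪰ m·I for all x (m > 0), and with Hessian C1-Lipschitz, i.e. ‖∇²f(x) − ∇²f(y)‖ ≤ C1‖x − y‖ for all x, y. Let x* be the minimizer of f (∇f(x*) = 0). Then for every γ ∈ (0,1] and every x ∈ E, the damped Newton step satisfies ‖x − γ[∇²f(x)]^{-1}∇f(x) − x*‖ ≤ (1 − γ)‖x − x*‖ + (γC1/(2m))‖x − x*‖². -/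
open scoped InnerProductSpace

/-- contraction of the damped Newton step for a function with
Hessian bounded below by m·I and C1-Lipschitz Hessian. The Newton direction
p solves ∇²f(x) p = ∇f(x). -/
theorem stmt_14 {n : ℕ} (hn : 1 ≤ n)
    (f : EuclideanSpace ℝ (Fin n) → ℝ)
    (f' : EuclideanSpace ℝ (Fin n) → EuclideanSpace ℝ (Fin n))
    (Hess : EuclideanSpace ℝ (Fin n) →
      EuclideanSpace ℝ (Fin n) →L[ℝ] EuclideanSpace ℝ (Fin n))
    (m C1 : ℝ) (hm : 0 < m) (hC1 : 0 ≤ C1)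
    (hgrad : ∀ x, HasGradientAt f (f' x) x)
    (hhess : ∀ x, HasFDerivAt f' (Hess x) x)
    (hhesscont : Continuous Hess)
    (hpsd : ∀ x v : EuclideanSpace ℝ (Fin n), m * ‖v‖ ^ 2 ≤ ⟪Hess x v, v⟫_ℝ)
    (hliphess : ∀ x y : EuclideanSpace ℝ (Fin n), ‖Hess x - Hess y‖ ≤ C1 * ‖x - y‖)
    (xs : EuclideanSpace ℝ (Fin n))
    (hmin : IsMinOn f Set.univ xs) (hcrit : f' xs = 0) :
    ∀ γ : ℝ, 0 < γ → γ ≤ 1 → ∀ x p : EuclideanSpace ℝ (Fin n), Hess x p = f' x →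
      ‖x - γ • p - xs‖ ≤ (1 - γ) * ‖x - xs‖ + (γ * C1 / (2 * m)) * ‖x - xs‖ ^ 2 := by
  intro γ hγ0 hγ1 x p hp
  set d : EuclideanSpace ℝ (Fin n) := x - xs with hd
  -- lower bound: m‖v‖ ≤ ‖Hess x v‖
  have hlow : ∀ v : EuclideanSpace ℝ (Fin n), m * ‖v‖ ≤ ‖Hess x v‖ := by
    intro v
    rcases eq_or_ne v 0 with rfl | hv
    · simp
    · have h1 := hpsd x v
      have h2 : ⟪Hess x v, v⟫_ℝ ≤ ‖Hess x v‖ * ‖v‖ := real_inner_le_norm _ _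
      have hv0 : 0 < ‖v‖ := norm_pos_iff.mpr hv
      nlinarith [h1, h2]
  -- Taylor bound: ‖f' x - Hess x d‖ ≤ C1/2 * ‖d‖^2
  set c : ℝ := C1 * ‖d‖ ^ 2 with hc
  have hc0 : 0 ≤ c := by positivity
  have hkey : ‖f' x - Hess x d‖ ≤ c / 2 := by
    set g : ℝ → EuclideanSpace ℝ (Fin n) :=
      fun t => f' (xs + t • d) - t • Hess x d with hg
    have hgderiv : ∀ t : ℝ,
        HasDerivAt g (Hess (xs + t • d) d - Hess x d) t := by
      intro t
      have haff : HasDerivAt (fun t : ℝ => xs + t • d) d t := by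
        simpa using ((hasDerivAt_id t).smul_const d).const_add xs
      have h1 : HasDerivAt (fun t : ℝ => f' (xs + t • d))
          (Hess (xs + t • d) d) t := (hhess _).comp_hasDerivAt t haff
      have h2 : HasDerivAt (fun t : ℝ => t • Hess x d) (Hess x d) t := by
        simpa using (hasDerivAt_id t).smul_const (Hess x d)
      exact h1.sub h2
    have hB : ∀ t : ℝ,
        HasDerivAt (fun t => c * (t - t ^ 2 / 2)) (c * (1 - t)) t := by
      intro t
      have : HasDerivAt (fun t : ℝ => t - t ^ 2 / 2) (1 - t) t := by
        have := (hasDerivAt_id t).sub ((hasDerivAt_pow 2 t).div_const 2)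
        exact (show HasDerivAt (fun t : ℝ => t - t ^ 2 / 2) (1 - ((2 : ℕ) : ℝ) * t ^ (2 - 1) / 2) t from this).congr_deriv (by simp)
      simpa [mul_sub] using this.const_mul c
    have bound : ∀ t ∈ Set.Ico (0 : ℝ) 1,
        ‖Hess (xs + t • d) d - Hess x d‖ ≤ c * (1 - t) := by
      intro t ht
      have h1 : ‖Hess (xs + t • d) d - Hess x d‖
          ≤ ‖Hess (xs + t • d) - Hess x‖ * ‖d‖ := by
        have := (Hess (xs + t • d) - Hess x).le_opNorm d
        rwa [ContinuousLinearMap.sub_apply] at this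
      have h2 : ‖Hess (xs + t • d) - Hess x‖ ≤ C1 * ‖xs + t • d - x‖ :=
        hliphess _ _
      have h3 : xs + t • d - x = (t - 1) • d := by
        rw [hd]; module
      have h4 : ‖xs + t • d - x‖ = (1 - t) * ‖d‖ := by
        rw [h3, norm_smul]
        have : |t - 1| = 1 - t := by
          rw [abs_of_nonpos (by linarith [ht.2])]; ring
        simp [this, Real.norm_eq_abs]
      calc ‖Hess (xs + t • d) d - Hess x d‖
          ≤ ‖Hess (xs + t • d) - Hess x‖ * ‖d‖ := h1
        _ ≤ C1 * ((1 - t) * ‖d‖) * ‖d‖ := by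
            rw [← h4]; exact mul_le_mul_of_nonneg_right h2 (norm_nonneg _)
        _ = c * (1 - t) := by rw [hc]; ring
    have hcont : ContinuousOn g (Set.Icc (0 : ℝ) 1) :=
      (fun t _ => ((hgderiv t).continuousAt).continuousWithinAt)
    have h0 : ‖g 0‖ ≤ c * ((0:ℝ) - (0:ℝ) ^ 2 / 2) := by
      simp [hg, hcrit]
    have := image_norm_le_of_norm_deriv_right_le_deriv_boundary hcont
      (fun t _ => (hgderiv t).hasDerivWithinAt) h0 hB bound
      (Set.right_mem_Icc.mpr zero_le_one)
    have hg1 : g 1 = f' x - Hess x d := by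
      simp [hg, hd]
    rw [hg1] at this
    calc ‖f' x - Hess x d‖ ≤ c * ((1:ℝ) - (1:ℝ) ^ 2 / 2) := this
      _ = c / 2 := by ring
  -- bound on Newton step error
  have hstep : ‖d - p‖ ≤ C1 / (2 * m) * ‖d‖ ^ 2 := by
    have h1 : m * ‖d - p‖ ≤ ‖Hess x (d - p)‖ := hlow _
    have h2 : Hess x (d - p) = -(f' x - Hess x d) := by
      rw [map_sub, hp]; abel
    rw [h2, norm_neg] at h1
    have h3 : m * ‖d - p‖ ≤ c / 2 := h1.trans hkey
    rw [hc] at h3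
    rw [div_mul_eq_mul_div, le_div_iff₀ (by linarith)]
    nlinarith
  -- assemble
  have hsplit : x - γ • p - xs = (1 - γ) • d + γ • (d - p) := by
    rw [hd]; module
  rw [hsplit]
  calc ‖(1 - γ) • d + γ • (d - p)‖
      ≤ ‖(1 - γ) • d‖ + ‖γ • (d - p)‖ := norm_add_le _ _
    _ = (1 - γ) * ‖d‖ + γ * ‖d - p‖ := by
        rw [norm_smul, norm_smul, Real.norm_eq_abs, Real.norm_eq_abs,
          abs_of_nonneg (by linarith), abs_of_nonneg (by linarith)]
    _ ≤ (1 - γ) * ‖d‖ + γ * (C1 / (2 * m) * ‖d‖ ^ 2) := by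
        have := mul_le_mul_of_nonneg_left hstep (le_of_lt hγ0)
        linarith
    _ = (1 - γ) * ‖x - xs‖ + γ * C1 / (2 * m) * ‖x - xs‖ ^ 2 := by
        rw [hd]; ring
end

section
/- Let E = EuclideanSpace ℝ (Fin n), and let f : E → ℝ be twice continuously differentiable with m·I ⪯ ∇²f(x) ⪯ L'·I for all x (0 < m ≤ L'), and with Hessian C1-Lipschitz, i.e. ‖∇²f(x) − ∇²f(y)‖ ≤ C1‖x − y‖ for all x, y. Let x* be the minimizer of f (∇f(x*) = 0). Let Ĥ be a linear map on E with ‖id − ∇²f(x) ∘ Ĥ‖ ≤ ε. Then for every γ ∈ (0,1] and every x ∈ E, the approximate damped Newton step satisfies ‖x − γ·Ĥ(∇f(x)) − x*‖ ≤ (1 − γ + γL'ε/m)‖x − x*‖ + (γC1/(2m))‖x − x*‖². -/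
open scoped InnerProductSpace

set_option maxHeartbeats 1000000

lemma aux_opnorm_pt {E : Type*} [NormedAddCommGroup E] [InnerProductSpace ℝ E]
    (T : E →L[ℝ] E) (L' : ℝ) (hL : 0 ≤ L')
    (hsym : ∀ v w : E, ⟪T v, w⟫_ℝ = ⟪T w, v⟫_ℝ)
    (h0 : ∀ v : E, 0 ≤ ⟪T v, v⟫_ℝ)
    (hup : ∀ v : E, ⟪T v, v⟫_ℝ ≤ L' * ‖v‖ ^ 2) :
    ∀ v : E, ‖T v‖ ≤ L' * ‖v‖ := by
  intro v
  by_cases hv : T v = 0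
  · rw [hv, norm_zero]; positivity
  have hTv : (0:ℝ) < ‖T v‖ := norm_pos_iff.mpr hv
  have hv0 : v ≠ 0 := by rintro rfl; simp at hv
  have hvn : (0:ℝ) < ‖v‖ := norm_pos_iff.mpr hv0
  set w : E := (‖v‖ / ‖T v‖) • T v with hw_def
  have hwnorm : ‖w‖ = ‖v‖ := by
    rw [hw_def, norm_smul, Real.norm_eq_abs, abs_of_pos (by positivity)]
    field_simp
  have hTvw : ⟪T v, w⟫_ℝ = ‖v‖ * ‖T v‖ := by
    rw [hw_def, real_inner_smul_right, real_inner_self_eq_norm_sq]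
    field_simp
  have h1 : ⟪T (v + w), v + w⟫_ℝ = ⟪T v, v⟫_ℝ + 2 * ⟪T v, w⟫_ℝ + ⟪T w, w⟫_ℝ := by
    rw [map_add, inner_add_left, inner_add_right, inner_add_right, hsym w v]; ring
  have h2 : ⟪T (v - w), v - w⟫_ℝ = ⟪T v, v⟫_ℝ - 2 * ⟪T v, w⟫_ℝ + ⟪T w, w⟫_ℝ := by
    rw [map_sub, inner_sub_left, inner_sub_right, inner_sub_right, hsym w v]; ring
  have hplus : ⟪T (v + w), v + w⟫_ℝ ≤ L' * ‖v + w‖ ^ 2 := hup _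
  have hminus : 0 ≤ ⟪T (v - w), v - w⟫_ℝ := h0 _
  have hnvw : ‖v + w‖ ^ 2 ≤ (2 * ‖v‖) ^ 2 := by
    have := norm_add_le v w
    rw [hwnorm] at this
    nlinarith [norm_nonneg (v + w)]
  have key : ‖v‖ * ‖T v‖ ≤ L' * ‖v‖ ^ 2 := by nlinarith
  nlinarith


/-- key estimate for the approximate damped Newton correction step,
where Hhat approximates the Hessian inverse with relative error ε. -/
theorem stmt_15 {n : ℕ} (hn : 1 ≤ n)
    (f : EuclideanSpace ℝ (Fin n) → ℝ)
    (f' : EuclideanSpace ℝ (Fin n) → EuclideanSpace ℝ (Fin n))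
    (Hess : EuclideanSpace ℝ (Fin n) →
      EuclideanSpace ℝ (Fin n) →L[ℝ] EuclideanSpace ℝ (Fin n))
    (m L' C1 ε : ℝ) (hm : 0 < m) (hmL : m ≤ L') (hC1 : 0 ≤ C1) (hε : 0 ≤ ε)
    (hgrad : ∀ x, HasGradientAt f (f' x) x)
    (hhess : ∀ x, HasFDerivAt f' (Hess x) x)
    (hhesscont : Continuous Hess)
    (hlow : ∀ x v : EuclideanSpace ℝ (Fin n), m * ‖v‖ ^ 2 ≤ ⟪Hess x v, v⟫_ℝ)
    (hup : ∀ x v : EuclideanSpace ℝ (Fin n), ⟪Hess x v, v⟫_ℝ ≤ L' * ‖v‖ ^ 2)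
    (hliphess : ∀ x y : EuclideanSpace ℝ (Fin n), ‖Hess x - Hess y‖ ≤ C1 * ‖x - y‖)
    (xs : EuclideanSpace ℝ (Fin n))
    (hmin : IsMinOn f Set.univ xs) (hcrit : f' xs = 0) :
    ∀ γ : ℝ, 0 < γ → γ ≤ 1 → ∀ x : EuclideanSpace ℝ (Fin n),
      ∀ Hhat : EuclideanSpace ℝ (Fin n) →L[ℝ] EuclideanSpace ℝ (Fin n),
        ‖ContinuousLinearMap.id ℝ (EuclideanSpace ℝ (Fin n)) - (Hess x).comp Hhat‖ ≤ ε →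
          ‖x - γ • Hhat (f' x) - xs‖
            ≤ (1 - γ + γ * L' * ε / m) * ‖x - xs‖ + (γ * C1 / (2 * m)) * ‖x - xs‖ ^ 2 := by
  intro γ hγ0 hγ1 x Hhat hHhat
  have hL' : (0:ℝ) < L' := lt_of_lt_of_le hm hmL
  -- a continuous linear version of `v ↦ ⟪v, ·⟫`
  set L : EuclideanSpace ℝ (Fin n) →L[ℝ] (EuclideanSpace ℝ (Fin n) →L[ℝ] ℝ) :=
    LinearMap.mkContinuous₂ (innerₗ (EuclideanSpace ℝ (Fin n))) 1
      (fun v w => by simpa using abs_real_inner_le_norm v w) with hL_def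
  have hLapp : ∀ v w : EuclideanSpace ℝ (Fin n), L v w = ⟪v, w⟫_ℝ := fun v w => rfl
  -- symmetry of the Hessian
  have hsym : ∀ y v w : EuclideanSpace ℝ (Fin n),
      ⟪Hess y v, w⟫_ℝ = ⟪Hess y w, v⟫_ℝ := by
    intro y v w
    have hfd : ∀ z, HasFDerivAt f (L (f' z)) z := by
      intro z
      have h := hasGradientAt_iff_hasFDerivAt.mp (hgrad z)
      have heq : InnerProductSpace.toDual ℝ (EuclideanSpace ℝ (Fin n)) (f' z) = L (f' z) := by
        ext w; rfl
      rwa [heq] at h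
    have hfd2 : HasFDerivAt (fun z => L (f' z)) (L.comp (Hess y)) y :=
      L.hasFDerivAt.comp y (hhess y)
    have := second_derivative_symmetric hfd hfd2 v w
    simpa [ContinuousLinearMap.comp_apply, hLapp] using this
  -- operator norm bound
  have hHnorm : ∀ y v : EuclideanSpace ℝ (Fin n), ‖Hess y v‖ ≤ L' * ‖v‖ := by
    intro y
    refine aux_opnorm_pt (Hess y) L' hL'.le (hsym y) (fun v => ?_) (hup y)
    nlinarith [hlow y v, sq_nonneg ‖v‖]
  -- lower bound
  have hlown : ∀ y v : EuclideanSpace ℝ (Fin n), m * ‖v‖ ≤ ‖Hess y v‖ := by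
    intro y v
    rcases eq_or_ne v 0 with rfl | hv
    · simp
    have hvn : (0:ℝ) < ‖v‖ := norm_pos_iff.mpr hv
    refine (mul_le_mul_iff_of_pos_right hvn).mp ?_
    calc m * ‖v‖ * ‖v‖ = m * ‖v‖ ^ 2 := by ring
      _ ≤ ⟪Hess y v, v⟫_ℝ := hlow y v
      _ ≤ ‖Hess y v‖ * ‖v‖ := real_inner_le_norm _ _
  -- invertibility of `Hess x`
  have hinj : Function.Injective (Hess x) := by
    intro a b hab
    have h0 : Hess x (a - b) = 0 := by rw [map_sub, hab, sub_self]
    have h1 := hlown x (a - b)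
    rw [h0, norm_zero] at h1
    have h2 : ‖a - b‖ = 0 := le_antisymm (by nlinarith) (norm_nonneg _)
    exact sub_eq_zero.mp (norm_eq_zero.mp h2)
  have hsurj : Function.Surjective (Hess x) :=
    (LinearMap.injective_iff_surjective (f := ((Hess x) : EuclideanSpace ℝ (Fin n) →ₗ[ℝ] EuclideanSpace ℝ (Fin n)))).mp hinj
  set eL : EuclideanSpace ℝ (Fin n) ≃ₗ[ℝ] EuclideanSpace ℝ (Fin n) :=
    LinearEquiv.ofBijective ((Hess x) : EuclideanSpace ℝ (Fin n) →ₗ[ℝ] EuclideanSpace ℝ (Fin n))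
      ⟨hinj, hsurj⟩ with heL_def
  have heL : ∀ u, Hess x (eL.symm u) = u := fun u => eL.apply_symm_apply u
  have hAinv : ∀ u, ‖eL.symm u‖ ≤ (1/m) * ‖u‖ := by
    intro u
    have h1 := hlown x (eL.symm u)
    rw [heL] at h1
    rw [div_mul_eq_mul_div, le_div_iff₀ hm]
    linarith
  -- fundamental theorem of calculus along the segment
  set d : EuclideanSpace ℝ (Fin n) := x - xs with hd
  have hline : ∀ t : ℝ, HasDerivAt (fun s : ℝ => xs + s • d) d t := by
    intro t
    simpa using ((hasDerivAt_id t).smul_const d).const_add xs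
  have hψ : ∀ t : ℝ, HasDerivAt (fun s : ℝ => f' (xs + s • d)) (Hess (xs + t • d) d) t :=
    fun t => (hhess _).comp_hasDerivAt t (hline t)
  have hcontψ : Continuous (fun t : ℝ => Hess (xs + t • d) d) :=
    (hhesscont.comp (continuous_const.add (continuous_id.smul continuous_const))).clm_apply continuous_const
  have hint : IntervalIntegrable (fun t : ℝ => Hess (xs + t • d) d) MeasureTheory.volume 0 1 :=
    hcontψ.intervalIntegrable 0 1
  have hFTC : (∫ t in (0:ℝ)..1, Hess (xs + t • d) d) = f' x := by
    rw [intervalIntegral.integral_eq_sub_of_hasDerivAt (fun t _ => hψ t) hint]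
    simp [hd, hcrit]
  have hgb : ‖f' x‖ ≤ L' * ‖d‖ := by
    rw [← hFTC]
    have := intervalIntegral.norm_integral_le_of_norm_le_const
      (C := L' * ‖d‖) (f := fun t : ℝ => Hess (xs + t • d) d) (a := 0) (b := 1)
      (fun t _ => hHnorm _ d)
    simpa using this
  -- Taylor remainder bound
  have hrb : ‖Hess x d - f' x‖ ≤ C1 / 2 * ‖d‖ ^ 2 := by
    have hsub : Hess x d - f' x
        = ∫ t in (0:ℝ)..1, (Hess x d - Hess (xs + t • d) d) := by
      rw [intervalIntegral.integral_sub intervalIntegrable_const hint, hFTC]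
      simp
    rw [hsub]
    have hb : ∀ t ∈ Set.uIoc (0:ℝ) 1,
        ‖Hess x d - Hess (xs + t • d) d‖ ≤ C1 * ‖d‖ ^ 2 * (1 - t) := by
      intro t ht
      rw [Set.uIoc_of_le (by norm_num : (0:ℝ) ≤ 1)] at ht
      have h1 : Hess x d - Hess (xs + t • d) d = (Hess x - Hess (xs + t • d)) d := by simp
      have h2 : x - (xs + t • d) = (1 - t) • d := by rw [hd]; module
      calc ‖Hess x d - Hess (xs + t • d) d‖
          ≤ ‖Hess x - Hess (xs + t • d)‖ * ‖d‖ := by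
            rw [h1]; exact (Hess x - Hess (xs + t • d)).le_opNorm d
        _ ≤ (C1 * ‖x - (xs + t • d)‖) * ‖d‖ :=
            mul_le_mul_of_nonneg_right (hliphess _ _) (norm_nonneg _)
        _ = C1 * ‖d‖ ^ 2 * (1 - t) := by
            rw [h2, norm_smul, Real.norm_eq_abs, abs_of_nonneg (by linarith [ht.2])]
            ring
    have hgint : IntervalIntegrable (fun t : ℝ => C1 * ‖d‖ ^ 2 * (1 - t))
        MeasureTheory.volume 0 1 :=
      ((continuous_const.mul (continuous_const.sub continuous_id)).intervalIntegrable 0 1)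
    have hae : ∀ᵐ t ∂(MeasureTheory.volume.restrict (Set.uIoc (0:ℝ) 1)),
        ‖Hess x d - Hess (xs + t • d) d‖ ≤ C1 * ‖d‖ ^ 2 * (1 - t) :=
      (MeasureTheory.ae_restrict_iff' measurableSet_uIoc).mpr
        (MeasureTheory.ae_of_all _ hb)
    have hle := intervalIntegral.norm_integral_le_abs_of_norm_le hae hgint
    have hval : (∫ t in (0:ℝ)..1, C1 * ‖d‖ ^ 2 * (1 - t)) = C1 / 2 * ‖d‖ ^ 2 := by
      rw [intervalIntegral.integral_const_mul]
      rw [intervalIntegral.integral_sub intervalIntegrable_const intervalIntegral.intervalIntegrable_id]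
      simp [integral_id]
      ring
    rw [hval] at hle
    calc ‖∫ t in (0:ℝ)..1, (Hess x d - Hess (xs + t • d) d)‖
        ≤ |C1 / 2 * ‖d‖ ^ 2| := hle
      _ = C1 / 2 * ‖d‖ ^ 2 := abs_of_nonneg (by positivity)
  -- main decomposition
  set g : EuclideanSpace ℝ (Fin n) := f' x with hg
  have hkey : x - γ • Hhat g - xs
      = (1 - γ) • d + γ • (eL.symm (Hess x d - g) + eL.symm (g - Hess x (Hhat g))) := by
    have h3 : eL.symm (Hess x d - g) + eL.symm (g - Hess x (Hhat g)) = d - Hhat g := by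
      rw [← map_add]
      have h4 : Hess x d - g + (g - Hess x (Hhat g)) = Hess x d - Hess x (Hhat g) := by
        abel
      rw [h4, ← map_sub]
      exact eL.symm_apply_apply _
    rw [h3, hd]
    module
  have hB : ‖g - Hess x (Hhat g)‖ ≤ ε * (L' * ‖d‖) := by
    have h1 : g - Hess x (Hhat g)
        = (ContinuousLinearMap.id ℝ (EuclideanSpace ℝ (Fin n)) - (Hess x).comp Hhat) g := by
      simp
    rw [h1]
    calc ‖_‖ ≤ ‖ContinuousLinearMap.id ℝ (EuclideanSpace ℝ (Fin n)) - (Hess x).comp Hhat‖ * ‖g‖ :=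
          ContinuousLinearMap.le_opNorm _ _
      _ ≤ ε * (L' * ‖d‖) := mul_le_mul hHhat hgb (norm_nonneg _) hε
  have hA' : ‖eL.symm (Hess x d - g)‖ ≤ (1/m) * (C1 / 2 * ‖d‖ ^ 2) :=
    (hAinv _).trans (mul_le_mul_of_nonneg_left hrb (by positivity))
  have hB' : ‖eL.symm (g - Hess x (Hhat g))‖ ≤ (1/m) * (ε * (L' * ‖d‖)) :=
    (hAinv _).trans (mul_le_mul_of_nonneg_left hB (by positivity))
  have hsum : ‖eL.symm (Hess x d - g) + eL.symm (g - Hess x (Hhat g))‖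
      ≤ (1/m) * (C1 / 2 * ‖d‖ ^ 2) + (1/m) * (ε * (L' * ‖d‖)) :=
    (norm_add_le _ _).trans (add_le_add hA' hB')
  have hmain : ‖x - γ • Hhat g - xs‖
      ≤ (1 - γ) * ‖d‖ + γ * ((1/m) * (C1 / 2 * ‖d‖ ^ 2) + (1/m) * (ε * (L' * ‖d‖))) := by
    rw [hkey]
    calc ‖(1 - γ) • d + γ • (eL.symm (Hess x d - g) + eL.symm (g - Hess x (Hhat g)))‖
        ≤ ‖(1 - γ) • d‖ + ‖γ • (eL.symm (Hess x d - g) + eL.symm (g - Hess x (Hhat g)))‖ :=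
          norm_add_le _ _
      _ = (1 - γ) * ‖d‖ + γ * ‖eL.symm (Hess x d - g) + eL.symm (g - Hess x (Hhat g))‖ := by
          rw [norm_smul, norm_smul, Real.norm_eq_abs, Real.norm_eq_abs,
            abs_of_nonneg (by linarith), abs_of_pos hγ0]
      _ ≤ _ := by
          have := mul_le_mul_of_nonneg_left hsum hγ0.le
          linarith
  have hmne : m ≠ 0 := hm.ne'
  calc ‖x - γ • Hhat g - xs‖
      ≤ (1 - γ) * ‖d‖ + γ * ((1/m) * (C1 / 2 * ‖d‖ ^ 2) + (1/m) * (ε * (L' * ‖d‖))) := hmain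
    _ = (1 - γ + γ * L' * ε / m) * ‖d‖ + (γ * C1 / (2 * m)) * ‖d‖ ^ 2 := by
        field_simp
        ring
end
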